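/- arXiv:0904.2452 — 12 statements merged into one kernel-verified Lean document; each statement's English description precedes it below -/
import Mathlib

section
/- Let u1, u2 be formal power series with complex coefficients and v1, v2 be formal power series with nonnegative real coefficients such that u1 ⪯ v1 and u2 ⪯ v2, and assume the constant terms of u1 and v1 are zero. Then the formal composition satisfies u2 ∘ u1 ⪯ v2 ∘ v1. -/
/-- `v` is a majorant series of `u`: all coefficients of `v` are nonnegative and
`|u_n| ≤ v_n` for every `n`. -/
def Majorizes (u : PowerSeries ℂ) (v : PowerSeries ℝ) : Prop :=
  ∀ n : ℕ, 0 ≤ PowerSeries.coeff n v ∧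
    ‖PowerSeries.coeff n u‖ ≤ PowerSeries.coeff n v

/-- Formal composition `f ∘ g` of power series (meaningful when the inner series `g`
has zero constant term, in which case `coeff n (g ^ k) = 0` for `k > n`). -/
noncomputable def PowerSeriesComp {R : Type*} [CommSemiring R]
    (f g : PowerSeries R) : PowerSeries R :=
  PowerSeries.mk fun n =>
    ∑ k ∈ Finset.range (n + 1), PowerSeries.coeff k f * PowerSeries.coeff n (g ^ k)


lemma Majorizes.mul {u u' : PowerSeries ℂ} {v v' : PowerSeries ℝ}
    (h : Majorizes u v) (h' : Majorizes u' v') : Majorizes (u * u') (v * v') := by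
  intro n
  rw [PowerSeries.coeff_mul, PowerSeries.coeff_mul]
  constructor
  · exact Finset.sum_nonneg fun p _ => mul_nonneg (h p.1).1 (h' p.2).1
  · refine (norm_sum_le _ _).trans (Finset.sum_le_sum fun p _ => ?_)
    rw [norm_mul]
    exact mul_le_mul (h p.1).2 (h' p.2).2 (norm_nonneg _) (h p.1).1

lemma Majorizes.one : Majorizes 1 1 := by
  intro n
  rw [PowerSeries.coeff_one, PowerSeries.coeff_one]
  split <;> simp

lemma Majorizes.pow {u : PowerSeries ℂ} {v : PowerSeries ℝ}
    (h : Majorizes u v) : ∀ k, Majorizes (u ^ k) (v ^ k)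
  | 0 => by simpa using Majorizes.one
  | k + 1 => by rw [pow_succ, pow_succ]; exact (Majorizes.pow h k).mul h

theorem majorant_comp (u1 u2 : PowerSeries ℂ) (v1 v2 : PowerSeries ℝ)
    (h1 : Majorizes u1 v1) (h2 : Majorizes u2 v2)
    (hu0 : PowerSeries.constantCoeff u1 = 0)
    (hv0 : PowerSeries.constantCoeff v1 = 0) :
    Majorizes (PowerSeriesComp u2 u1) (PowerSeriesComp v2 v1) := by
  intro n
  simp only [PowerSeriesComp, PowerSeries.coeff_mk]
  constructor
  · exact Finset.sum_nonneg fun k _ => mul_nonneg (h2 k).1 ((h1.pow k) n).1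
  · refine (norm_sum_le _ _).trans (Finset.sum_le_sum fun k _ => ?_)
    rw [norm_mul]
    exact mul_le_mul (h2 k).2 ((h1.pow k) n).2 (norm_nonneg _) (h2 k).1
end

section
/- Let r ≥ 1 be an integer. For each k with 0 ≤ k < r, let a_k ∈ ℂ[[z]] and b_k ∈ ℝ[[z]] be formal power series with a_k ⪯ b_k. Let u ∈ ℂ[[z]] and v ∈ ℝ[[z]] satisfy the formal linear differential equations u^{(r)} = Σ_{k=0}^{r−1} a_k·u^{(k)} and v^{(r)} = Σ_{k=0}^{r−1} b_k·v^{(k)} (where ^{(k)} denotes the k-th formal derivative), and assume |u_k| ≤ v_k for 0 ≤ k < r (i.e., the first r coefficients of u are dominated in modulus by those of v). Then u ⪯ v. -/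
/-- The positive combinatorial factor appearing in coefficients of iterated derivatives. -/
def dcoef (n k : ℕ) : ℕ := ∏ i ∈ Finset.range k, (n + i + 1)

lemma dcoef_pos (n k : ℕ) : 0 < dcoef n k :=
  Finset.prod_pos fun _ _ => Nat.succ_pos _

lemma coeff_derivative_iterate {R : Type*} [CommRing R] (f : PowerSeries R) (k n : ℕ) :
    PowerSeries.coeff n ((⇑(PowerSeries.derivative R))^[k] f)
      = PowerSeries.coeff (n + k) f * (dcoef n k : R) := by
  induction k generalizing f with
  | zero => simp [dcoef]
  | succ k ih =>
    rw [Function.iterate_succ, Function.comp_apply, ih, PowerSeries.coeff_derivative]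
    have h : dcoef n (k + 1) = dcoef n k * (n + k + 1) := by
      simp [dcoef, Finset.prod_range_succ]
    rw [h]
    push_cast
    ring_nf

theorem majorant_of_diffeq (r : ℕ) (hr : 1 ≤ r)
    (a : ℕ → PowerSeries ℂ) (b : ℕ → PowerSeries ℝ)
    (hab : ∀ k < r, Majorizes (a k) (b k))
    (u : PowerSeries ℂ) (v : PowerSeries ℝ)
    (hu : (⇑(PowerSeries.derivative ℂ))^[r] u =
      ∑ k ∈ Finset.range r, a k * (⇑(PowerSeries.derivative ℂ))^[k] u)
    (hv : (⇑(PowerSeries.derivative ℝ))^[r] v =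
      ∑ k ∈ Finset.range r, b k * (⇑(PowerSeries.derivative ℝ))^[k] v)
    (hinit : ∀ k < r, ‖PowerSeries.coeff k u‖ ≤ PowerSeries.coeff k v) :
    Majorizes u v := by
  have key : ∀ n, ‖PowerSeries.coeff n u‖ ≤ PowerSeries.coeff n v := by
    intro n
    induction n using Nat.strong_induction_on with
    | _ n ih =>
      by_cases hn : n < r
      · exact hinit n hn
      · push_neg at hn
        obtain ⟨m, rfl⟩ : ∃ m, n = m + r := ⟨n - r, by omega⟩
        have hu' : PowerSeries.coeff (m + r) u * (dcoef m r : ℂ)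
            = ∑ k ∈ Finset.range r, ∑ p ∈ Finset.HasAntidiagonal.antidiagonal m,
                PowerSeries.coeff p.1 (a k) *
                  (PowerSeries.coeff (p.2 + k) u * (dcoef p.2 k : ℂ)) := by
          have h := congrArg (PowerSeries.coeff m) hu
          rw [coeff_derivative_iterate, map_sum] at h
          simp only [PowerSeries.coeff_mul, coeff_derivative_iterate, mul_assoc] at h
          exact h
        have hv' : PowerSeries.coeff (m + r) v * (dcoef m r : ℝ)
            = ∑ k ∈ Finset.range r, ∑ p ∈ Finset.HasAntidiagonal.antidiagonal m,
                PowerSeries.coeff p.1 (b k) *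
                  (PowerSeries.coeff (p.2 + k) v * (dcoef p.2 k : ℝ)) := by
          have h := congrArg (PowerSeries.coeff m) hv
          rw [coeff_derivative_iterate, map_sum] at h
          simp only [PowerSeries.coeff_mul, coeff_derivative_iterate, mul_assoc] at h
          exact h
        have hpos : (0 : ℝ) < (dcoef m r : ℝ) := by exact_mod_cast dcoef_pos m r
        rw [← mul_le_mul_iff_of_pos_right hpos]
        calc ‖PowerSeries.coeff (m + r) u‖ * (dcoef m r : ℝ)
            = ‖(PowerSeries.coeff (m + r) u * (dcoef m r : ℂ))‖ := by
              rw [norm_mul, Complex.norm_natCast]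
          _ = ‖(∑ k ∈ Finset.range r, ∑ p ∈ Finset.HasAntidiagonal.antidiagonal m,
                PowerSeries.coeff p.1 (a k) *
                  (PowerSeries.coeff (p.2 + k) u * (dcoef p.2 k : ℂ)))‖ := by rw [hu']
          _ ≤ ∑ k ∈ Finset.range r, ∑ p ∈ Finset.HasAntidiagonal.antidiagonal m,
                ‖PowerSeries.coeff p.1 (a k)‖ *
                  (‖PowerSeries.coeff (p.2 + k) u‖ * (dcoef p.2 k : ℝ)) := by
              refine (norm_sum_le _ _).trans (Finset.sum_le_sum fun k _ =>
                (norm_sum_le _ _).trans (Finset.sum_le_sum fun p _ => ?_))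
              simp [norm_mul, Complex.norm_natCast]
          _ ≤ ∑ k ∈ Finset.range r, ∑ p ∈ Finset.HasAntidiagonal.antidiagonal m,
                PowerSeries.coeff p.1 (b k) *
                  (PowerSeries.coeff (p.2 + k) v * (dcoef p.2 k : ℝ)) := by
              refine Finset.sum_le_sum fun k hk => Finset.sum_le_sum fun p hp => ?_
              have hk' : k < r := Finset.mem_range.mp hk
              have hp' : p.1 + p.2 = m := Finset.HasAntidiagonal.mem_antidiagonal.mp hp
              have h1 : ‖PowerSeries.coeff p.1 (a k)‖
                  ≤ PowerSeries.coeff p.1 (b k) := (hab k hk' p.1).2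
              have h2 : ‖PowerSeries.coeff (p.2 + k) u‖
                  ≤ PowerSeries.coeff (p.2 + k) v := ih (p.2 + k) (by omega)
              exact mul_le_mul h1 (mul_le_mul_of_nonneg_right h2 (Nat.cast_nonneg _))
                (by positivity) (hab k hk' p.1).1
          _ = PowerSeries.coeff (m + r) v * (dcoef m r : ℝ) := hv'.symm
  exact fun n => ⟨le_trans (norm_nonneg _) (key n), key n⟩
end

section
/- Let N, D ∈ ℂ[z] be polynomials with D(0) ≠ 0, and let (r_n) denote the coefficient sequence of the power series expansion of the rational function N/D at the origin. Let ρ > 0 be a real number such that every complex root ζ of D satisfies |ζ| ≥ ρ, and let m ≥ 1 be an integer such that every root of D of modulus exactly ρ has multiplicity at most m. Then there exists a real constant M ≥ 0 such that |r_n| ≤ M · C(n+m−1, m−1) · ρ^{−n} for all n ∈ ℕ; equivalently, N/D ⪯ M·(1 − z/ρ)^{−m}. -/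
open Polynomial PowerSeries

lemma choose_mono_right {n j k : ℕ} (h : j ≤ k) : (n + j).choose j ≤ (n + k).choose k := by
  induction k with
  | zero => simp [Nat.le_zero.mp h]
  | succ k ih =>
    rcases Nat.eq_or_lt_of_le h with rfl | hlt
    · rfl
    · calc (n+j).choose j ≤ (n+k).choose k := ih (by omega)
        _ ≤ (n + (k+1)).choose (k+1) := by
            rw [show n + (k+1) = (n+k)+1 from rfl, Nat.choose_succ_succ]
            omega

lemma exists_choose_geom_bound (k : ℕ) {q : ℝ} (h0 : 0 ≤ q) (h1 : q < 1) :
    ∃ C : ℝ, 0 ≤ C ∧ ∀ n, ((n + k).choose k : ℝ) * q ^ n ≤ C := by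
  have hs : Summable (fun n : ℕ => ((n + k).choose k : ℝ) * q ^ n) :=
    summable_choose_mul_geometric_of_norm_lt_one k (by rwa [Real.norm_eq_abs, abs_of_nonneg h0])
  refine ⟨∑' n, ((n + k).choose k : ℝ) * q ^ n, ?_, fun n => ?_⟩
  · exact tsum_nonneg fun n => by positivity
  · exact hs.le_tsum n fun j _ => by positivity

-- base case helper
lemma aux_const (ρ : ℝ) (hρ : 0 < ρ) (m : ℕ) (hm : 1 ≤ m) (N : Polynomial ℂ) (c : ℂ)
    (hc : c ≠ 0) :
    ∃ M : ℝ, 0 ≤ M ∧ ∀ n : ℕ,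
      ‖PowerSeries.coeff n
        ((N : PowerSeries ℂ) * ((Polynomial.C c : Polynomial ℂ) : PowerSeries ℂ)⁻¹)‖ ≤
        M * ((n + m - 1).choose (m - 1)) / ρ ^ n := by
  have hchoose : ∀ n : ℕ, (1 : ℝ) ≤ ((n + m - 1).choose (m - 1) : ℝ) := by
    intro n
    exact_mod_cast Nat.one_le_iff_ne_zero.mpr (Nat.choose_pos (by omega)).ne'
  have hinv : (((Polynomial.C c : Polynomial ℂ)) : PowerSeries ℂ)⁻¹ = PowerSeries.C c⁻¹ := by
    have hcc : PowerSeries.constantCoeff ((Polynomial.C c : Polynomial ℂ) : PowerSeries ℂ) ≠ 0 := by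
      rw [Polynomial.constantCoeff_coe]; simpa using hc
    refine ((PowerSeries.eq_inv_iff_mul_eq_one hcc).mpr ?_).symm
    rw [Polynomial.coe_C, ← map_mul, inv_mul_cancel₀ hc, map_one]
  set M : ℝ := ∑ i ∈ Finset.range (N.natDegree + 1), ‖N.coeff i * c⁻¹‖ * ρ ^ i with hM
  have hM0 : 0 ≤ M := Finset.sum_nonneg fun i _ => by positivity
  refine ⟨M, hM0, fun n => ?_⟩
  have hcoeff : PowerSeries.coeff n ((N : PowerSeries ℂ) *
      ((Polynomial.C c : Polynomial ℂ) : PowerSeries ℂ)⁻¹) = N.coeff n * c⁻¹ := by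
    rw [hinv, mul_comm, PowerSeries.coeff_C_mul, Polynomial.coeff_coe, mul_comm]
  rw [hcoeff]
  by_cases hn : n ≤ N.natDegree
  · have h1 : ‖N.coeff n * c⁻¹‖ * ρ ^ n ≤ M := by
      refine Finset.single_le_sum (f := fun i => ‖N.coeff i * c⁻¹‖ * ρ ^ i)
        (fun i _ => by positivity) (Finset.mem_range.mpr (by omega))
    have h2 : ‖N.coeff n * c⁻¹‖ ≤ M / ρ ^ n := by
      rw [le_div_iff₀ (by positivity)]; exact h1
    refine h2.trans ?_
    gcongr
    exact le_mul_of_one_le_right hM0 (hchoose n)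
  · rw [Polynomial.coeff_eq_zero_of_natDegree_lt (lt_of_not_ge hn)]
    simp only [zero_mul, norm_zero]
    positivity

lemma coeff_inv_pow (ζ : ℂ) (hζ : ζ ≠ 0) (μ : ℕ) (hμ : 0 < μ) (n : ℕ) :
    PowerSeries.coeff n ((((Polynomial.X - Polynomial.C ζ) ^ μ : Polynomial ℂ) : PowerSeries ℂ)⁻¹) =
      (-ζ)⁻¹ ^ μ * ζ⁻¹ ^ n * ((μ - 1 + n).choose (μ - 1)) := by
  set S : PowerSeries ℂ :=
    PowerSeries.C ((-ζ)⁻¹ ^ μ) * PowerSeries.rescale ζ⁻¹ (invOneSubPow ℂ μ).val with hS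
  have hfac : ((Polynomial.X - Polynomial.C ζ : Polynomial ℂ) : PowerSeries ℂ)
      = PowerSeries.C (-ζ) * (1 - PowerSeries.C ζ⁻¹ * PowerSeries.X) := by
    have h : (-ζ) * ζ⁻¹ = -1 := by field_simp
    have : ((Polynomial.X - Polynomial.C ζ : Polynomial ℂ) : PowerSeries ℂ)
        = PowerSeries.X - PowerSeries.C ζ := by
      have := Polynomial.coe_add (φ := (Polynomial.X : Polynomial ℂ)) (ψ := -Polynomial.C ζ)
      simpa [sub_eq_add_neg] using this
    rw [this, mul_sub, mul_one, ← mul_assoc, ← map_mul, h]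
    simp only [map_neg, map_one]
    ring
  have hresc : (PowerSeries.rescale ζ⁻¹) ((1 - PowerSeries.X : PowerSeries ℂ) ^ μ)
      = (1 - PowerSeries.C ζ⁻¹ * PowerSeries.X) ^ μ := by
    rw [map_pow, map_sub, map_one, rescale_X]
  have hmul : (((Polynomial.X - Polynomial.C ζ) ^ μ : Polynomial ℂ) : PowerSeries ℂ) * S = 1 := by
    rw [hS, Polynomial.coe_pow, hfac, mul_pow, ← map_pow]
    calc (PowerSeries.C ((-ζ) ^ μ)) * (1 - PowerSeries.C ζ⁻¹ * PowerSeries.X) ^ μ *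
          (PowerSeries.C ((-ζ)⁻¹ ^ μ) * PowerSeries.rescale ζ⁻¹ (invOneSubPow ℂ μ).val)
        = (PowerSeries.C ((-ζ) ^ μ * (-ζ)⁻¹ ^ μ)) *
          ((PowerSeries.rescale ζ⁻¹) ((1 - PowerSeries.X : PowerSeries ℂ) ^ μ) *
            PowerSeries.rescale ζ⁻¹ (invOneSubPow ℂ μ).val) := by rw [map_mul, hresc]; ring
      _ = 1 := by
          rw [← map_mul, ← invOneSubPow_inv_eq_one_sub_pow, (invOneSubPow ℂ μ).inv_val,
            map_one, ← mul_pow, mul_inv_cancel₀ (neg_ne_zero.mpr hζ), one_pow, map_one, one_mul]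
  have hc : PowerSeries.constantCoeff
      (((Polynomial.X - Polynomial.C ζ) ^ μ : Polynomial ℂ) : PowerSeries ℂ) ≠ 0 := by
    rw [Polynomial.constantCoeff_coe, Polynomial.coeff_zero_eq_eval_zero]
    simp [hζ, pow_ne_zero]
  have hinv : (((Polynomial.X - Polynomial.C ζ) ^ μ : Polynomial ℂ) : PowerSeries ℂ)⁻¹ = S :=
    ((PowerSeries.eq_inv_iff_mul_eq_one hc).mpr (by rwa [mul_comm] at hmul)).symm
  rw [hinv, hS, PowerSeries.coeff_C_mul, PowerSeries.coeff_rescale,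
    invOneSubPow_val_eq_mk_sub_one_add_choose_of_pos _ _ hμ, PowerSeries.coeff_mk]
  ring

lemma ratfun_aux (ρ : ℝ) (hρ : 0 < ρ) (m : ℕ) (hm : 1 ≤ m) :
    ∀ d : ℕ, ∀ D : Polynomial ℂ, D.natDegree ≤ d → D.eval 0 ≠ 0 →
    (∀ ζ : ℂ, D.IsRoot ζ → ρ ≤ ‖ζ‖) →
    (∀ ζ : ℂ, D.IsRoot ζ → ‖ζ‖ = ρ → D.rootMultiplicity ζ ≤ m) →
    ∀ N : Polynomial ℂ, ∃ M : ℝ, 0 ≤ M ∧ ∀ n : ℕ,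
      ‖PowerSeries.coeff n ((N : PowerSeries ℂ) * (D : PowerSeries ℂ)⁻¹)‖ ≤
        M * ((n + m - 1).choose (m - 1)) / ρ ^ n := by
  have hchoose : ∀ n : ℕ, (1 : ℝ) ≤ ((n + m - 1).choose (m - 1) : ℝ) := fun n =>
    by exact_mod_cast Nat.one_le_iff_ne_zero.mpr (Nat.choose_pos (by omega)).ne'
  intro d
  induction d with
  | zero =>
    intro D hdeg hD0 hroots hmult N
    have hc : D.coeff 0 ≠ 0 := by rwa [Polynomial.coeff_zero_eq_eval_zero]
    have hD : D = Polynomial.C (D.coeff 0) := Polynomial.eq_C_of_natDegree_eq_zero (by omega)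
    rw [hD] at *
    exact aux_const ρ hρ m hm N _ hc
  | succ d ih =>
    intro D hdeg hD0 hroots hmult N
    by_cases h0 : D.natDegree = 0
    · have hc : D.coeff 0 ≠ 0 := by rwa [Polynomial.coeff_zero_eq_eval_zero]
      have hD : D = Polynomial.C (D.coeff 0) := Polynomial.eq_C_of_natDegree_eq_zero h0
      rw [hD] at *
      exact aux_const ρ hρ m hm N _ hc
    -- main step
    have hDne : D ≠ 0 := fun h => hD0 (by simp [h])
    obtain ⟨ζ, hζroot⟩ := Complex.exists_root
      (Polynomial.natDegree_pos_iff_degree_pos.mp (Nat.pos_of_ne_zero h0))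
    have hζ0 : ζ ≠ 0 := by rintro rfl; exact hD0 hζroot
    set r : ℝ := ‖ζ‖ with hrdef
    have hr0 : 0 < r := by simpa [hrdef] using hζ0
    have hrρ : ρ ≤ r := hroots ζ hζroot
    set μ := D.rootMultiplicity ζ with hμdef
    have hμpos : 0 < μ := (Polynomial.rootMultiplicity_pos hDne).mpr hζroot
    set E := D /ₘ (Polynomial.X - Polynomial.C ζ) ^ μ with hEdef
    have hDE : (Polynomial.X - Polynomial.C ζ) ^ μ * E = D :=
      Polynomial.pow_mul_divByMonic_rootMultiplicity_eq D ζ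
    have hEζ : E.eval ζ ≠ 0 := Polynomial.eval_divByMonic_pow_rootMultiplicity_ne_zero ζ hDne
    set A := N.eval ζ / E.eval ζ with hA
    have hNroot : (N - Polynomial.C A * E).IsRoot ζ := by
      simp [Polynomial.IsRoot, hA, div_mul_cancel₀ _ hEζ]
    obtain ⟨N₁, hN₁⟩ := Polynomial.dvd_iff_isRoot.mpr hNroot
    set D₁ := (Polynomial.X - Polynomial.C ζ) ^ (μ - 1) * E with hD₁def
    have hXζ : (Polynomial.X - Polynomial.C ζ : Polynomial ℂ) ≠ 0 := Polynomial.X_sub_C_ne_zero ζ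
    have hD1 : D = (Polynomial.X - Polynomial.C ζ) * D₁ := by
      rw [hD₁def, ← mul_assoc, ← pow_succ']
      rw [show μ - 1 + 1 = μ by omega]
      exact hDE.symm
    have hD₁ne : D₁ ≠ 0 := by
      intro h; rw [h, mul_zero] at hD1; exact hDne hD1
    have hD₁0 : D₁.eval 0 ≠ 0 := by
      intro h
      apply hD0
      rw [hD1, Polynomial.eval_mul, h, mul_zero]
    have hD₁root : ∀ ζ' : ℂ, D₁.IsRoot ζ' → D.IsRoot ζ' := by
      intro ζ' h
      rw [Polynomial.IsRoot, hD1, Polynomial.eval_mul, h, mul_zero]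
    have hD₁roots : ∀ ζ' : ℂ, D₁.IsRoot ζ' → ρ ≤ ‖ζ'‖ :=
      fun ζ' h => hroots ζ' (hD₁root ζ' h)
    have hD₁mult : ∀ ζ' : ℂ, D₁.IsRoot ζ' → ‖ζ'‖ = ρ → D₁.rootMultiplicity ζ' ≤ m := by
      intro ζ' h hq
      have hmul := Polynomial.rootMultiplicity_mul (p := Polynomial.X - Polynomial.C ζ)
        (q := D₁) (x := ζ') (by rw [← hD1]; exact hDne)
      have := hmult ζ' (hD₁root ζ' h) hq
      rw [hD1] at this; omega
    have hdeg₁ : D₁.natDegree ≤ d := by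
      have hmul := Polynomial.natDegree_mul hXζ hD₁ne
      rw [← hD1, Polynomial.natDegree_X_sub_C] at hmul
      omega
    obtain ⟨M₂, hM₂0, hM₂⟩ := ih D₁ hdeg₁ hD₁0 hD₁roots hD₁mult N₁
    -- constant coefficients nonzero
    have hccD : PowerSeries.constantCoeff (D : PowerSeries ℂ) ≠ 0 := by
      rwa [Polynomial.constantCoeff_coe, Polynomial.coeff_zero_eq_eval_zero]
    have hccD₁ : PowerSeries.constantCoeff (D₁ : PowerSeries ℂ) ≠ 0 := by
      rwa [Polynomial.constantCoeff_coe, Polynomial.coeff_zero_eq_eval_zero]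
    have hccP : PowerSeries.constantCoeff
        (((Polynomial.X - Polynomial.C ζ) ^ μ : Polynomial ℂ) : PowerSeries ℂ) ≠ 0 := by
      rw [Polynomial.constantCoeff_coe, Polynomial.coeff_zero_eq_eval_zero]
      simp [hζ0, pow_ne_zero]
    have hDne' : (D : PowerSeries ℂ) ≠ 0 := fun h => hccD (by rw [h]; simp)
    -- the power series identity
    have hid : ((N : PowerSeries ℂ) * (D : PowerSeries ℂ)⁻¹) =
        PowerSeries.C A * (((Polynomial.X - Polynomial.C ζ) ^ μ : Polynomial ℂ) :
          PowerSeries ℂ)⁻¹ + (N₁ : PowerSeries ℂ) * (D₁ : PowerSeries ℂ)⁻¹ := by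
      apply mul_right_cancel₀ hDne'
      have e1 : (N : PowerSeries ℂ) * (D : PowerSeries ℂ)⁻¹ * (D : PowerSeries ℂ)
          = (N : PowerSeries ℂ) := by
        rw [mul_assoc, PowerSeries.inv_mul_cancel _ hccD, mul_one]
      rw [e1, add_mul]
      have eD : (D : PowerSeries ℂ) =
          (((Polynomial.X - Polynomial.C ζ) ^ μ : Polynomial ℂ) : PowerSeries ℂ) *
            (E : PowerSeries ℂ) := by rw [← Polynomial.coe_mul, hDE]
      have eD' : (D : PowerSeries ℂ) =
          ((Polynomial.X - Polynomial.C ζ : Polynomial ℂ) : PowerSeries ℂ) *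
            (D₁ : PowerSeries ℂ) := by rw [← Polynomial.coe_mul, ← hD1]
      have e2 : PowerSeries.C A * (((Polynomial.X - Polynomial.C ζ) ^ μ : Polynomial ℂ) :
          PowerSeries ℂ)⁻¹ * (D : PowerSeries ℂ) = PowerSeries.C A * (E : PowerSeries ℂ) := by
        rw [eD, mul_assoc, ← mul_assoc (((Polynomial.X - Polynomial.C ζ) ^ μ : Polynomial ℂ) :
          PowerSeries ℂ)⁻¹, PowerSeries.inv_mul_cancel _ hccP, one_mul]
      have e3 : (N₁ : PowerSeries ℂ) * (D₁ : PowerSeries ℂ)⁻¹ * (D : PowerSeries ℂ)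
          = (N₁ : PowerSeries ℂ) *
            ((Polynomial.X - Polynomial.C ζ : Polynomial ℂ) : PowerSeries ℂ) := by
        rw [eD', mul_comm ((Polynomial.X - Polynomial.C ζ : Polynomial ℂ) : PowerSeries ℂ)
          (D₁ : PowerSeries ℂ), mul_assoc, ← mul_assoc ((D₁ : PowerSeries ℂ))⁻¹,
          PowerSeries.inv_mul_cancel _ hccD₁, one_mul]
      rw [e2, e3]
      have : N = Polynomial.C A * E + N₁ * (Polynomial.X - Polynomial.C ζ) := by
        have := hN₁
        -- hN₁ : N - C A * E = (X - C ζ) * N₁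
        linear_combination hN₁
      calc (N : PowerSeries ℂ)
          = ((Polynomial.C A * E + N₁ * (Polynomial.X - Polynomial.C ζ) : Polynomial ℂ) :
            PowerSeries ℂ) := by rw [← this]
        _ = PowerSeries.C A * (E : PowerSeries ℂ) + (N₁ : PowerSeries ℂ) *
            ((Polynomial.X - Polynomial.C ζ : Polynomial ℂ) : PowerSeries ℂ) := by
            rw [Polynomial.coe_add, Polynomial.coe_mul, Polynomial.coe_mul, Polynomial.coe_C]
    -- bound for the singular term coefficients
    have key : ∃ C : ℝ, 0 ≤ C ∧ ∀ n : ℕ,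
        ((μ - 1 + n).choose (μ - 1) : ℝ) * r⁻¹ ^ n ≤
          C * ((n + m - 1).choose (m - 1)) / ρ ^ n := by
      rcases eq_or_lt_of_le hrρ with heq | hlt
      · -- r = ρ
        have hμm : μ ≤ m := hmult ζ hζroot heq.symm
        refine ⟨1, zero_le_one, fun n => ?_⟩
        have h1 : ((μ - 1 + n).choose (μ - 1) : ℝ) ≤ ((n + m - 1).choose (m - 1) : ℝ) := by
          have : (μ - 1 + n).choose (μ - 1) ≤ (n + m - 1).choose (m - 1) := by
            rw [show μ - 1 + n = n + (μ - 1) by omega, show n + m - 1 = n + (m - 1) by omega]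
            exact choose_mono_right (by omega)
          exact_mod_cast this
        rw [← heq, one_mul, div_eq_mul_inv, ← inv_pow]
        exact mul_le_mul_of_nonneg_right h1 (by positivity)
      · -- ρ < r
        obtain ⟨C, hC0, hC⟩ := exists_choose_geom_bound (μ - 1) (q := ρ / r)
          (by positivity) ((div_lt_one hr0).mpr hlt)
        refine ⟨C, hC0, fun n => ?_⟩
        have h1 : ((μ - 1 + n).choose (μ - 1) : ℝ) * r⁻¹ ^ n =
            (((n + (μ - 1)).choose (μ - 1) : ℝ) * (ρ / r) ^ n) / ρ ^ n := by
          rw [show μ - 1 + n = n + (μ - 1) by omega]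
          rw [div_pow, inv_pow]
          field_simp
        rw [h1]
        have h2 : (((n + (μ - 1)).choose (μ - 1) : ℝ) * (ρ / r) ^ n) / ρ ^ n ≤ C / ρ ^ n := by
          gcongr
          exact hC n
        refine h2.trans ?_
        gcongr
        exact le_mul_of_one_le_right hC0 (hchoose n)
    obtain ⟨C, hC0, hkey⟩ := key
    refine ⟨‖A‖ * r⁻¹ ^ μ * C + M₂, by positivity, fun n => ?_⟩
    rw [hid, map_add]
    refine (norm_add_le _ _).trans ?_
    have habs1 : ‖PowerSeries.coeff n (PowerSeries.C A *
        (((Polynomial.X - Polynomial.C ζ) ^ μ : Polynomial ℂ) : PowerSeries ℂ)⁻¹)‖ =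
        ‖A‖ * (r⁻¹ ^ μ * (((μ - 1 + n).choose (μ - 1) : ℝ) * r⁻¹ ^ n)) := by
      rw [PowerSeries.coeff_C_mul, norm_mul, coeff_inv_pow ζ hζ0 μ hμpos n]
      rw [norm_mul, norm_mul, norm_pow, norm_pow]
      simp [hrdef, mul_comm, mul_assoc, mul_left_comm]
    have hb1 : ‖PowerSeries.coeff n (PowerSeries.C A *
        (((Polynomial.X - Polynomial.C ζ) ^ μ : Polynomial ℂ) : PowerSeries ℂ)⁻¹)‖ ≤
        (‖A‖ * r⁻¹ ^ μ * C) * ((n + m - 1).choose (m - 1)) / ρ ^ n := by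
      rw [habs1]
      have := hkey n
      calc ‖A‖ * (r⁻¹ ^ μ * (((μ - 1 + n).choose (μ - 1) : ℝ) * r⁻¹ ^ n))
          ≤ ‖A‖ * (r⁻¹ ^ μ * (C * ((n + m - 1).choose (m - 1)) / ρ ^ n)) := by
            gcongr
        _ = (‖A‖ * r⁻¹ ^ μ * C) * ((n + m - 1).choose (m - 1)) / ρ ^ n := by ring
    calc ‖PowerSeries.coeff n (PowerSeries.C A *
          (((Polynomial.X - Polynomial.C ζ) ^ μ : Polynomial ℂ) : PowerSeries ℂ)⁻¹)‖ +
          ‖PowerSeries.coeff n ((N₁ : PowerSeries ℂ) * (D₁ : PowerSeries ℂ)⁻¹)‖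
        ≤ (‖A‖ * r⁻¹ ^ μ * C) * ((n + m - 1).choose (m - 1)) / ρ ^ n +
          M₂ * ((n + m - 1).choose (m - 1)) / ρ ^ n := add_le_add hb1 (hM₂ n)
      _ = (‖A‖ * r⁻¹ ^ μ * C + M₂) * ((n + m - 1).choose (m - 1)) / ρ ^ n := by ring

theorem ratfun_coeff_bound (N D : Polynomial ℂ) (hD0 : D.eval 0 ≠ 0)
    (ρ : ℝ) (hρ : 0 < ρ) (m : ℕ) (hm : 1 ≤ m)
    (hroots : ∀ ζ : ℂ, D.IsRoot ζ → ρ ≤ ‖ζ‖)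
    (hmult : ∀ ζ : ℂ, D.IsRoot ζ → ‖ζ‖ = ρ → D.rootMultiplicity ζ ≤ m) :
    ∃ M : ℝ, 0 ≤ M ∧ ∀ n : ℕ,
      ‖PowerSeries.coeff n ((N : PowerSeries ℂ) * (D : PowerSeries ℂ)⁻¹)‖ ≤
        M * ((n + m - 1).choose (m - 1)) / ρ ^ n := by
  exact ratfun_aux ρ hρ m hm D.natDegree D le_rfl hD0 hroots hmult N
end

section
/- Let N, D ∈ ℂ[z] be polynomials with D(0) ≠ 0, and let (r_n) denote the coefficient sequence of the power series expansion of N/D at the origin. Then there exist complex numbers h_{ζ,d}, indexed by the roots ζ of D and the integers d with 1 ≤ d ≤ mult_D(ζ) (the multiplicity of ζ as a root of D), such that for all integers n ≥ max(0, deg N − deg D + 1): r_n = Σ_{ζ : D(ζ)=0} Σ_{d=1}^{mult_D(ζ)} h_{ζ,d} · (n+1)^{rising(d−1)} · ζ^{−n}. -/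
open Polynomial Finset

/-- The rising factorial `x (x+1) ⋯ (x+k-1)`, with `x^{rising 0} = 1`. -/
noncomputable def risingFactorialC (x : ℂ) (k : ℕ) : ℂ :=
  ∏ i ∈ Finset.range k, (x + i)

lemma risingFactorialC_nat (n k : ℕ) :
    risingFactorialC ((n : ℂ) + 1) k = ((n + 1).ascFactorial k : ℂ) := by
  induction k with
  | zero => simp [risingFactorialC]
  | succ k ih =>
      rw [risingFactorialC, Finset.prod_range_succ, ← risingFactorialC, ih,
        Nat.ascFactorial_succ]
      push_cast
      ring

section PS

lemma constCoeff_XsubC_pow (ζ : ℂ) (hz : ζ ≠ 0) (d : ℕ) :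
    PowerSeries.constantCoeff (R := ℂ) ((PowerSeries.X - PowerSeries.C (R := ℂ) ζ) ^ d) ≠ 0 := by
  rw [map_pow, map_sub, PowerSeries.constantCoeff_X, PowerSeries.constantCoeff_C]
  simpa using pow_ne_zero d (neg_ne_zero.mpr hz)

lemma XsubC_pow_inv (ζ : ℂ) (hz : ζ ≠ 0) (d : ℕ) :
    ((PowerSeries.X - PowerSeries.C (R := ℂ) ζ) ^ d)⁻¹ =
      PowerSeries.C (R := ℂ) ((-ζ⁻¹) ^ d) *
        PowerSeries.rescale ζ⁻¹ (PowerSeries.invOneSubPow ℂ d).val := by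
  rw [PowerSeries.inv_eq_iff_mul_eq_one (constCoeff_XsubC_pow ζ hz d)]
  have h1 : (PowerSeries.X - PowerSeries.C (R := ℂ) ζ)
      = PowerSeries.C (R := ℂ) (-ζ) * (1 - PowerSeries.C (R := ℂ) ζ⁻¹ * PowerSeries.X) := by
    rw [mul_sub, mul_one, ← mul_assoc, ← map_mul]
    rw [show (-ζ) * ζ⁻¹ = -1 by field_simp]
    simp [map_neg, map_one]
    ring
  have h2 : (1 - PowerSeries.C (R := ℂ) ζ⁻¹ * PowerSeries.X)
      = PowerSeries.rescale ζ⁻¹ (1 - PowerSeries.X) := by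
    rw [map_sub, map_one, PowerSeries.rescale_X]
  calc PowerSeries.C (R := ℂ) ((-ζ⁻¹) ^ d) * PowerSeries.rescale ζ⁻¹ (PowerSeries.invOneSubPow ℂ d).val
        * (PowerSeries.X - PowerSeries.C (R := ℂ) ζ) ^ d
      = (PowerSeries.C (R := ℂ) ((-ζ⁻¹) ^ d) * PowerSeries.C (R := ℂ) ((-ζ) ^ d)) *
          (PowerSeries.rescale ζ⁻¹ (PowerSeries.invOneSubPow ℂ d).val *
            PowerSeries.rescale ζ⁻¹ ((1 - PowerSeries.X) ^ d)) := by
        rw [h1, mul_pow, h2, ← map_pow (PowerSeries.rescale ζ⁻¹), ← map_pow, map_pow (PowerSeries.C (R := ℂ))]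
        ring
    _ = 1 := by
        rw [← map_mul, ← map_mul, ← mul_pow]
        rw [show (-ζ⁻¹) * (-ζ) = 1 by field_simp]
        rw [← PowerSeries.invOneSubPow_inv_eq_one_sub_pow,
          (PowerSeries.invOneSubPow ℂ d).val_inv]
        simp

end PS

lemma coeff_XsubC_pow_inv (ζ : ℂ) (hz : ζ ≠ 0) (d n : ℕ) (hd : 0 < d) :
    PowerSeries.coeff (R := ℂ) n (((PowerSeries.X - PowerSeries.C (R := ℂ) ζ) ^ d)⁻¹) =
      (-ζ⁻¹) ^ d * ((d - 1 + n).choose (d - 1) : ℂ) * ζ⁻¹ ^ n := by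
  rw [XsubC_pow_inv ζ hz d, PowerSeries.coeff_C_mul, PowerSeries.coeff_rescale,
    PowerSeries.invOneSubPow_val_eq_mk_sub_one_add_choose_of_pos ℂ d hd, PowerSeries.coeff_mk]
  ring

lemma XsubC_pow_mul_pow_inv (ζ : ℂ) (hz : ζ ≠ 0) {i m : ℕ} (him : i ≤ m) :
    (PowerSeries.X - PowerSeries.C (R := ℂ) ζ) ^ i * ((PowerSeries.X - PowerSeries.C (R := ℂ) ζ) ^ m)⁻¹ =
      ((PowerSeries.X - PowerSeries.C (R := ℂ) ζ) ^ (m - i))⁻¹ := by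
  rw [eq_comm, PowerSeries.inv_eq_iff_mul_eq_one (constCoeff_XsubC_pow ζ hz _)]
  calc (PowerSeries.X - PowerSeries.C (R := ℂ) ζ) ^ i * ((PowerSeries.X - PowerSeries.C (R := ℂ) ζ) ^ m)⁻¹ *
        (PowerSeries.X - PowerSeries.C (R := ℂ) ζ) ^ (m - i)
      = (PowerSeries.X - PowerSeries.C (R := ℂ) ζ) ^ m * ((PowerSeries.X - PowerSeries.C (R := ℂ) ζ) ^ m)⁻¹ := by
        rw [show (PowerSeries.X - PowerSeries.C (R := ℂ) ζ) ^ i *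
            ((PowerSeries.X - PowerSeries.C (R := ℂ) ζ) ^ m)⁻¹ *
            (PowerSeries.X - PowerSeries.C (R := ℂ) ζ) ^ (m - i) =
            ((PowerSeries.X - PowerSeries.C (R := ℂ) ζ) ^ i * (PowerSeries.X - PowerSeries.C (R := ℂ) ζ) ^ (m - i)) *
            ((PowerSeries.X - PowerSeries.C (R := ℂ) ζ) ^ m)⁻¹ from by ring, ← pow_add,
          Nat.add_sub_cancel' him]
    _ = 1 := PowerSeries.mul_inv_cancel _ (constCoeff_XsubC_pow ζ hz m)

lemma key_partial_fractions :
    ∀ (k : ℕ) (D : Polynomial ℂ), D.natDegree ≤ k → D.eval 0 ≠ 0 →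
    ∀ R : Polynomial ℂ, R.degree < D.degree →
    ∃ a : ℂ → ℕ → ℂ,
      (R : PowerSeries ℂ) * (D : PowerSeries ℂ)⁻¹ =
        ∑ ζ ∈ D.roots.toFinset, ∑ d ∈ Finset.Icc 1 (D.rootMultiplicity ζ),
          PowerSeries.C (R := ℂ) (a ζ d) * ((PowerSeries.X - PowerSeries.C (R := ℂ) ζ) ^ d)⁻¹ := by
  intro k
  induction k with
  | zero =>
    intro D hk hD0 R hR
    have hD' : D ≠ 0 := fun h => hD0 (by simp [h])
    have hdeg : D.natDegree = 0 := Nat.le_zero.mp hk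
    have hdegD : D.degree = 0 := by
      rw [degree_eq_natDegree hD', hdeg]; rfl
    have hR0 : R = 0 := by
      rw [hdegD] at hR
      exact degree_eq_bot.mp (Nat.WithBot.lt_zero_iff.mp hR)
    have hroots : D.roots = 0 := by
      obtain ⟨c, rfl⟩ := natDegree_eq_zero.mp hdeg
      exact roots_C c
    refine ⟨fun _ _ => 0, ?_⟩
    rw [hR0, hroots]
    simp
  | succ k ih =>
    intro D hk hD0 R hR
    have hD' : D ≠ 0 := fun h => hD0 (by simp [h])
    by_cases hdeg : D.natDegree = 0
    · -- same as base case
      have hdegD : D.degree = 0 := by rw [degree_eq_natDegree hD', hdeg]; rfl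
      have hR0 : R = 0 := by
        rw [hdegD] at hR
        exact degree_eq_bot.mp (Nat.WithBot.lt_zero_iff.mp hR)
      have hroots : D.roots = 0 := by
        obtain ⟨c, rfl⟩ := natDegree_eq_zero.mp hdeg
        exact roots_C c
      refine ⟨fun _ _ => 0, ?_⟩
      rw [hR0, hroots]
      simp
    · obtain ⟨ζ₀, hζ₀⟩ := Complex.isAlgClosed.exists_root D
        (by rw [degree_eq_natDegree hD']; exact_mod_cast hdeg)
      have hz0 : ζ₀ ≠ 0 := by rintro rfl; exact hD0 hζ₀
      set m := D.rootMultiplicity ζ₀ with hm_def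
      have hm : 0 < m := (rootMultiplicity_pos hD').mpr hζ₀
      set p : Polynomial ℂ := (X - C ζ₀) ^ m with hp_def
      set E : Polynomial ℂ := D /ₘ p with hE_def
      have hpE : p * E = D := D.pow_mul_divByMonic_rootMultiplicity_eq ζ₀
      have hEζ : E.eval ζ₀ ≠ 0 := eval_divByMonic_pow_rootMultiplicity_ne_zero ζ₀ hD'
      have hE0 : E.eval 0 ≠ 0 := by
        intro h
        apply hD0
        rw [← hpE, eval_mul, h, mul_zero]
      have hE' : E ≠ 0 := fun h => hE0 (by simp [h])
      have hpmon : p.Monic := (monic_X_sub_C ζ₀).pow m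
      have hp' : p ≠ 0 := hpmon.ne_zero
      have hdegp : p.degree = (m : WithBot ℕ) := by
        rw [hp_def, degree_pow, degree_X_sub_C, nsmul_eq_mul, mul_one]
      have hnatD : D.natDegree = m + E.natDegree := by
        rw [← hpE, natDegree_mul hp' hE', hp_def, natDegree_pow, natDegree_X_sub_C, mul_one]
      have hEk : E.natDegree ≤ k := by omega
      -- Bezout
      have hcop : IsCoprime p E := by
        apply IsCoprime.pow_left
        rw [(irreducible_X_sub_C ζ₀).coprime_iff_not_dvd, dvd_iff_isRoot]
        exact hEζ
      obtain ⟨u, v, huv⟩ := hcop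
      set q : Polynomial ℂ := (R * v) /ₘ p with hq_def
      set A : Polynomial ℂ := (R * v) %ₘ p with hA_def
      have hAq : A + p * q = R * v := modByMonic_add_div (R * v) p
      set B : Polynomial ℂ := R * u + q * E with hB_def
      have hRAB : A * E + B * p = R := by
        rw [hB_def]
        linear_combination E * hAq + R * huv
      have hdegA : A.degree < p.degree := degree_modByMonic_lt (R * v) hpmon
      have hdegB : B.degree < E.degree := by
        have hBp : B * p = R - A * E := by linear_combination hRAB
        have hAE : (A * E).degree < p.degree + E.degree := by
          rw [degree_mul]
          exact WithBot.add_lt_add_right (degree_ne_bot.mpr hE') hdegA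
        have hRD : R.degree < p.degree + E.degree := by
          rw [← degree_mul, hpE]; exact hR
        have h1 : (B * p).degree < E.degree + p.degree := by
          rw [hBp]
          calc (R - A * E).degree ≤ max R.degree (A * E).degree := degree_sub_le _ _
            _ < p.degree + E.degree := max_lt hRD hAE
            _ = E.degree + p.degree := add_comm _ _
        rw [degree_mul] at h1
        exact (WithBot.add_lt_add_iff_right (by rw [hdegp]; exact WithBot.coe_ne_bot)).mp h1
      obtain ⟨aE, haE⟩ := ih E hEk hE0 B hdegB
      -- Taylor expansion of A
      set c : ℕ → ℂ := fun i => (taylor ζ₀ A).coeff i with hc_def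
      have hnatA : A.natDegree < m := by
        rcases eq_or_ne A 0 with h | h
        · simp [h, hm]
        · have := hdegA
          rw [degree_eq_natDegree h, hdegp] at this
          exact_mod_cast this
      have hAsum : A = ∑ i ∈ Finset.range m, C (c i) * (X - C ζ₀) ^ i := by
        conv_lhs => rw [← sum_taylor_eq A ζ₀]
        rw [Polynomial.sum_over_range' (taylor ζ₀ A) (fun n => by simp) m
          (by rw [natDegree_taylor]; exact hnatA)]
      
      -- power series side
      set w : PowerSeries ℂ := PowerSeries.X - PowerSeries.C (R := ℂ) ζ₀ with hw_def
      have hXC : ((X - C ζ₀ : Polynomial ℂ) : PowerSeries ℂ) = w := by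
        rw [← Polynomial.coeToPowerSeries.ringHom_apply, map_sub, hw_def]
        simp [Polynomial.coeToPowerSeries.ringHom_apply, Polynomial.coe_X, Polynomial.coe_C]
      have hpcoe : (p : PowerSeries ℂ) = w ^ m := by
        rw [hp_def, Polynomial.coe_pow, hXC]
      have hinv : ∀ f : Polynomial ℂ, f.eval 0 ≠ 0 →
          (f : PowerSeries ℂ) * (f : PowerSeries ℂ)⁻¹ = 1 := fun f hf =>
        PowerSeries.mul_inv_cancel _ (by
          rw [Polynomial.constantCoeff_coe, Polynomial.coeff_zero_eq_eval_zero]; exact hf)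
      have hp0 : p.eval 0 ≠ 0 := by
        intro h; apply hD0; rw [← hpE, eval_mul, h, zero_mul]
      have hDcoe : (D : PowerSeries ℂ) = (p : PowerSeries ℂ) * (E : PowerSeries ℂ) := by
        rw [← hpE, Polynomial.coe_mul]
      have hDne : (D : PowerSeries ℂ) ≠ 0 := by
        rw [Ne, ← Polynomial.coe_zero, Polynomial.coe_inj]
        exact hD'
      have step1 : (R : PowerSeries ℂ) * (D : PowerSeries ℂ)⁻¹ =
          (A : PowerSeries ℂ) * (p : PowerSeries ℂ)⁻¹ +
          (B : PowerSeries ℂ) * (E : PowerSeries ℂ)⁻¹ := by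
        apply mul_right_cancel₀ hDne
        have hRABc : (A : PowerSeries ℂ) * E + (B : PowerSeries ℂ) * p = R := by
          exact_mod_cast congrArg (fun t : Polynomial ℂ => (t : PowerSeries ℂ)) hRAB
        calc (R : PowerSeries ℂ) * (D : PowerSeries ℂ)⁻¹ * D
            = (R : PowerSeries ℂ) * ((D : PowerSeries ℂ) * (D : PowerSeries ℂ)⁻¹) := by ring
          _ = (R : PowerSeries ℂ) := by rw [hinv D hD0, mul_one]
          _ = (A : PowerSeries ℂ) * E + (B : PowerSeries ℂ) * p := hRABc.symm
          _ = (A : PowerSeries ℂ) * E * ((p : PowerSeries ℂ) * (p : PowerSeries ℂ)⁻¹) +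
              (B : PowerSeries ℂ) * p * ((E : PowerSeries ℂ) * (E : PowerSeries ℂ)⁻¹) := by
              rw [hinv p hp0, hinv E hE0, mul_one, mul_one]
          _ = ((A : PowerSeries ℂ) * (p : PowerSeries ℂ)⁻¹ +
              (B : PowerSeries ℂ) * (E : PowerSeries ℂ)⁻¹) * D := by
              rw [hDcoe]; ring
      have hAcoe : (A : PowerSeries ℂ) =
          ∑ i ∈ Finset.range m, PowerSeries.C (R := ℂ) (c i) * w ^ i := by
        conv_lhs => rw [hAsum]
        rw [← Polynomial.coeToPowerSeries.ringHom_apply, map_sum]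
        refine Finset.sum_congr rfl fun i _ => ?_
        rw [map_mul, map_pow, Polynomial.coeToPowerSeries.ringHom_apply,
          Polynomial.coeToPowerSeries.ringHom_apply, hXC, Polynomial.coe_C]
      have step2 : (A : PowerSeries ℂ) * (p : PowerSeries ℂ)⁻¹ =
          ∑ d ∈ Finset.Icc 1 m, PowerSeries.C (R := ℂ) (c (m - d)) * (w ^ d)⁻¹ := by
        rw [hAcoe, hpcoe, Finset.sum_mul]
        refine Finset.sum_nbij' (fun i => m - i) (fun d => m - d)
          (fun i hi => ?_) (fun d hd => ?_) (fun i hi => ?_) (fun d hd => ?_) (fun i hi => ?_)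
        · rw [Finset.mem_range] at hi
          show m - i ∈ Finset.Icc 1 m
          rw [Finset.mem_Icc]
          omega
        · rw [Finset.mem_Icc] at hd
          show m - d ∈ Finset.range m
          rw [Finset.mem_range]
          omega
        · rw [Finset.mem_range] at hi
          show m - (m - i) = i
          omega
        · rw [Finset.mem_Icc] at hd
          show m - (m - d) = d
          omega
        · rw [Finset.mem_range] at hi
          show PowerSeries.C (R := ℂ) (c i) * w ^ i * (w ^ m)⁻¹ =
            PowerSeries.C (R := ℂ) (c (m - (m - i))) * (w ^ (m - i))⁻¹
          rw [mul_assoc, XsubC_pow_mul_pow_inv ζ₀ hz0 (le_of_lt hi),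
            show m - (m - i) = i by omega]
      -- roots bookkeeping
      have hroots : D.roots = m • {ζ₀} + E.roots := by
        conv_lhs => rw [← hpE]
        rw [roots_mul (by rw [hpE]; exact hD'), hp_def, roots_pow, roots_X_sub_C]
      have hcount : E.roots.count ζ₀ = 0 := by
        have h1 : D.roots.count ζ₀ = m := count_roots D
        rw [hroots, Multiset.count_add, Multiset.count_nsmul, Multiset.count_singleton,
          if_pos rfl, mul_one] at h1
        omega
      have hnotin : ζ₀ ∉ E.roots.toFinset := by
        rw [Multiset.mem_toFinset]
        exact Multiset.count_eq_zero.mp hcount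
      have hfin : D.roots.toFinset = insert ζ₀ E.roots.toFinset := by
        rw [hroots, Multiset.toFinset_add, Multiset.toFinset_nsmul _ m hm.ne',
          Multiset.toFinset_singleton, Finset.insert_eq]
      have hmult : ∀ ζ ∈ E.roots.toFinset, D.rootMultiplicity ζ = E.rootMultiplicity ζ := by
        intro ζ hζ
        have hne : ζ ≠ ζ₀ := fun h => hnotin (h ▸ hζ)
        rw [← count_roots, ← count_roots, hroots, Multiset.count_add, Multiset.count_nsmul,
          Multiset.count_singleton, if_neg hne, mul_zero, zero_add]
      refine ⟨fun ζ d => if ζ = ζ₀ then c (m - d) else aE ζ d, ?_⟩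
      rw [step1, step2, haE, hfin, Finset.sum_insert hnotin]
      congr 1
      · refine Finset.sum_congr rfl fun d _ => ?_
        simp [hw_def]
      · refine Finset.sum_congr rfl fun ζ hζ => ?_
        have hne : ζ ≠ ζ₀ := fun h => hnotin (h ▸ hζ)
        rw [hmult ζ hζ]
        exact Finset.sum_congr rfl fun d _ => by simp only [if_neg hne]
theorem ratfun_coeff_partial_fractions (N D : Polynomial ℂ) (hD0 : D.eval 0 ≠ 0) :
    ∃ h : ℂ → ℕ → ℂ, ∀ n : ℕ, (N.natDegree : ℤ) - D.natDegree + 1 ≤ (n : ℤ) →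
      PowerSeries.coeff (R := ℂ) n ((N : PowerSeries ℂ) * (D : PowerSeries ℂ)⁻¹) =
        ∑ ζ ∈ D.roots.toFinset, ∑ d ∈ Finset.Icc 1 (D.rootMultiplicity ζ),
          h ζ d * risingFactorialC ((n : ℂ) + 1) (d - 1) * ζ⁻¹ ^ n := by
  have hD' : D ≠ 0 := fun h => hD0 (by simp [h])
  set cD : ℂ := D.leadingCoeff with hcD
  have hc : cD ≠ 0 := leadingCoeff_ne_zero.mpr hD'
  set D₁ : Polynomial ℂ := D * C cD⁻¹ with hD₁
  have hmon : D₁.Monic := monic_mul_leadingCoeff_inv hD'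
  set Q : Polynomial ℂ := N /ₘ D₁ with hQ
  set Rr : Polynomial ℂ := N %ₘ D₁ with hRr
  have hNQ : Rr + D₁ * Q = N := modByMonic_add_div N D₁
  have hdegD₁ : D₁.degree = D.degree := degree_mul_C (inv_ne_zero hc)
  have hdegR : Rr.degree < D.degree := hdegD₁ ▸ degree_modByMonic_lt N hmon
  obtain ⟨a, ha⟩ := key_partial_fractions D.natDegree D le_rfl hD0 Rr hdegR
  refine ⟨fun ζ d => a ζ d * (-ζ⁻¹) ^ d * (((d - 1).factorial : ℂ))⁻¹, fun n hn => ?_⟩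
  -- split off polynomial part
  have hinvD : (D : PowerSeries ℂ) * (D : PowerSeries ℂ)⁻¹ = 1 :=
    PowerSeries.mul_inv_cancel _ (by
      rw [Polynomial.constantCoeff_coe, Polynomial.coeff_zero_eq_eval_zero]; exact hD0)
  have hsplit : (N : PowerSeries ℂ) * (D : PowerSeries ℂ)⁻¹ =
      (Rr : PowerSeries ℂ) * (D : PowerSeries ℂ)⁻¹ +
        PowerSeries.C (R := ℂ) cD⁻¹ * (Q : PowerSeries ℂ) := by
    have hNc : (Rr : PowerSeries ℂ) + ((D : PowerSeries ℂ) * PowerSeries.C (R := ℂ) cD⁻¹) * Q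
        = (N : PowerSeries ℂ) := by
      have := congrArg (fun t : Polynomial ℂ => (t : PowerSeries ℂ)) hNQ
      simpa [hD₁, Polynomial.coe_mul, Polynomial.coe_add, Polynomial.coe_C] using this
    calc (N : PowerSeries ℂ) * (D : PowerSeries ℂ)⁻¹
        = ((Rr : PowerSeries ℂ) + ((D : PowerSeries ℂ) * PowerSeries.C (R := ℂ) cD⁻¹) * Q) *
            (D : PowerSeries ℂ)⁻¹ := by rw [hNc]
      _ = (Rr : PowerSeries ℂ) * (D : PowerSeries ℂ)⁻¹ +
            PowerSeries.C (R := ℂ) cD⁻¹ * Q * ((D : PowerSeries ℂ) * (D : PowerSeries ℂ)⁻¹) := by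
          ring
      _ = (Rr : PowerSeries ℂ) * (D : PowerSeries ℂ)⁻¹ +
            PowerSeries.C (R := ℂ) cD⁻¹ * (Q : PowerSeries ℂ) := by rw [hinvD, mul_one]
  have hQcoeff : Q.coeff n = 0 := by
    by_cases hlt : N.degree < D₁.degree
    · rw [hQ, (divByMonic_eq_zero_iff hmon).mpr hlt, coeff_zero]
    · push_neg at hlt
      have hDN : D.natDegree ≤ N.natDegree := by
        have := natDegree_le_natDegree hlt
        rwa [natDegree_mul_C (inv_ne_zero hc)] at this
      apply coeff_eq_zero_of_natDegree_lt
      have hQdeg : Q.natDegree = N.natDegree - D.natDegree := by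
        rw [hQ, natDegree_divByMonic N hmon, hD₁, natDegree_mul_C (inv_ne_zero hc)]
      omega
  rw [hsplit, map_add, PowerSeries.coeff_C_mul, Polynomial.coeff_coe, hQcoeff, mul_zero,
    add_zero, ha, map_sum]
  refine Finset.sum_congr rfl fun ζ hζ => ?_
  rw [map_sum]
  refine Finset.sum_congr rfl fun d hd => ?_
  have hζroot : ζ ∈ D.roots := Multiset.mem_toFinset.mp hζ
  have hζ0 : ζ ≠ 0 := by
    rintro rfl
    exact hD0 (isRoot_of_mem_roots hζroot)
  have hd1 : 1 ≤ d := (Finset.mem_Icc.mp hd).1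
  rw [PowerSeries.coeff_C_mul, coeff_XsubC_pow_inv ζ hζ0 d n hd1]
  rw [risingFactorialC_nat n (d - 1), Nat.ascFactorial_eq_factorial_mul_choose]
  have hfac : ((d - 1).factorial : ℂ) ≠ 0 := by
    exact_mod_cast Nat.cast_ne_zero.mpr (d - 1).factorial_ne_zero
  rw [show n + (d - 1) = d - 1 + n from add_comm _ _]
  push_cast
  field_simp
end

section
/- Let (u_n) be a sequence of complex numbers, (v_n) a sequence of nonnegative reals, Q : ℕ → ℝ, and let α > 0, K > 0, M ≥ 0 be reals, T, r ∈ ℕ with r ≥ 1, and N ≥ 1 an integer. Assume: (i) for all n ≥ N, Q(n) > 0 and Q(n)·|u_n| ≤ Σ_{j=0}^{n−1} M · n^{r−1} · C(n−1−j+T, T) · α^{n−1−j} · |u_j|; (ii) M·n^r ≤ α·K·Q(n) for all n ≥ N; (iii) v_n = (1/n) · Σ_{j=0}^{n−1} K · C(n−1−j+T, T) · α^{n−j} · v_j for all n ≥ 1; (iv) |u_n| ≤ v_n for all n ≤ N. Then |u_n| ≤ v_n for all n ∈ ℕ. -/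
theorem majorant_sequence_induction (u : ℕ → ℂ) (v : ℕ → ℝ) (Q : ℕ → ℝ)
    (α K M : ℝ) (hα : 0 < α) (hK : 0 < K) (hM : 0 ≤ M)
    (T r : ℕ) (hr : 1 ≤ r) (N : ℕ) (hN : 1 ≤ N)
    (hv0 : ∀ n, 0 ≤ v n)
    (h1 : ∀ n, N ≤ n → 0 < Q n ∧ Q n * ‖u n‖ ≤
      ∑ j ∈ Finset.range n, M * (n : ℝ) ^ (r - 1) * ((n - 1 - j + T).choose T) *
        α ^ (n - 1 - j) * ‖u j‖)
    (h2 : ∀ n, N ≤ n → M * (n : ℝ) ^ r ≤ α * K * Q n)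
    (h3 : ∀ n, 1 ≤ n → v n = (1 / (n : ℝ)) *
      ∑ j ∈ Finset.range n, K * ((n - 1 - j + T).choose T) * α ^ (n - j) * v j)
    (h4 : ∀ n, n ≤ N → ‖u n‖ ≤ v n) :
    ∀ n, ‖u n‖ ≤ v n := by
  intro n
  induction n using Nat.strong_induction_on with
  | _ n ih =>
    by_cases hle : n ≤ N
    · exact h4 n hle
    push_neg at hle
    have hn : N ≤ n := hle.le
    have hn1 : 1 ≤ n := hN.trans hn
    have hnpos : (0:ℝ) < n := by exact_mod_cast hn1
    obtain ⟨hQpos, hQu⟩ := h1 n hn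
    set S : ℝ := ∑ j ∈ Finset.range n,
      ((n - 1 - j + T).choose T : ℝ) * α ^ (n - 1 - j) * v j with hS
    have hS0 : 0 ≤ S := Finset.sum_nonneg fun j _ =>
      mul_nonneg (mul_nonneg (Nat.cast_nonneg _) (pow_nonneg hα.le _)) (hv0 j)
    have hbound : Q n * ‖u n‖ ≤ M * (n:ℝ)^(r-1) * S := by
      refine hQu.trans ?_
      rw [hS, Finset.mul_sum]
      refine Finset.sum_le_sum fun j hj => ?_
      have hj' := ih j (Finset.mem_range.mp hj)
      have h0 : (0:ℝ) ≤ M * (n:ℝ)^(r-1) * ((n-1-j+T).choose T) * α^(n-1-j) := by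
        positivity
      calc M * (n:ℝ)^(r-1) * ((n-1-j+T).choose T) * α^(n-1-j) * ‖u j‖
          ≤ M * (n:ℝ)^(r-1) * ((n-1-j+T).choose T) * α^(n-1-j) * v j :=
            mul_le_mul_of_nonneg_left hj' h0
        _ = M * (n:ℝ)^(r-1) * (((n-1-j+T).choose T) * α^(n-1-j) * v j) := by ring
    have hv : v n = K * α / n * S := by
      rw [h3 n hn1, hS, Finset.mul_sum, Finset.mul_sum]
      refine Finset.sum_congr rfl fun j hj => ?_
      have hj' : j < n := Finset.mem_range.mp hj
      have he : n - j = (n - 1 - j) + 1 := by omega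
      rw [he, pow_succ]
      ring
    have hrw : (n:ℝ)^r = (n:ℝ)^(r-1) * n := by
      rw [← pow_succ]; congr 1; omega
    have key : M * (n:ℝ)^(r-1) * S ≤ Q n * v n := by
      rw [hv]
      have hle2 : M * (n:ℝ)^(r-1) ≤ K * α / n * Q n := by
        rw [div_mul_eq_mul_div, le_div_iff₀ hnpos]
        nlinarith [h2 n hn]
      calc M*(n:ℝ)^(r-1)*S ≤ K*α/n*Q n * S := mul_le_mul_of_nonneg_right hle2 hS0
        _ = Q n * (K*α/n*S) := by ring
    exact le_of_mul_le_mul_left (hbound.trans key) hQpos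
end

section
/- Let T ≥ 1 be an integer and K, α > 0 real numbers. The function v(x) = exp((K/T)·(1−αx)^{−T}) is analytic on the interval (−1/α, 1/α) and satisfies the differential equation v'(x) = αK·(1−αx)^{−T−1}·v(x) there; consequently its Taylor coefficients (v_n) at 0 are nonnegative and satisfy, for all n ≥ 1, the recurrence n·v_n = Σ_{j=0}^{n−1} K · C(n−1−j+T, T) · α^{n−j} · v_j. -/
open Finset Filter Topology

/-- The majorant function `v(x) = exp((K/T)·(1-αx)^{-T})`. -/
noncomputable def majorantFun (K α : ℝ) (T : ℕ) : ℝ → ℝ :=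
  fun x => Real.exp (K / T * ((1 - α * x) ^ T)⁻¹)

/-- The `n`-th Taylor coefficient of `f` at `0`. -/
noncomputable def taylorCoeff (f : ℝ → ℝ) (n : ℕ) : ℝ :=
  iteratedDeriv n f 0 / n.factorial

section aux

variable {K α : ℝ} {T : ℕ}

/-- `(1-αx)^{-S}`. -/
noncomputable def mgz (α : ℝ) (S : ℕ) : ℝ → ℝ := fun x => ((1 - α * x) ^ S)⁻¹

lemma mgz_pos {α : ℝ} (S : ℕ) {x : ℝ} (hx : 0 < 1 - α * x) : 0 < mgz α S x := by
  simp only [mgz]; positivity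

lemma mem_Ioo_pos (hα : 0 < α) {x : ℝ} (hx : x ∈ Set.Ioo (-(1 / α)) (1 / α)) :
    0 < 1 - α * x := by
  obtain ⟨h1, h2⟩ := hx
  have : α * x < α * (1 / α) := by exact mul_lt_mul_of_pos_left h2 hα
  rw [mul_one_div_cancel (ne_of_gt hα)] at this
  linarith

lemma hasDerivAt_mgz (S : ℕ) {x : ℝ} (hx : 0 < 1 - α * x) :
    HasDerivAt (mgz α S) (α * S * mgz α (S + 1) x) x := by
  have h1 : HasDerivAt (fun y : ℝ => 1 - α * y) (-α) x := by
    simpa using ((hasDerivAt_id x).const_mul α).const_sub 1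
  have h2 := (hasDerivAt_zpow (-(S : ℤ)) (1 - α * x) (Or.inl (ne_of_gt hx))).comp x h1
  have hfun : (fun y : ℝ => (1 - α * y) ^ (-(S:ℤ))) = mgz α S := by
    funext y; rw [zpow_neg, zpow_natCast]; rfl
  simp only [Function.comp_def] at h2
  rw [hfun] at h2
  refine h2.congr_deriv ?_
  have he : (-(S:ℤ)) - 1 = -((S:ℤ) + 1) := by ring
  rw [he, zpow_neg]
  have hz : ((1 - α * x) ^ ((S:ℤ) + 1)) = (1 - α * x) ^ (S + 1 : ℕ) := by
    rw [← zpow_natCast (1 - α * x) (S + 1)]; norm_cast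
  rw [hz]
  simp only [mgz]
  push_cast
  ring

lemma analyticAt_mgz (S : ℕ) {x : ℝ} (hx : 0 < 1 - α * x) :
    AnalyticAt ℝ (mgz α S) x := by
  have h : AnalyticAt ℝ (fun y : ℝ => 1 - α * y) x :=
    analyticAt_const.sub (analyticAt_const.mul analyticAt_id)
  exact (h.pow S).inv (pow_ne_zero S (ne_of_gt hx))

/-- Iterated derivatives of `c * mgz α S` on the interval. -/
lemma iteratedDeriv_const_mul_mgz (hα : 0 < α) (c : ℝ) (S : ℕ) :
    ∀ m : ℕ, ∀ x ∈ Set.Ioo (-(1 / α)) (1 / α),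
      iteratedDeriv m (fun y => c * mgz α S y) x =
        c * (∏ i ∈ Finset.range m, ((S : ℝ) + i)) * α ^ m * mgz α (S + m) x := by
  intro m
  induction m with
  | zero => intro x hx; simp
  | succ m ih =>
    intro x hx
    have hxv := mem_Ioo_pos hα hx
    rw [iteratedDeriv_succ]
    have hev : iteratedDeriv m (fun y => c * mgz α S y) =ᶠ[𝓝 x]
        fun y => (c * (∏ i ∈ Finset.range m, ((S : ℝ) + i)) * α ^ m) * mgz α (S + m) y := by
      filter_upwards [isOpen_Ioo.mem_nhds hx] with y hy using ih y hy
    rw [hev.deriv_eq]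
    have hd := (hasDerivAt_mgz (α := α) (S + m) hxv).const_mul
      (c * (∏ i ∈ Finset.range m, ((S : ℝ) + i)) * α ^ m)
    rw [hd.deriv, Finset.prod_range_succ]
    have : S + (m + 1) = S + m + 1 := by omega
    rw [this]
    push_cast
    ring

end aux

section leibniz

/-- iterated derivatives of analytic functions are analytic on an open set. -/
lemma analyticOnNhd_iteratedDeriv {f : ℝ → ℝ} {s : Set ℝ}
    (hf : AnalyticOnNhd ℝ f s) (n : ℕ) : AnalyticOnNhd ℝ (iteratedDeriv n f) s := by
  induction n with
  | zero => simpa [iteratedDeriv_zero] using hf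
  | succ n ih => rw [iteratedDeriv_succ]; exact ih.deriv

lemma hasDerivAt_iteratedDeriv {f : ℝ → ℝ} {s : Set ℝ} (hs : IsOpen s)
    (hf : AnalyticOnNhd ℝ f s) (n : ℕ) {x : ℝ} (hx : x ∈ s) :
    HasDerivAt (iteratedDeriv n f) (iteratedDeriv (n + 1) f x) x := by
  have h := (analyticOnNhd_iteratedDeriv hf n x hx).differentiableAt
  have := h.hasDerivAt
  rwa [← iteratedDeriv_succ] at this

/-- the binomial rearrangement. -/
lemma binom_sum_aux (a b : ℕ → ℝ) (n : ℕ) :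
    ∑ j ∈ Finset.range (n + 1),
        (n.choose j : ℝ) * (a (j + 1) * b (n - j) + a j * b (n - j + 1)) =
      ∑ j ∈ Finset.range (n + 2), ((n + 1).choose j : ℝ) * a j * b (n + 1 - j) := by
  have hL : ∑ j ∈ Finset.range (n + 1),
      (n.choose j : ℝ) * (a (j + 1) * b (n - j) + a j * b (n - j + 1)) =
      (∑ j ∈ Finset.range (n + 1), (n.choose j : ℝ) * (a (j + 1) * b (n - j)))
      + (∑ j ∈ Finset.range (n + 1), (n.choose j : ℝ) * (a j * b (n - j + 1))) := by
    rw [← Finset.sum_add_distrib]; congr 1; funext j; ring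
  rw [hL]
  -- second sum : peel off j = 0
  have hS2 : ∑ j ∈ Finset.range (n + 1), (n.choose j : ℝ) * (a j * b (n - j + 1)) =
      (∑ j ∈ Finset.range n, (n.choose (j + 1) : ℝ) * (a (j + 1) * b (n - j))) +
        a 0 * b (n + 1) := by
    rw [Finset.sum_range_succ']
    congr 1
    · apply Finset.sum_congr rfl
      intro j hj
      have hjn : j + 1 ≤ n := Finset.mem_range.mp hj
      have : n - (j + 1) + 1 = n - j := by omega
      rw [this]
    · simp
  rw [hS2]
  have hS2' : ∑ j ∈ Finset.range n, (n.choose (j + 1) : ℝ) * (a (j + 1) * b (n - j)) =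
      ∑ j ∈ Finset.range (n + 1), (n.choose (j + 1) : ℝ) * (a (j + 1) * b (n - j)) := by
    rw [Finset.sum_range_succ, Nat.choose_succ_self]
    simp
  rw [hS2']
  -- RHS: peel off j = 0
  rw [Finset.sum_range_succ' (fun j => ((n + 1).choose j : ℝ) * a j * b (n + 1 - j)) (n + 1)]
  have hR : ∑ j ∈ Finset.range (n + 1), ((n + 1).choose (j + 1) : ℝ) * a (j + 1) * b (n + 1 - (j + 1)) =
      ∑ j ∈ Finset.range (n + 1),
        (((n.choose j : ℝ) + (n.choose (j + 1) : ℝ)) * a (j + 1) * b (n - j)) := by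
    apply Finset.sum_congr rfl
    intro j hj
    have h1 : n + 1 - (j + 1) = n - j := by omega
    rw [h1, Nat.choose_succ_succ]
    push_cast
    ring
  rw [hR]
  have hsplit : ∑ j ∈ Finset.range (n + 1),
      ((n.choose j : ℝ) + (n.choose (j + 1) : ℝ)) * a (j + 1) * b (n - j)
      = (∑ j ∈ Finset.range (n + 1), (n.choose j : ℝ) * (a (j + 1) * b (n - j)))
        + ∑ j ∈ Finset.range (n + 1), (n.choose (j + 1) : ℝ) * (a (j + 1) * b (n - j)) := by
    rw [← Finset.sum_add_distrib]
    exact Finset.sum_congr rfl fun j _ => by ring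
  rw [hsplit]
  simp only [Nat.choose_zero_right, Nat.cast_one, one_mul, Nat.sub_zero]
  ring

/-- Leibniz rule for iterated derivatives of analytic functions on an open set. -/
lemma leibniz_iteratedDeriv {f g : ℝ → ℝ} {s : Set ℝ} (hs : IsOpen s)
    (hf : AnalyticOnNhd ℝ f s) (hg : AnalyticOnNhd ℝ g s) :
    ∀ n : ℕ, ∀ x ∈ s, iteratedDeriv n (fun y => f y * g y) x =
      ∑ j ∈ Finset.range (n + 1),
        (n.choose j : ℝ) * iteratedDeriv j f x * iteratedDeriv (n - j) g x := by
  intro n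
  induction n with
  | zero => intro x hx; simp
  | succ n ih =>
    intro x hx
    rw [iteratedDeriv_succ]
    have hev : iteratedDeriv n (fun y => f y * g y) =ᶠ[𝓝 x]
        fun y => ∑ j ∈ Finset.range (n + 1),
          (n.choose j : ℝ) * iteratedDeriv j f y * iteratedDeriv (n - j) g y := by
      filter_upwards [hs.mem_nhds hx] with y hy using ih y hy
    rw [hev.deriv_eq]
    have hterm : ∀ j ∈ Finset.range (n + 1),
        HasDerivAt (fun y => (n.choose j : ℝ) * iteratedDeriv j f y * iteratedDeriv (n - j) g y)
          ((n.choose j : ℝ) * (iteratedDeriv (j + 1) f x * iteratedDeriv (n - j) g x +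
            iteratedDeriv j f x * iteratedDeriv (n - j + 1) g x)) x := by
      intro j _
      have hd := ((hasDerivAt_iteratedDeriv hs hf j hx).mul
        (hasDerivAt_iteratedDeriv hs hg (n - j) hx)).const_mul (n.choose j : ℝ)
      simpa [mul_assoc] using hd
    rw [(HasDerivAt.fun_sum hterm).deriv]
    exact binom_sum_aux (fun j => iteratedDeriv j f x) (fun j => iteratedDeriv j g x) n

end leibniz

-- nat auxiliary identities
lemma prod_factorial_aux (T : ℕ) : ∀ r : ℕ,
    (∏ i ∈ Finset.range r, (T + 1 + i)) * T.factorial = (T + r).factorial := by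
  intro r
  induction r with
  | zero => simp
  | succ r ih =>
    rw [Finset.prod_range_succ]
    have : T + (r + 1) = (T + r) + 1 := by omega
    rw [this, Nat.factorial_succ, ← ih]
    ring

lemma prod_choose_aux (T r : ℕ) :
    (∏ i ∈ Finset.range r, (T + 1 + i)) = (r + T).choose T * r.factorial := by
  have h1 := prod_factorial_aux T r
  have h2 : (r + T).choose T * T.factorial * (r + T - T).factorial = (r + T).factorial :=
    Nat.choose_mul_factorial_mul_factorial (Nat.le_add_left T r)
  have h3 : r + T - T = r := by omega
  rw [h3] at h2
  have h4 : (∏ i ∈ Finset.range r, (T + 1 + i)) * T.factorial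
      = ((r + T).choose T * r.factorial) * T.factorial := by
    rw [h1]
    have : T + r = r + T := by omega
    rw [this, ← h2]; ring
  exact Nat.eq_of_mul_eq_mul_right T.factorial_pos h4

theorem majorant_fun_analytic_ode_recurrence (T : ℕ) (hT : 1 ≤ T) (K α : ℝ)
    (hK : 0 < K) (hα : 0 < α) :
    (∀ x ∈ Set.Ioo (-(1 / α)) (1 / α), AnalyticAt ℝ (majorantFun K α T) x) ∧
    (∀ x ∈ Set.Ioo (-(1 / α)) (1 / α),
      deriv (majorantFun K α T) x =
        α * K * ((1 - α * x) ^ (T + 1))⁻¹ * majorantFun K α T x) ∧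
    (∀ n : ℕ, 0 ≤ taylorCoeff (majorantFun K α T) n) ∧
    (∀ n : ℕ, 1 ≤ n →
      (n : ℝ) * taylorCoeff (majorantFun K α T) n =
        ∑ j ∈ Finset.range n, K * ((n - 1 - j + T).choose T) * α ^ (n - j) *
          taylorCoeff (majorantFun K α T) j) := by
  have hs_open : IsOpen (Set.Ioo (-(1 / α)) (1 / α)) := isOpen_Ioo
  have h0s : (0:ℝ) ∈ Set.Ioo (-(1 / α)) (1 / α) := by
    constructor
    · simp; positivity
    · positivity
  have hT0 : (T:ℝ) ≠ 0 := Nat.cast_ne_zero.mpr (by omega)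
  -- analyticity
  have hv_an : ∀ x ∈ Set.Ioo (-(1 / α)) (1 / α), AnalyticAt ℝ (majorantFun K α T) x := by
    intro x hx
    have hpos := mem_Ioo_pos hα hx
    exact (analyticAt_const.mul (analyticAt_mgz T hpos)).rexp
  -- ODE
  have hode : ∀ x ∈ Set.Ioo (-(1 / α)) (1 / α), HasDerivAt (majorantFun K α T)
      (α * K * mgz α (T+1) x * majorantFun K α T x) x := by
    intro x hx
    have hpos := mem_Ioo_pos hα hx
    have he := ((hasDerivAt_mgz (α := α) T hpos).const_mul (K / T)).exp
    have harr : Real.exp (K / ↑T * mgz α T x) * (K / ↑T * (α * ↑T * mgz α (T + 1) x))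
        = α * K * mgz α (T+1) x * majorantFun K α T x := by
      have hm : majorantFun K α T x = Real.exp (K / ↑T * mgz α T x) := rfl
      rw [hm]; field_simp
    rw [harr] at he
    exact he
  have hv_an' : AnalyticOnNhd ℝ (majorantFun K α T) (Set.Ioo (-(1 / α)) (1 / α)) := hv_an
  have hh_an : AnalyticOnNhd ℝ (fun y => α * K * mgz α (T+1) y) (Set.Ioo (-(1 / α)) (1 / α)) :=
    fun x hx => analyticAt_const.mul (analyticAt_mgz (T+1) (mem_Ioo_pos hα hx))
  have hderiv_eqon : Set.EqOn (deriv (majorantFun K α T))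
      (fun y => α * K * mgz α (T+1) y * majorantFun K α T y) (Set.Ioo (-(1 / α)) (1 / α)) :=
    fun x hx => (hode x hx).deriv
  -- key Leibniz identity at 0
  have hkey : ∀ m : ℕ, iteratedDeriv (m+1) (majorantFun K α T) 0 =
      ∑ j ∈ Finset.range (m+1), (m.choose j : ℝ) *
        (α * K * (∏ i ∈ Finset.range j, ((T:ℝ) + 1 + i)) * α ^ j) *
        iteratedDeriv (m-j) (majorantFun K α T) 0 := by
    intro m
    rw [iteratedDeriv_succ']
    rw [hderiv_eqon.iteratedDeriv_of_isOpen hs_open m h0s]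
    rw [leibniz_iteratedDeriv hs_open hh_an hv_an' m 0 h0s]
    apply Finset.sum_congr rfl
    intro j hj
    rw [iteratedDeriv_const_mul_mgz hα (α * K) (T+1) j 0 h0s]
    have hm1 : mgz α (T+1+j) 0 = 1 := by simp [mgz]
    rw [hm1]
    push_cast
    ring
  -- recurrence
  have hrec : ∀ n : ℕ, 1 ≤ n →
      (n : ℝ) * taylorCoeff (majorantFun K α T) n =
        ∑ j ∈ Finset.range n, K * ((n - 1 - j + T).choose T) * α ^ (n - j) *
          taylorCoeff (majorantFun K α T) j := by
    intro n hn
    obtain ⟨m, rfl⟩ : ∃ m, n = m + 1 := ⟨n - 1, by omega⟩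
    rw [← Finset.sum_range_reflect
      (fun j => K * (((m + 1) - 1 - j + T).choose T : ℝ) * α ^ ((m + 1) - j) *
        taylorCoeff (majorantFun K α T) j) (m + 1)]
    simp only [taylorCoeff]
    rw [hkey m, Finset.sum_div, Finset.mul_sum]
    apply Finset.sum_congr rfl
    intro j hj
    have hjm : j ≤ m := Nat.lt_succ_iff.mp (Finset.mem_range.mp hj)
    have e0 : m + 1 - 1 - j = m - j := by omega
    rw [e0]
    have e2 : m + 1 - 1 - (m - j) + T = j + T := by omega
    have e3 : m + 1 - (m - j) = j + 1 := by omega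
    rw [e2, e3]
    have hP : (∏ i ∈ Finset.range j, ((T:ℝ) + 1 + i)) = ((j+T).choose T : ℝ) * j.factorial := by
      exact_mod_cast prod_choose_aux T j
    have hF : (m.choose j : ℝ) * j.factorial * (m-j).factorial = m.factorial := by
      exact_mod_cast Nat.choose_mul_factorial_mul_factorial hjm
    have hfac : ((m+1).factorial : ℝ) = (m+1) * m.factorial := by
      exact_mod_cast Nat.factorial_succ m
    rw [hP, hfac]
    have hmf : (m.factorial : ℝ) ≠ 0 := Nat.cast_ne_zero.mpr m.factorial_ne_zero
    rw [← hF]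
    have hj1 : (j.factorial : ℝ) ≠ 0 := by positivity
    have hj2 : ((m-j).factorial : ℝ) ≠ 0 := by positivity
    have hc : (m.choose j : ℝ) ≠ 0 := Nat.cast_ne_zero.mpr (Nat.choose_pos hjm).ne'
    push_cast
    field_simp
    ring
  -- nonnegativity
  have hnonneg : ∀ n : ℕ, 0 ≤ taylorCoeff (majorantFun K α T) n := by
    intro n
    induction n using Nat.strong_induction_on with
    | _ n ih =>
      match n with
      | 0 =>
        simp only [taylorCoeff, iteratedDeriv_zero, Nat.factorial_zero, Nat.cast_one, div_one]
        exact (Real.exp_pos _).le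
      | (m+1) =>
        have h := hrec (m+1) (by omega)
        have hsum : 0 ≤ ∑ j ∈ Finset.range (m+1),
            K * (((m+1) - 1 - j + T).choose T : ℝ) * α ^ ((m+1) - j) *
              taylorCoeff (majorantFun K α T) j := by
          apply Finset.sum_nonneg
          intro j hj
          have hij := ih j (Finset.mem_range.mp hj)
          have : (0:ℝ) ≤ K * (((m+1) - 1 - j + T).choose T : ℝ) * α ^ ((m+1) - j) := by
            positivity
          exact mul_nonneg this hij
        rw [← h] at hsum
        have hpos : (0:ℝ) < ((m+1:ℕ) : ℝ) := by positivity
        nlinarith [hsum, hpos]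
  exact ⟨hv_an, fun x hx => (hode x hx).deriv, hnonneg, hrec⟩
end

section
/- Let T ≥ 1 be an integer, K > 0 and α > 0 real numbers. For every n ∈ ℕ, the n-th Taylor coefficient at 0 of the function z ↦ exp((K/T)·(1−αz)^{−T}) (analytic for |z| < 1/α) equals α^n · Σ_{k=0}^{∞} (1/k!) · C(Tk+n−1, n) · (K/T)^k. -/
lemma row_hasSum (T k : ℕ) {y : ℝ} (hy : ‖y‖ < 1) :
    HasSum (fun n : ℕ => ((T * k + n - 1).choose n : ℝ) * y ^ n) (((1 - y) ^ (T * k))⁻¹) := by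
  rcases Nat.eq_zero_or_pos (T * k) with hk | hk
  · rw [hk]
    simp only [pow_zero, inv_one]
    have h0 : ∀ n : ℕ, n ≠ 0 → ((T * k + n - 1).choose n : ℝ) * y ^ n = 0 := by
      intro n hn
      rw [hk, Nat.choose_eq_zero_of_lt (by omega)]
      simp
    have := hasSum_single (f := fun n : ℕ => ((T * k + n - 1).choose n : ℝ) * y ^ n) 0 h0
    simpa [hk] using this
  · obtain ⟨m, hm⟩ : ∃ m, T * k = m + 1 := ⟨T * k - 1, by omega⟩
    have h := hasSum_choose_mul_geometric_of_norm_lt_one (𝕜 := ℝ) m hy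
    rw [hm]
    have hc : ∀ n : ℕ, ((m + 1 + n - 1).choose n : ℝ) = ((n + m).choose m : ℝ) := by
      intro n
      have h1 : m + 1 + n - 1 = n + m := by omega
      rw [h1]
      congr 1
      have := Nat.choose_symm (Nat.le_add_left m n)
      simpa [Nat.add_sub_cancel] using this
    simp only [hc]
    simpa [one_div] using h

lemma main_hasSum (T : ℕ) (hT : 1 ≤ T) (K α : ℝ) (hK : 0 < K) (hα : 0 < α) {x : ℝ}
    (hx : |α * x| < 1) :
    HasSum (fun n : ℕ =>
      (α ^ n * ∑' k : ℕ, (1 / (k.factorial : ℝ)) * ((T * k + n - 1).choose n) * (K / T) ^ k) * x ^ n)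
      (majorantFun K α T x) := by
  have hT0 : (0 : ℝ) < T := by exact_mod_cast hT
  have hKT : 0 < K / T := div_pos hK hT0
  set y : ℝ := α * x with hy
  have hy1 : ‖y‖ < 1 := by simpa [Real.norm_eq_abs] using hx
  set A : ℕ × ℕ → ℝ := fun p =>
    (K / T) ^ p.1 / (p.1.factorial : ℝ) * ((T * p.1 + p.2 - 1).choose p.2 : ℝ) * y ^ p.2 with hA
  -- row sums
  have hrow : ∀ k : ℕ, HasSum (fun n => A (k, n))
      ((K / T) ^ k / (k.factorial : ℝ) * ((1 - y) ^ (T * k))⁻¹) := by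
    intro k
    have := (row_hasSum T k hy1).mul_left ((K / T) ^ k / (k.factorial : ℝ))
    convert this using 2 with n
    · rfl
    simp [hA, mul_assoc]
  -- summability of |A|
  have habs : Summable (fun p : ℕ × ℕ => |A p|) := by
    have hAB : ∀ p : ℕ × ℕ, |A p| =
        (K / T) ^ p.1 / (p.1.factorial : ℝ) * ((T * p.1 + p.2 - 1).choose p.2 : ℝ) * |y| ^ p.2 := by
      intro p
      simp only [hA, abs_mul, abs_pow]
      congr 2
      · rw [abs_of_pos (by positivity)]
      · rw [abs_of_nonneg (by positivity)]
    simp only [hAB]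
    have habs_y : ‖|y|‖ < 1 := by simpa using hy1
    rw [summable_prod_of_nonneg (by intro p; positivity)]
    constructor
    · intro k
      exact (((row_hasSum T k habs_y).mul_left ((K / T) ^ k / (k.factorial : ℝ))).summable).congr
        (by intro n; ring)
    · have hsum : ∀ k : ℕ, ∑' n : ℕ,
          (K / T) ^ k / (k.factorial : ℝ) * ((T * k + n - 1).choose n : ℝ) * |y| ^ n
          = (K / T * ((1 - |y|) ^ T)⁻¹) ^ k / (k.factorial : ℝ) := by
        intro k
        have := ((row_hasSum T k habs_y).mul_left ((K / T) ^ k / (k.factorial : ℝ))).tsum_eq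
        rw [show (fun n : ℕ => (K / T) ^ k / (k.factorial : ℝ) * ((T * k + n - 1).choose n : ℝ)
            * |y| ^ n) = fun n : ℕ => (K / T) ^ k / (k.factorial : ℝ)
            * (((T * k + n - 1).choose n : ℝ) * |y| ^ n) from funext fun n => by ring, this]
        rw [pow_mul, ← inv_pow, mul_pow]
        ring
      simp only [hsum]
      exact Real.summable_pow_div_factorial _
  have hAsum : Summable A := summable_abs_iff.mp habs
  -- total sum equals majorantFun
  have htot : HasSum A (majorantFun K α T x) := by
    have h1 : ∑' p : ℕ × ℕ, A p = ∑' k : ℕ, ∑' n : ℕ, A (k, n) :=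
      Summable.tsum_prod' hAsum fun k => (hrow k).summable
    have h2 : ∑' k : ℕ, ∑' n : ℕ, A (k, n)
        = ∑' k : ℕ, (K / T * ((1 - y) ^ T)⁻¹) ^ k / (k.factorial : ℝ) := by
      refine tsum_congr fun k => ?_
      rw [(hrow k).tsum_eq, pow_mul, ← inv_pow, mul_pow]
      ring
    have h3 : ∑' k : ℕ, (K / T * ((1 - y) ^ T)⁻¹) ^ k / (k.factorial : ℝ)
        = majorantFun K α T x := by
      rw [majorantFun, Real.exp_eq_exp_ℝ, NormedSpace.exp_eq_tsum_div]
    have := hAsum.hasSum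
    rwa [h1, h2, h3] at this
  -- column sums
  have hcol : ∀ n : ℕ, HasSum (fun k => A (k, n))
      ((α ^ n * ∑' k : ℕ, (1 / (k.factorial : ℝ)) * ((T * k + n - 1).choose n) * (K / T) ^ k)
        * x ^ n) := by
    intro n
    have hs : Summable (fun k => A (k, n)) :=
      hAsum.comp_injective (i := fun k : ℕ => (k, n)) (fun a b h => by simpa using h)
    have := hs.hasSum
    have heq : ∑' k : ℕ, A (k, n)
        = (α ^ n * ∑' k : ℕ, (1 / (k.factorial : ℝ)) * ((T * k + n - 1).choose n) * (K / T) ^ k)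
          * x ^ n := by
      have h1 : ∀ k : ℕ, A (k, n) =
          ((1 / (k.factorial : ℝ)) * ((T * k + n - 1).choose n) * (K / T) ^ k) * y ^ n := by
        intro k; simp only [hA]; ring
      simp only [h1]
      rw [tsum_mul_right, hy, mul_pow]
      ring
    rwa [heq] at this
  -- regroup by columns
  have hswap : HasSum (fun p : ℕ × ℕ => A (p.2, p.1)) (majorantFun K α T x) := by
    have := (Equiv.prodComm ℕ ℕ).hasSum_iff (f := A) (a := majorantFun K α T x)
    rw [← this] at htot
    exact htot
  exact hswap.prod_fiberwise hcol

theorem majorant_fun_coeff_formula (T : ℕ) (hT : 1 ≤ T) (K α : ℝ)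
    (hK : 0 < K) (hα : 0 < α) (n : ℕ) :
    taylorCoeff (majorantFun K α T) n =
      α ^ n * ∑' k : ℕ, (1 / (k.factorial : ℝ)) * ((T * k + n - 1).choose n) * (K / T) ^ k := by
  have hT0 : (0 : ℝ) < T := by exact_mod_cast hT
  set c : ℕ → ℝ := fun n =>
    α ^ n * ∑' k : ℕ, (1 / (k.factorial : ℝ)) * ((T * k + n - 1).choose n) * (K / T) ^ k with hc
  set r : NNReal := ⟨(2 * α)⁻¹, by positivity⟩ with hr
  have hrpos : (0 : ℝ) < (2 * α)⁻¹ := by positivity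
  have hcnonneg : ∀ m : ℕ, 0 ≤ c m := by
    intro m
    apply mul_nonneg (by positivity)
    apply tsum_nonneg
    intro k
    positivity
  have hxr : ∀ x : ℝ, |x| < (2 * α)⁻¹ → |α * x| < 1 := by
    intro x hx
    rw [abs_mul, abs_of_pos hα]
    calc α * |x| < α * (2 * α)⁻¹ := by exact mul_lt_mul_of_pos_left hx hα
      _ = 2⁻¹ := by field_simp
      _ < 1 := by norm_num
  have hball : HasFPowerSeriesOnBall (majorantFun K α T)
      (FormalMultilinearSeries.ofScalars ℝ c) 0 r := by
    constructor
    · apply FormalMultilinearSeries.le_radius_of_summable_norm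
      have : ∀ m : ℕ, ‖FormalMultilinearSeries.ofScalars ℝ c m‖ * (r : ℝ) ^ m
          = c m * ((2 * α)⁻¹) ^ m := by
        intro m
        rw [FormalMultilinearSeries.ofScalars_norm, Real.norm_eq_abs, abs_of_nonneg (hcnonneg m)]
        rfl
      simp only [this]
      have h12 : |α * (2 * α)⁻¹| < 1 := by
        rw [abs_of_pos (by positivity)]
        rw [show α * (2 * α)⁻¹ = 2⁻¹ by field_simp]
        norm_num
      exact (main_hasSum T hT K α hK hα h12).summable
    · exact_mod_cast hrpos
    · intro x hx
      rw [EMetric.mem_ball, edist_zero_right] at hx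
      have hx' : |x| < (2 * α)⁻¹ := by
        have : ‖x‖₊ < r := by exact_mod_cast hx
        exact_mod_cast this
      have := main_hasSum T hT K α hK hα (hxr x hx')
      rw [zero_add]
      convert this using 2 with m
      · rfl
      rw [FormalMultilinearSeries.ofScalars_apply_eq]
      simp [hc, smul_eq_mul]
  have hfact := hball.factorial_smul 1 n
  rw [FormalMultilinearSeries.ofScalars_apply_eq] at hfact
  simp only [one_pow, smul_eq_mul, mul_one] at hfact
  rw [taylorCoeff, iteratedDeriv, ← hfact]
  rw [nsmul_eq_mul, mul_div_cancel_left₀ _ (Nat.cast_ne_zero.mpr n.factorial_ne_zero)]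
end

section
/- Let T ≥ 1 and K ≥ 1 be integers and α > 0 a real number, and for n ∈ ℕ let ṽ_n denote the n-th Taylor coefficient at 0 of z ↦ exp((K/T)·(1−αz)^{−T}). Then for all n ∈ ℕ with n ≥ 1: ṽ_n ≤ α^n · (1 − (K/(n+K+1))^{1/(T+1)})^{−n} · exp((K/T) · ((n+K+1)/K)^{T/(T+1)}). -/
open Set

/-- Basic building blocks for iterated derivatives of the majorant function. -/
noncomputable def expTerm (c α : ℝ) (T m : ℕ) : ℝ → ℝ :=
  fun x => Real.exp (c * (1 - α * x)⁻¹ ^ T) * (1 - α * x)⁻¹ ^ m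

/-- Nonnegative combinations of the building blocks. -/
inductive GoodFun (c α : ℝ) (T : ℕ) : (ℝ → ℝ) → Prop
  | base (m : ℕ) : GoodFun c α T (expTerm c α T m)
  | smul (a : ℝ) (ha : 0 ≤ a) {g : ℝ → ℝ} (hg : GoodFun c α T g) :
      GoodFun c α T (fun x => a * g x)
  | add {g h : ℝ → ℝ} (hg : GoodFun c α T g) (hh : GoodFun c α T h) :
      GoodFun c α T (fun x => g x + h x)

lemma GoodFun.nonneg {c α : ℝ} {T : ℕ} {g : ℝ → ℝ} (hg : GoodFun c α T g)
    {x : ℝ} (hx : 0 < 1 - α * x) : 0 ≤ g x := by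
  induction hg with
  | base m => exact mul_nonneg (Real.exp_nonneg _) (pow_nonneg (inv_nonneg.2 hx.le) m)
  | smul a ha hg ih => exact mul_nonneg ha ih
  | add hg hh ihg ihh => exact add_nonneg ihg ihh

lemma expTerm_hasDerivAt {c α : ℝ} {T : ℕ} (hT : 1 ≤ T) (m : ℕ) {x : ℝ}
    (hx : (1 : ℝ) - α * x ≠ 0) :
    HasDerivAt (expTerm c α T m)
      (c * T * α * expTerm c α T (T + m + 1) x + m * α * expTerm c α T (m + 1) x) x := by
  obtain ⟨T', rfl⟩ : ∃ T', T = T' + 1 := ⟨T - 1, (Nat.succ_pred_eq_of_pos hT).symm⟩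
  have h1 : HasDerivAt (fun x : ℝ => 1 - α * x) (-α) x := by
    simpa using ((hasDerivAt_id x).const_mul α).const_sub 1
  have h2 : HasDerivAt (fun x : ℝ => (1 - α * x)⁻¹) (α * ((1 - α * x)⁻¹) ^ 2) x := by
    have := h1.inv hx
    refine this.congr_deriv (Eq.symm ?_)
    field_simp
  have h4 : HasDerivAt (fun x : ℝ => Real.exp (c * (1 - α * x)⁻¹ ^ (T' + 1)))
      (Real.exp (c * (1 - α * x)⁻¹ ^ (T' + 1)) *
        (c * ((T' + 1 : ℕ) * ((1 - α * x)⁻¹) ^ (T' + 1 - 1) * (α * ((1 - α * x)⁻¹) ^ 2)))) x :=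
    ((h2.pow (T' + 1)).const_mul c).exp
  have h5 : HasDerivAt (fun x : ℝ => (1 - α * x)⁻¹ ^ m)
      ((m : ℝ) * ((1 - α * x)⁻¹) ^ (m - 1) * (α * ((1 - α * x)⁻¹) ^ 2)) x := h2.pow m
  have h6 := h4.mul h5
  refine h6.congr_deriv (Eq.symm ?_)
  simp only [expTerm, Nat.add_sub_cancel, Nat.cast_add, Nat.cast_one]
  rcases m with _ | m'
  · simp only [Nat.cast_zero, zero_mul, mul_zero, pow_zero, mul_one, add_zero]
    ring
  · simp only [Nat.add_sub_cancel, Nat.cast_add, Nat.cast_one]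
    ring

lemma GoodFun.exists_hasDerivAt {c α : ℝ} {T : ℕ} (hT : 1 ≤ T) (hc : 0 ≤ c) (hα : 0 ≤ α)
    {g : ℝ → ℝ} (hg : GoodFun c α T g) :
    ∃ g', GoodFun c α T g' ∧ ∀ x : ℝ, (1 : ℝ) - α * x ≠ 0 → HasDerivAt g (g' x) x := by
  induction hg with
  | base m =>
    exact ⟨fun x => c * T * α * expTerm c α T (T + m + 1) x + m * α * expTerm c α T (m + 1) x,
      GoodFun.add (GoodFun.smul _ (by positivity) (GoodFun.base _))
        (GoodFun.smul _ (by positivity) (GoodFun.base _)),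
      fun x hx => expTerm_hasDerivAt hT m hx⟩
  | smul a ha hg ih =>
    obtain ⟨g', h1, h2⟩ := ih
    exact ⟨fun x => a * g' x, GoodFun.smul a ha h1, fun x hx => (h2 x hx).const_mul a⟩
  | add hg hh ihg ihh =>
    obtain ⟨g', h1, h2⟩ := ihg
    obtain ⟨h', h3, h4⟩ := ihh
    exact ⟨fun x => g' x + h' x, GoodFun.add h1 h3, fun x hx => (h2 x hx).add (h4 x hx)⟩

lemma iteratedDeriv_majorant_rep (T K : ℕ) (hT : 1 ≤ T) {α : ℝ} (hα : 0 < α) (k : ℕ) :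
    ∃ g, GoodFun ((K : ℝ) / T) α T g ∧
      ∀ x : ℝ, α * x < 1 → iteratedDeriv k (majorantFun K α T) x = g x := by
  induction k with
  | zero =>
    refine ⟨expTerm ((K : ℝ) / T) α T 0, GoodFun.base 0, fun x hx => ?_⟩
    simp [majorantFun, expTerm, inv_pow]
  | succ k ih =>
    obtain ⟨g, hg, hrep⟩ := ih
    obtain ⟨g', hg', hd⟩ := hg.exists_hasDerivAt hT (by positivity) hα.le
    refine ⟨g', hg', fun x hx => ?_⟩
    have hU : IsOpen {y : ℝ | α * y < 1} := isOpen_lt (by fun_prop) continuous_const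
    have hev : iteratedDeriv k (majorantFun K α T) =ᶠ[nhds x] g :=
      Filter.eventuallyEq_of_mem (hU.mem_nhds hx) hrep
    rw [iteratedDeriv_succ, hev.deriv_eq]
    exact (hd x (by linarith)).deriv

theorem majorant_fun_coeff_saddle_point_bound (T K : ℕ) (hT : 1 ≤ T) (hK : 1 ≤ K)
    (α : ℝ) (hα : 0 < α) (n : ℕ) (hn : 1 ≤ n) :
    taylorCoeff (majorantFun K α T) n ≤
      α ^ n * ((1 - ((K : ℝ) / ((n : ℝ) + K + 1)) ^ ((1 : ℝ) / (T + 1)))⁻¹) ^ n *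
        Real.exp ((K : ℝ) / T * (((n : ℝ) + K + 1) / K) ^ ((T : ℝ) / (T + 1))) := by
  set f := majorantFun K α T with hf_def
  set N : ℝ := (n : ℝ) + K + 1 with hN_def
  have hK0 : (0 : ℝ) < K := by exact_mod_cast hK
  have hN0 : (0 : ℝ) < N := by positivity
  have hKN : (K : ℝ) < N := by
    have : (1 : ℝ) ≤ n := by exact_mod_cast hn
    simp only [hN_def]; linarith
  set q : ℝ := (K : ℝ) / N with hq_def
  have hq0 : 0 < q := div_pos hK0 hN0
  have hq1 : q < 1 := (div_lt_one hN0).2 hKN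
  set β : ℝ := q ^ ((1 : ℝ) / (T + 1)) with hβ_def
  have hβ0 : 0 < β := Real.rpow_pos_of_pos hq0 _
  have hβ1 : β < 1 := Real.rpow_lt_one hq0.le hq1 (by positivity)
  set r : ℝ := (1 - β) / α with hr_def
  have hr0 : 0 < r := div_pos (by linarith) hα
  have har : α * r = 1 - β := by
    rw [hr_def, mul_div_cancel₀ _ hα.ne']
  have h1r : 1 - α * r = β := by rw [har]; ring
  -- membership conditions
  have hIccU : ∀ x ∈ Icc (0 : ℝ) r, α * x < 1 := by
    intro x hx
    have : α * x ≤ α * r := by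
      exact mul_le_mul_of_nonneg_left hx.2 hα.le
    rw [har] at this; linarith
  -- basic facts about iterated derivatives
  have hB : ∀ (k : ℕ) (x : ℝ), α * x < 1 →
      HasDerivAt (iteratedDeriv k f) (iteratedDeriv (k + 1) f x) x := by
    intro k x hx
    obtain ⟨g, hg, hrep⟩ := iteratedDeriv_majorant_rep T K hT hα k
    obtain ⟨g', hg', hd⟩ := hg.exists_hasDerivAt hT (by positivity) hα.le
    have hU : IsOpen {y : ℝ | α * y < 1} := isOpen_lt (by fun_prop) continuous_const
    have hev : iteratedDeriv k f =ᶠ[nhds x] g :=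
      Filter.eventuallyEq_of_mem (hU.mem_nhds hx) hrep
    have hval : iteratedDeriv (k + 1) f x = g' x := by
      rw [iteratedDeriv_succ, hev.deriv_eq]
      exact (hd x (by linarith)).deriv
    rw [hval]
    exact (hd x (by linarith)).congr_of_eventuallyEq hev
  have hNN : ∀ (k : ℕ) (x : ℝ), α * x < 1 → 0 ≤ iteratedDeriv k f x := by
    intro k x hx
    obtain ⟨g, hg, hrep⟩ := iteratedDeriv_majorant_rep T K hT hα k
    rw [hrep x hx]
    exact hg.nonneg (by linarith)
  -- within-derivatives on `Icc 0 r` coincide with global ones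
  have hUD : UniqueDiffOn ℝ (Icc (0 : ℝ) r) := uniqueDiffOn_Icc hr0
  have hW : ∀ k : ℕ, EqOn (iteratedDerivWithin k f (Icc 0 r)) (iteratedDeriv k f) (Icc 0 r) := by
    intro k
    induction k with
    | zero => intro x _; simp [iteratedDerivWithin_zero, iteratedDeriv_zero]
    | succ k ih =>
      intro x hx
      rw [iteratedDerivWithin_succ, iteratedDeriv_succ]
      rw [derivWithin_congr ih (ih hx)]
      rw [((hB k x (hIccU x hx)).hasDerivWithinAt).derivWithin (hUD x hx)]
      exact ((hB k x (hIccU x hx)).deriv).symm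
  -- smoothness
  have hsm : ∀ x : ℝ, α * x < 1 → ContDiffAt ℝ (⊤ : ℕ∞) f x := by
    intro x hx
    have h0 : (1 : ℝ) - α * x ≠ 0 := by linarith
    have hpoly : ContDiffAt ℝ (⊤ : ℕ∞) (fun x : ℝ => (1 - α * x) ^ T) x :=
      ((contDiff_const.sub (contDiff_const.mul contDiff_id)).pow T).contDiffAt
    have hinv : ContDiffAt ℝ (⊤ : ℕ∞) (fun x : ℝ => ((1 - α * x) ^ T)⁻¹) x :=
      hpoly.inv (pow_ne_zero _ h0)
    exact Real.contDiff_exp.contDiffAt.comp x (hinv.const_smul ((K : ℝ) / T))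
  -- Taylor's theorem
  obtain ⟨m, rfl⟩ : ∃ m, n = m + 1 := ⟨n - 1, (Nat.succ_pred_eq_of_pos hn).symm⟩
  have hf : ContDiffOn ℝ m f (Icc 0 r) := fun x hx =>
    ((hsm x (hIccU x hx)).of_le (mod_cast le_top)).contDiffWithinAt
  have hf' : DifferentiableOn ℝ (iteratedDerivWithin m f (Icc 0 r)) (Ioo 0 r) := by
    intro x hx
    have hx' : x ∈ Icc (0 : ℝ) r := Ioo_subset_Icc_self hx
    exact ((hB m x (hIccU x hx')).differentiableAt.differentiableWithinAt).congr
      (fun y hy => hW m (Ioo_subset_Icc_self hy)) (hW m hx')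
  obtain ⟨ξ, hξ, hTay⟩ := taylor_mean_remainder_lagrange (x₀ := 0) (x := r) hr0.ne
    (by rwa [uIcc_of_le hr0.le]) (by rwa [uIcc_of_le hr0.le, uIoo_of_le hr0.le])
  rw [uIcc_of_le hr0.le] at hTay
  rw [uIoo_of_le hr0.le] at hξ
  rw [taylor_within_apply] at hTay
  have hξI : ξ ∈ Icc (0 : ℝ) r := Ioo_subset_Icc_self hξ
  have h0I : (0 : ℝ) ∈ Icc (0 : ℝ) r := left_mem_Icc.mpr hr0.le
  -- the Taylor polynomial is nonnegative
  have hP : 0 ≤ ∑ k ∈ Finset.range (m + 1),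
      (((k.factorial : ℝ))⁻¹ * (r - 0) ^ k) • iteratedDerivWithin k f (Icc 0 r) 0 := by
    apply Finset.sum_nonneg
    intro k _
    rw [hW k h0I, sub_zero]
    have h1 : (0:ℝ) ≤ ((k.factorial : ℝ))⁻¹ * r ^ k := by positivity
    exact smul_nonneg h1 (hNN k 0 (by simp))
  -- monotonicity of the (m+1)-st derivative
  have hmono : MonotoneOn (iteratedDeriv (m + 1) f) (Icc 0 r) := by
    apply monotoneOn_of_deriv_nonneg (convex_Icc 0 r)
    · intro x hx
      exact ((hB (m + 1) x (hIccU x hx)).continuousAt).continuousWithinAt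
    · intro x hx
      rw [interior_Icc] at hx
      exact ((hB (m + 1) x (hIccU x (Ioo_subset_Icc_self hx))).differentiableAt).differentiableWithinAt
    · intro x hx
      rw [interior_Icc] at hx
      have h := hB (m + 1) x (hIccU x (Ioo_subset_Icc_self hx))
      rw [h.deriv]
      exact hNN (m + 2) x (hIccU x (Ioo_subset_Icc_self hx))
  have hmono0 : iteratedDeriv (m + 1) f 0 ≤ iteratedDeriv (m + 1) f ξ :=
    hmono h0I hξI hξ.1.le
  -- key inequality : coeff * r^n ≤ f r
  have hkey : iteratedDeriv (m + 1) f 0 * r ^ (m + 1) / ((m + 1).factorial : ℝ) ≤ f r := by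
    have hrem : f r = (∑ k ∈ Finset.range (m + 1),
        (((k.factorial : ℝ))⁻¹ * (r - 0) ^ k) • iteratedDerivWithin k f (Icc 0 r) 0)
        + iteratedDerivWithin (m + 1) f (Icc 0 r) ξ * (r - 0) ^ (m + 1)
          / ((m + 1).factorial : ℝ) := by
      rw [← hTay]; ring
    rw [hrem, hW (m + 1) hξI]
    have h1 : iteratedDeriv (m + 1) f 0 * r ^ (m + 1) / ((m + 1).factorial : ℝ) ≤
        iteratedDeriv (m + 1) f ξ * (r - 0) ^ (m + 1) / ((m + 1).factorial : ℝ) := by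
      rw [sub_zero]
      apply div_le_div_of_nonneg_right ?_ ?_ |>.trans_eq rfl
      · exact mul_le_mul_of_nonneg_right hmono0 (by positivity)
      · positivity
    linarith
  -- compute f r
  have hfr : f r = Real.exp ((K : ℝ) / T * (N / K) ^ ((T : ℝ) / (T + 1))) := by
    have hβT : ((β : ℝ) ^ T)⁻¹ = (N / K) ^ ((T : ℝ) / (T + 1)) := by
      have h1 : (β : ℝ) ^ T = q ^ ((T : ℝ) / (T + 1)) := by
        rw [hβ_def, ← Real.rpow_natCast (q ^ ((1 : ℝ) / (T + 1))) T, ← Real.rpow_mul hq0.le]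
        congr 1
        field_simp
      rw [h1, ← Real.inv_rpow hq0.le, hq_def, inv_div]
    rw [hf_def, majorantFun, h1r, hβT]
  -- final arithmetic
  have hrinv : α ^ (m + 1) * ((1 - β)⁻¹) ^ (m + 1) = (r ^ (m + 1))⁻¹ := by
    rw [← mul_pow, ← inv_pow]
    congr 1
    rw [hr_def, inv_div]
    field_simp
  have hgoal : taylorCoeff f (m + 1) ≤ (r ^ (m + 1))⁻¹ * f r := by
    rw [inv_mul_eq_div, le_div_iff₀ (by positivity)]
    calc taylorCoeff f (m + 1) * r ^ (m + 1)
        = iteratedDeriv (m + 1) f 0 * r ^ (m + 1) / ((m + 1).factorial : ℝ) := by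
          rw [taylorCoeff]; ring
      _ ≤ f r := hkey
  calc taylorCoeff f (m + 1) ≤ (r ^ (m + 1))⁻¹ * f r := hgoal
    _ = α ^ (m + 1) * ((1 - β)⁻¹) ^ (m + 1) *
        Real.exp ((K : ℝ) / T * (N / K) ^ ((T : ℝ) / (T + 1))) := by
        rw [hrinv, hfr]
    _ = _ := by ring_nf
end

section
/- Let q ≥ 1 be an integer and n an integer with n ≥ 3q/2. Then (2π)^{(q−1)/2} · q^{1/2} / n ≤ q^n · Γ(n/q+1)^q / n! ≤ (2π)^{(q−1)/2} · q^{1/2−q} · (n+1)^{rising(q−1)}. -/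
open Real Finset Set


lemma abs_one_sub_exp (θ : ℝ) :
    ‖1 - Complex.exp (θ * Complex.I)‖ = 2 * |Real.sin (θ / 2)| := by
  have h : (1 : ℂ) - Complex.exp (θ * Complex.I)
      = Complex.ofReal (1 - Real.cos θ) + Complex.ofReal (- Real.sin θ) * Complex.I := by
    rw [Complex.exp_mul_I]
    push_cast
    ring
  rw [h, Complex.norm_def, Complex.normSq_add_mul_I, ← Real.sqrt_sq_eq_abs]
  rw [show (1 - Real.cos θ)^2 + (-Real.sin θ)^2 = (2:ℝ)^2 * Real.sin (θ/2)^2 by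
    have h1 := Real.sin_sq_add_cos_sq (θ/2)
    have h2 : Real.cos θ = Real.cos (θ/2)^2 - Real.sin (θ/2)^2 := by
      rw [← Real.cos_two_mul']; ring_nf
    have h3 : Real.sin θ = 2 * Real.sin (θ/2) * Real.cos (θ/2) := by
      rw [← Real.sin_two_mul]; ring_nf
    rw [h2, h3]; nlinarith [h1]]
  rw [Real.sqrt_mul (by positivity), Real.sqrt_sq (by norm_num)]

set_option maxHeartbeats 1000000 in
lemma sin_prod (m : ℕ) :
    ∏ k ∈ Finset.range m, (2 * Real.sin (Real.pi * (k+1) / (m+1))) = m + 1 := by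
  have hm : (m+1 : ℕ) ≠ 0 := Nat.succ_ne_zero m
  have hμ := Complex.isPrimitiveRoot_exp (m+1) hm
  have hprod := hμ.prod_one_sub_pow_eq_order
  have habs := congrArg (‖·‖) hprod
  rw [norm_prod] at habs
  have hterm : ∀ k ∈ Finset.range m,
      ‖1 - Complex.exp (2 * Real.pi * Complex.I / (↑(m+1))) ^ (k+1)‖
        = 2 * Real.sin (Real.pi * (k+1) / (m+1)) := by
    intro k hk
    have hμk : Complex.exp (2 * Real.pi * Complex.I / (↑(m+1))) ^ (k+1)
        = Complex.exp ((2 * Real.pi * (k+1) / (m+1) : ℝ) * Complex.I) := by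
      rw [← Complex.exp_nat_mul]
      congr 1
      push_cast
      ring
    rw [hμk, abs_one_sub_exp]
    have hk' : (k:ℝ) + 1 ≤ m := by exact_mod_cast Finset.mem_range.mp hk
    have harg : 2 * Real.pi * (k+1) / (m+1) / 2 = Real.pi * (k+1) / (m+1) := by ring
    rw [harg, abs_of_nonneg]
    apply Real.sin_nonneg_of_nonneg_of_le_pi
    · positivity
    · rw [div_le_iff₀ (by positivity)]
      nlinarith [Real.pi_pos]
  rw [Finset.prod_congr rfl hterm] at habs
  rwa [show ((m:ℂ)+1) = ((m+1 : ℝ) : ℂ) by push_cast; ring, Complex.norm_real, Real.norm_eq_abs,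
    abs_of_nonneg (by positivity)] at habs


noncomputable def Gq (q : ℕ) : ℝ := ∏ k ∈ Finset.range q, Real.Gamma ((k+1) / q)

lemma Gq_pos {q : ℕ} (hq : 1 ≤ q) : 0 < Gq q := by
  apply Finset.prod_pos
  intro k hk
  apply Real.Gamma_pos_of_pos
  have : (0:ℝ) < q := by positivity
  positivity

lemma Gq_sq {q : ℕ} (hq : 1 ≤ q) : Gq q ^ 2 = (2 * Real.pi) ^ (q - 1) / q := by
  obtain ⟨m, rfl⟩ : ∃ m, q = m + 1 := ⟨q - 1, (Nat.succ_pred_eq_of_pos hq).symm⟩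
  have hq0 : ((m:ℝ) + 1) ≠ 0 := by positivity
  -- drop the last factor Γ(1) = 1
  have hGq : Gq (m+1) = ∏ k ∈ Finset.range m, Real.Gamma ((k+1) / (m+1)) := by
    rw [Gq, Finset.prod_range_succ, show ((m:ℕ)+1 : ℝ)/((m+1:ℕ):ℝ) = 1 by push_cast; field_simp,
      Real.Gamma_one, mul_one]
    apply Finset.prod_congr rfl
    intro k hk
    push_cast
    ring_nf
  -- reflect
  have hrefl : Gq (m+1) = ∏ k ∈ Finset.range m, Real.Gamma (1 - (k+1) / (m+1)) := by
    rw [hGq, ← Finset.prod_range_reflect]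
    apply Finset.prod_congr rfl
    intro k hk
    congr 1
    have hk' : k < m := Finset.mem_range.mp hk
    have : (↑(m - 1 - k) : ℝ) = m - 1 - k := by
      rw [Nat.sub_sub, Nat.cast_sub (by omega : 1 + k ≤ m)]
      push_cast; ring
    rw [this]
    field_simp
    ring
  have key : Gq (m+1) ^ 2 = ∏ k ∈ Finset.range m, (Real.pi / Real.sin (Real.pi * ((k+1)/(m+1)))) := by
    rw [sq]
    nth_rewrite 1 [hGq]
    nth_rewrite 1 [hrefl]
    rw [← Finset.prod_mul_distrib]
    apply Finset.prod_congr rfl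
    intro k hk
    rw [Real.Gamma_mul_Gamma_one_sub]
  rw [key]
  have hsin := sin_prod m
  have hsinpos : ∀ k ∈ Finset.range m, 0 < Real.sin (Real.pi * ((k+1)/(m+1))) := by
    intro k hk
    apply Real.sin_pos_of_pos_of_lt_pi
    · have : (0:ℝ) < Real.pi := Real.pi_pos
      positivity
    · have hk' : (k:ℝ) + 1 < m + 1 := by
        have h := Nat.succ_lt_succ (Finset.mem_range.mp hk)
        exact_mod_cast h
      calc Real.pi * ((k+1)/(m+1)) < Real.pi * 1 := by
            apply mul_lt_mul_of_pos_left _ Real.pi_pos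
            rw [div_lt_one (by positivity)]; exact hk'
        _ = Real.pi := mul_one _
  -- ∏ (π / sin) = π^m / ∏ sin = π^m * 2^m / (m+1)
  have hprodsin : ∏ k ∈ Finset.range m, Real.sin (Real.pi * ((k+1)/(m+1))) = (m+1) / 2^m := by
    have h2 : ∏ k ∈ Finset.range m, (2 * Real.sin (Real.pi * ((k+1)/(m+1)))) = m + 1 := by
      rw [Finset.prod_congr rfl (fun k _ => by rw [← mul_div_assoc] :
        ∀ k ∈ Finset.range m, 2 * Real.sin (Real.pi * ((k+1)/(m+1)))
          = 2 * Real.sin (Real.pi * (k+1) / (m+1)))]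
      exact hsin
    rw [Finset.prod_mul_distrib, Finset.prod_const, Finset.card_range] at h2
    field_simp at h2 ⊢
    linarith
  rw [Finset.prod_div_distrib, Finset.prod_const, Finset.card_range, hprodsin]
  push_cast [Nat.add_sub_cancel]
  rw [mul_pow]
  field_simp


lemma Gq_eq {q : ℕ} (hq : 1 ≤ q) :
    Gq q = (2 * Real.pi) ^ (((q:ℝ) - 1) / 2) * (q:ℝ) ^ (-(1:ℝ)/2) := by
  have h2pi : (0:ℝ) < 2 * Real.pi := by positivity
  have hqpos : (0:ℝ) < q := by exact_mod_cast hq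
  have hsq := Gq_sq hq
  have hrpow : ((2 * Real.pi) ^ (q - 1 : ℕ) : ℝ) = (2 * Real.pi) ^ ((q:ℝ) - 1) := by
    rw [← Real.rpow_natCast (2 * Real.pi) (q - 1), Nat.cast_sub hq, Nat.cast_one]
  have hpos : (0:ℝ) < (2 * Real.pi) ^ (((q:ℝ) - 1) / 2) * (q:ℝ) ^ (-(1:ℝ)/2) := by
    positivity
  have hGpos := Gq_pos hq
  have : Gq q ^ 2 = ((2 * Real.pi) ^ (((q:ℝ) - 1) / 2) * (q:ℝ) ^ (-(1:ℝ)/2)) ^ 2 := by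
    rw [hsq, hrpow, mul_pow, ← Real.rpow_natCast ((2*Real.pi) ^ (((q:ℝ)-1)/2)) 2,
      ← Real.rpow_natCast ((q:ℝ) ^ (-(1:ℝ)/2)) 2, ← Real.rpow_mul h2pi.le,
      ← Real.rpow_mul hqpos.le]
    norm_num
    rw [Real.rpow_neg_one]
    rfl
  nlinarith [hGpos, hpos]

/-- Auxiliary function for the Gauss multiplication formula. -/
noncomputable def multG (q : ℕ) (s : ℝ) : ℝ :=
  (q:ℝ) ^ (s - 1) * (∏ k ∈ Finset.range q, Real.Gamma ((s + k) / q)) / Gq q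

lemma multG_prod_shift {q : ℕ} (hq : 1 ≤ q) {s : ℝ} (hs : 0 < s) :
    ∏ k ∈ Finset.range q, Real.Gamma ((s + 1 + k) / q)
      = (s / q) * ∏ k ∈ Finset.range q, Real.Gamma ((s + k) / q) := by
  have hqpos : (0:ℝ) < q := by exact_mod_cast hq
  have h1 : ∀ k : ℕ, (s + 1 + (k:ℝ)) / q = (s + ((k:ℝ)+1)) / q := by intro k; ring_nf
  have h2 : ∏ k ∈ Finset.range q, Real.Gamma ((s + 1 + k) / q)
      = ∏ k ∈ Finset.range q, Real.Gamma ((s + ((k:ℝ)+1)) / q) := by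
    apply Finset.prod_congr rfl; intro k _; rw [h1]
  rw [h2]
  set f : ℕ → ℝ := fun k => Real.Gamma ((s + (k:ℝ)) / q) with hf
  have h3 : (∏ k ∈ Finset.range q, Real.Gamma ((s + ((k:ℝ)+1)) / q)) * Real.Gamma (s / q)
      = (∏ k ∈ Finset.range q, f k) * f q := by
    calc (∏ k ∈ Finset.range q, Real.Gamma ((s + ((k:ℝ)+1)) / q)) * Real.Gamma (s / q)
        = (∏ k ∈ Finset.range q, f (k+1)) * f 0 := by
          congr 1
          · apply Finset.prod_congr rfl; intro k _; simp only [hf]; congr 1; push_cast; ring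
          · simp only [hf]; congr 1; push_cast; ring
      _ = ∏ k ∈ Finset.range (q+1), f k := (Finset.prod_range_succ' f q).symm
      _ = (∏ k ∈ Finset.range q, f k) * f q := Finset.prod_range_succ f q
  have h4 : f q = (s / q) * Real.Gamma (s / q) := by
    simp only [hf]
    rw [show (s + (q:ℝ)) / q = s / q + 1 by field_simp, Real.Gamma_add_one (by positivity)]
  have h5 : Real.Gamma (s / q) ≠ 0 := (Real.Gamma_pos_of_pos (by positivity)).ne'
  have h6 : (∏ k ∈ Finset.range q, Real.Gamma ((s + ((k:ℝ)+1)) / q)) * Real.Gamma (s / q)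
      = ((s / q) * ∏ k ∈ Finset.range q, Real.Gamma ((s + (k:ℝ)) / q)) * Real.Gamma (s / q) := by
    rw [h3, h4]; ring
  exact mul_right_cancel₀ h5 h6

lemma multG_pos {q : ℕ} (hq : 1 ≤ q) {s : ℝ} (hs : 0 < s) : 0 < multG q s := by
  have hqpos : (0:ℝ) < q := by exact_mod_cast hq
  have h1 : 0 < (∏ k ∈ Finset.range q, Real.Gamma ((s + k) / q)) := by
    apply Finset.prod_pos; intro k _
    exact Real.Gamma_pos_of_pos (by positivity)
  exact div_pos (mul_pos (Real.rpow_pos_of_pos hqpos _) h1) (Gq_pos hq)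

lemma multG_add_one {q : ℕ} (hq : 1 ≤ q) {s : ℝ} (hs : 0 < s) :
    multG q (s + 1) = s * multG q s := by
  have hqpos : (0:ℝ) < q := by exact_mod_cast hq
  rw [multG, multG, multG_prod_shift hq hs]
  generalize (∏ k ∈ Finset.range q, Real.Gamma ((s + k) / q)) = P
  rw [show s + 1 - 1 = s - 1 + 1 by ring, Real.rpow_add hqpos, Real.rpow_one]
  have hq0 : (q:ℝ) ≠ 0 := hqpos.ne'
  rw [show s - 1 = -1 + s by ring]
  field_simp

lemma multG_one {q : ℕ} (hq : 1 ≤ q) : multG q 1 = 1 := by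
  have hqpos : (0:ℝ) < q := by exact_mod_cast hq
  rw [multG, sub_self, Real.rpow_zero, one_mul]
  rw [show (∏ k ∈ Finset.range q, Real.Gamma ((1 + (k:ℝ)) / q)) = Gq q by
    rw [Gq]; apply Finset.prod_congr rfl; intro k _; congr 1; ring]
  exact div_self (Gq_pos hq).ne'

lemma log_multG_eq {q : ℕ} (hq : 1 ≤ q) :
    Set.EqOn (Real.log ∘ multG q)
      (fun s => (∑ k ∈ Finset.range q, Real.log (Real.Gamma ((s + k) / q)))
        + s * Real.log q + (-Real.log q - Real.log (Gq q))) (Set.Ioi 0) := by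
  intro s hs
  have hs' : (0:ℝ) < s := hs
  have hqpos : (0:ℝ) < q := by exact_mod_cast hq
  have hterm : ∀ k ∈ Finset.range q, Real.Gamma ((s + k) / q) ≠ 0 := fun k _ =>
    (Real.Gamma_pos_of_pos (by positivity)).ne'
  have hprodpos : 0 < (∏ k ∈ Finset.range q, Real.Gamma ((s + k) / q)) := by
    apply Finset.prod_pos; intro k _
    exact Real.Gamma_pos_of_pos (by positivity)
  simp only [Function.comp_apply, multG]
  rw [Real.log_div (by positivity) (Gq_pos hq).ne', Real.log_mul
    (Real.rpow_pos_of_pos hqpos _).ne' hprodpos.ne', Real.log_rpow hqpos,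
    Real.log_prod hterm]
  ring

lemma multG_logConvex {q : ℕ} (hq : 1 ≤ q) :
    ConvexOn ℝ (Set.Ioi (0:ℝ)) (Real.log ∘ multG q) := by
  have hqpos : (0:ℝ) < q := by exact_mod_cast hq
  apply ConvexOn.congr _ (log_multG_eq hq).symm
  apply ConvexOn.add_const
  apply ConvexOn.add
  · constructor
    · exact convex_Ioi 0
    · intro x hx y hy a b ha hb hab
      simp only [smul_eq_mul]
      calc ∑ k ∈ Finset.range q, Real.log (Real.Gamma ((a * x + b * y + k) / q))
          ≤ ∑ k ∈ Finset.range q,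
              (a * Real.log (Real.Gamma ((x + k) / q)) + b * Real.log (Real.Gamma ((y + k) / q))) := by
            apply Finset.sum_le_sum
            intro k _
            have hxk : ((x:ℝ) + k) / q ∈ Set.Ioi (0:ℝ) := by
              have : (0:ℝ) < x := hx; exact Set.mem_Ioi.mpr (by positivity)
            have hyk : ((y:ℝ) + k) / q ∈ Set.Ioi (0:ℝ) := by
              have : (0:ℝ) < y := hy; exact Set.mem_Ioi.mpr (by positivity)
            have harg : (a * x + b * y + k) / q = a • ((x + k) / q) + b • ((y + k) / q) := by
              simp only [smul_eq_mul]
              field_simp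
              nlinarith [hab]
            have := Real.convexOn_log_Gamma.2 hxk hyk ha hb hab
            simp only [Function.comp_apply, smul_eq_mul] at this
            rw [harg]
            simpa using this
        _ = a * ∑ k ∈ Finset.range q, Real.log (Real.Gamma ((x + k) / q))
            + b * ∑ k ∈ Finset.range q, Real.log (Real.Gamma ((y + k) / q)) := by
            rw [Finset.sum_add_distrib, Finset.mul_sum, Finset.mul_sum]
  · have hlog : 0 ≤ Real.log q := Real.log_nonneg (by exact_mod_cast hq)
    simpa only [smul_eq_mul, id_eq, mul_comm _ (Real.log (q:ℝ))] using
      (convexOn_id (convex_Ioi (0:ℝ))).smul hlog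

theorem gauss_prod {q : ℕ} (hq : 1 ≤ q) {s : ℝ} (hs : 0 < s) :
    ∏ k ∈ Finset.range q, Real.Gamma ((s + k) / q)
      = Gq q * (q:ℝ) ^ ((1:ℝ) - s) * Real.Gamma s := by
  have hqpos : (0:ℝ) < q := by exact_mod_cast hq
  have heq : multG q s = Real.Gamma s :=
    Real.eq_Gamma_of_log_convex (multG_logConvex hq)
      (fun {y} hy => multG_add_one hq hy) (fun {y} hy => multG_pos hq hy) (multG_one hq) hs
  have : (q:ℝ) ^ (s - 1) ≠ 0 := (Real.rpow_pos_of_pos hqpos _).ne'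
  rw [multG] at heq
  rw [show ((1:ℝ) - s) = -(s-1) by ring, Real.rpow_neg hqpos.le]
  rw [div_eq_iff (Gq_pos hq).ne'] at heq
  field_simp
  nlinarith [heq]


lemma Gamma_mono_aux {t T : ℝ} (ht : 3/2 ≤ t) (htT : t ≤ T) (hT : 2 ≤ T) :
    Real.Gamma t ≤ Real.Gamma T := by
  have h32T : (3/2 : ℝ) ≤ T := by linarith
  have hmax : Real.Gamma (3/2) ≤ Real.Gamma T := by
    have h1 : Real.Gamma (3/2) < 1 := Real.Gamma_three_div_two_lt_one
    have h3 : Real.Gamma 2 ≤ Real.Gamma T :=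
      Real.Gamma_strictMonoOn_Ici.monotoneOn (by norm_num) (by exact hT) hT
    rw [Real.Gamma_two] at h3
    linarith
  have hseg : t ∈ segment ℝ (3/2 : ℝ) T := by
    rw [segment_eq_Icc h32T]; exact ⟨ht, htT⟩
  calc Real.Gamma t ≤ max (Real.Gamma (3/2)) (Real.Gamma T) :=
        Real.convexOn_Gamma.le_on_segment (by norm_num) (by norm_num; linarith) hseg
    _ = Real.Gamma T := max_eq_right hmax

lemma Gamma_add_le_aux {t δ : ℝ} (ht : 1 ≤ t) (hδ0 : 0 < δ) (hδ1 : δ < 1) :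
    Real.Gamma (t + δ) ≤ t * Real.Gamma t := by
  have ht0 : (0:ℝ) < t := by linarith
  have hΓ : 0 < Real.Gamma t := Real.Gamma_pos_of_pos ht0
  have key := Real.Gamma_mul_add_mul_le_rpow_Gamma_mul_rpow_Gamma ht0
    (by linarith : (0:ℝ) < t + 1) (by linarith : (0:ℝ) < 1 - δ) hδ0 (by ring)
  rw [show (1 - δ) * t + δ * (t + 1) = t + δ by ring] at key
  rw [Real.Gamma_add_one ht0.ne', Real.mul_rpow ht0.le hΓ.le] at key
  have h2 : Real.Gamma t ^ (1 - δ) * (t ^ δ * Real.Gamma t ^ δ)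
      = t ^ δ * Real.Gamma t := by
    rw [show Real.Gamma t ^ (1-δ) * (t ^ δ * Real.Gamma t ^ δ)
        = t ^ δ * (Real.Gamma t ^ (1-δ) * Real.Gamma t ^ δ) by ring,
      ← Real.rpow_add hΓ]
    norm_num
  rw [h2] at key
  refine key.trans ?_
  have h3 : t ^ δ ≤ t := by
    calc t ^ δ ≤ t ^ (1:ℝ) := Real.rpow_le_rpow_of_exponent_le ht hδ1.le
      _ = t := Real.rpow_one t
  exact mul_le_mul_of_nonneg_right h3 hΓ.le


/-- The rising factorial `x (x+1) ⋯ (x+k-1)`, with `x^{rising 0} = 1`. -/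
noncomputable def risingFactorialR (x : ℝ) (k : ℕ) : ℝ :=
  ∏ i ∈ Finset.range k, (x + i)


theorem gamma_multiplication_estimate (q : ℕ) (hq : 1 ≤ q) (n : ℕ) (hn : 3 * q ≤ 2 * n) :
    (2 * Real.pi) ^ (((q : ℝ) - 1) / 2) * (q : ℝ) ^ ((1 : ℝ) / 2) / n ≤
      (q : ℝ) ^ n * Real.Gamma ((n : ℝ) / q + 1) ^ q / n.factorial ∧
    (q : ℝ) ^ n * Real.Gamma ((n : ℝ) / q + 1) ^ q / n.factorial ≤
      (2 * Real.pi) ^ (((q : ℝ) - 1) / 2) * (q : ℝ) ^ ((1 : ℝ) / 2 - q) *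
        risingFactorialR ((n : ℝ) + 1) (q - 1) := by
  obtain ⟨m, rfl⟩ : ∃ m, q = m + 1 := ⟨q - 1, (Nat.succ_pred_eq_of_pos hq).symm⟩
  set q : ℕ := m + 1 with hqdef
  have hqR : (1:ℝ) ≤ q := by exact_mod_cast hq
  have hqpos : (0:ℝ) < q := by linarith
  have hq0 : (q:ℝ) ≠ 0 := hqpos.ne'
  have hnq : q < n := by omega
  have hnq' : (q:ℝ) ≤ (n:ℝ) := by exact_mod_cast hnq.le
  have hnpos : (0:ℝ) < n := by linarith
  have hnR : 3 * (q:ℝ) ≤ 2 * n := by exact_mod_cast hn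
  set T : ℝ := (n:ℝ) / q + 1 with hT
  have h32q : (3:ℝ)/2 ≤ (n:ℝ)/q := by
    rw [div_le_div_iff₀ (by norm_num) hqpos]; linarith
  have hT2 : (2:ℝ) ≤ T := by rw [hT]; linarith
  have hTpos : (0:ℝ) < T := by linarith
  have hΓT : 0 < Real.Gamma T := Real.Gamma_pos_of_pos hTpos
  -- the shifted points
  set t : ℕ → ℝ := fun k => ((n:ℝ) + 1 + k) / q with ht
  have hqm : (q:ℝ) = (m:ℝ) + 1 := by push_cast [hqdef]; ring
  have hTT : T = ((n:ℝ) + q) / q := by rw [hT]; field_simp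
  have htmem : ∀ k ∈ Finset.range m, 3/2 ≤ t k ∧ t k ≤ T ∧ 1 ≤ t k ∧
      0 < T - t k ∧ T - t k < 1 := by
    intro k hk
    have hkm : (k:ℝ) ≤ (m:ℝ) - 1 := by
      have h := Finset.mem_range.mp hk
      have h' : (k:ℝ) + 1 ≤ (m:ℝ) := by exact_mod_cast h
      linarith
    have hk0 : (0:ℝ) ≤ k := Nat.cast_nonneg k
    have h32 : 3/2 ≤ t k := by
      simp only [ht]
      rw [le_div_iff₀ hqpos]
      linarith
    have hδ : T - t k = ((q:ℝ) - 1 - k) / q := by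
      simp only [ht]
      rw [hTT, div_sub_div_same]
      congr 1
      ring
    have hk1q : (k:ℝ) + 1 < (q:ℝ) := by rw [hqm]; linarith
    refine ⟨h32, ?_, by linarith, ?_, ?_⟩
    · have h0 : 0 < T - t k := by rw [hδ]; exact div_pos (by linarith) hqpos
      linarith
    · rw [hδ]; exact div_pos (by linarith) hqpos
    · rw [hδ, div_lt_one hqpos]; linarith
  -- ratio bounds
  have hΓt : ∀ k ∈ Finset.range m, 0 < Real.Gamma (t k) := by
    intro k hk
    obtain ⟨h1, _, _, _, _⟩ := htmem k hk
    exact Real.Gamma_pos_of_pos (by linarith)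
  have hlow : ∀ k ∈ Finset.range m, 1 ≤ Real.Gamma T / Real.Gamma (t k) := by
    intro k hk
    obtain ⟨h1, h2, h3, _, _⟩ := htmem k hk
    rw [one_le_div (hΓt k hk)]
    exact Gamma_mono_aux h1 h2 hT2
  have hup : ∀ k ∈ Finset.range m, Real.Gamma T / Real.Gamma (t k) ≤ t k := by
    intro k hk
    obtain ⟨h1, h2, h3, h4, h5⟩ := htmem k hk
    rw [div_le_iff₀ (hΓt k hk)]
    have := Gamma_add_le_aux h3 h4 h5
    rw [show t k + (T - t k) = T by ring] at this
    linarith [this]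
  -- the product identity
  have hid := gauss_prod hq (show (0:ℝ) < (n:ℝ) + 1 by linarith)
  have hP : ∏ k ∈ Finset.range q, Real.Gamma (((n:ℝ) + 1 + k) / q)
      = Gq q * ((q:ℝ)^n)⁻¹ * (n.factorial : ℝ) := by
    rw [hid, show (1:ℝ) - ((n:ℝ)+1) = -(n:ℝ) by ring, Real.rpow_neg hqpos.le,
      Real.rpow_natCast, Real.Gamma_nat_eq_factorial]
  -- main expression
  have hprodT : Real.Gamma T ^ q = ∏ _k ∈ Finset.range q, Real.Gamma T := by
    rw [Finset.prod_const, Finset.card_range]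
  have hfac : (0:ℝ) < n.factorial := by exact_mod_cast Nat.factorial_pos n
  have hqn : (0:ℝ) < (q:ℝ)^n := by positivity
  have hGqpos := Gq_pos hq
  have hE : (q:ℝ)^n * Real.Gamma T ^ q / n.factorial
      = Gq q * ∏ k ∈ Finset.range q, (Real.Gamma T / Real.Gamma (t k)) := by
    rw [Finset.prod_div_distrib, ← hprodT]
    rw [show (∏ k ∈ Finset.range q, Real.Gamma (t k))
        = Gq q * ((q:ℝ)^n)⁻¹ * (n.factorial : ℝ) from hP]
    generalize Real.Gamma T ^ q = g
    field_simp [hGqpos.ne', hfac.ne', hqn.ne']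
  -- split off the last factor, which equals 1
  have hlast : t m = T := by
    simp only [ht]
    rw [hT]
    field_simp
    push_cast
    rw [hqm]; ring
  have hsplit : ∏ k ∈ Finset.range q, (Real.Gamma T / Real.Gamma (t k))
      = ∏ k ∈ Finset.range m, (Real.Gamma T / Real.Gamma (t k)) := by
    rw [hqdef, Finset.prod_range_succ, hlast, div_self hΓT.ne', mul_one]
  rw [hE, hsplit]
  constructor
  · -- lower bound
    have hprod1 : (1:ℝ) ≤ ∏ k ∈ Finset.range m, (Real.Gamma T / Real.Gamma (t k)) := by
      calc (1:ℝ) = ∏ _k ∈ Finset.range m, (1:ℝ) := by simp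
        _ ≤ ∏ k ∈ Finset.range m, (Real.Gamma T / Real.Gamma (t k)) :=
          Finset.prod_le_prod (fun _ _ => by norm_num) hlow
    have h1 : Gq q ≤ Gq q * ∏ k ∈ Finset.range m, (Real.Gamma T / Real.Gamma (t k)) :=
      le_mul_of_one_le_right hGqpos.le hprod1
    refine le_trans ?_ h1
    rw [Gq_eq hq, div_le_iff₀ hnpos]
    have hkey : (q:ℝ) ^ ((1:ℝ)/2) ≤ (q:ℝ) ^ (-(1:ℝ)/2) * n := by
      have h2 : (q:ℝ) ^ ((1:ℝ)/2) = (q:ℝ) ^ (-(1:ℝ)/2) * q := by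
        have hexp : (1:ℝ)/2 = -(1:ℝ)/2 + 1 := by norm_num
        rw [hexp, Real.rpow_add hqpos, Real.rpow_one]
      rw [h2]
      exact mul_le_mul_of_nonneg_left hnq' (Real.rpow_nonneg hqpos.le _)
    calc (2 * Real.pi) ^ (((q:ℝ) - 1) / 2) * (q:ℝ) ^ ((1:ℝ)/2)
        ≤ (2 * Real.pi) ^ (((q:ℝ) - 1) / 2) * ((q:ℝ) ^ (-(1:ℝ)/2) * n) := by
          apply mul_le_mul_of_nonneg_left hkey
          positivity
      _ = (2 * Real.pi) ^ (((q:ℝ) - 1) / 2) * (q:ℝ) ^ (-(1:ℝ)/2) * n := by ring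
  · -- upper bound
    have hprodle : ∏ k ∈ Finset.range m, (Real.Gamma T / Real.Gamma (t k))
        ≤ ∏ k ∈ Finset.range m, t k := by
      apply Finset.prod_le_prod
      · intro k hk; have := hlow k hk; linarith
      · exact hup
    have h1 : Gq q * ∏ k ∈ Finset.range m, (Real.Gamma T / Real.Gamma (t k))
        ≤ Gq q * ∏ k ∈ Finset.range m, t k :=
      mul_le_mul_of_nonneg_left hprodle hGqpos.le
    refine h1.trans ?_
    have hprodt : ∏ k ∈ Finset.range m, t k
        = risingFactorialR ((n:ℝ) + 1) m * ((q:ℝ)^m)⁻¹ := by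
      calc ∏ k ∈ Finset.range m, t k
          = ∏ k ∈ Finset.range m, (((n:ℝ) + 1 + k) * (q:ℝ)⁻¹) := by
            apply Finset.prod_congr rfl
            intro k _
            simp only [ht]
            rw [div_eq_mul_inv]
        _ = (∏ k ∈ Finset.range m, ((n:ℝ) + 1 + k)) * ((q:ℝ)⁻¹)^m := by
            rw [Finset.prod_mul_distrib, Finset.prod_const, Finset.card_range]
        _ = risingFactorialR ((n:ℝ) + 1) m * ((q:ℝ)^m)⁻¹ := by
            rw [risingFactorialR, inv_pow]
    have hconst : Gq q * ((q:ℝ)^m)⁻¹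
        = (2 * Real.pi) ^ (((q:ℝ) - 1) / 2) * (q:ℝ) ^ ((1:ℝ)/2 - q) := by
      rw [Gq_eq hq, ← Real.rpow_natCast (q:ℝ) m, ← Real.rpow_neg hqpos.le,
        mul_assoc, ← Real.rpow_add hqpos]
      congr 2
      rw [hqm]
      ring
    have hmq : q - 1 = m := by omega
    rw [hprodt, hmq, show Gq q * (risingFactorialR ((n:ℝ) + 1) m * ((q:ℝ)^m)⁻¹)
      = (Gq q * ((q:ℝ)^m)⁻¹) * risingFactorialR ((n:ℝ) + 1) m by ring, hconst]
end

section
/- Let q > 0 be a real number with log q > γ, where γ is the Euler–Mascheroni constant. Then the function x ↦ q^x · Γ(x+1) is monotonically increasing on [0, ∞). In particular this holds for every integer q ≥ 2. -/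
open Real Set

lemma aux_main (q : ℝ) (hq : 0 < q) (hγ : Real.eulerMascheroniConstant < Real.log q) :
    MonotoneOn (fun x : ℝ => q ^ x * Real.Gamma (x + 1)) (Set.Ici 0) := by
  set L : ℝ := Real.log q with hL
  set γ := Real.eulerMascheroniConstant
  have hLpos : 0 < L := lt_trans (lt_trans one_half_pos one_half_lt_eulerMascheroniConstant) hγ
  set g : ℝ → ℝ := fun x => L * x + Real.log (Real.Gamma (x + 1)) with hg
  -- convexity of g on Ici 0
  have hconv : ConvexOn ℝ (Set.Ici (0 : ℝ)) g := by
    have h1 : ConvexOn ℝ (Set.Ici (0 : ℝ)) (fun x : ℝ => L * x) := by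
      simpa [smul_eq_mul] using (convexOn_id (convex_Ici (0 : ℝ))).smul hLpos.le
    have h2 : ConvexOn ℝ (Set.Ici (0 : ℝ)) (fun x : ℝ => Real.log (Real.Gamma (x + 1))) := by
      refine ⟨convex_Ici 0, fun x hx y hy a b ha hb hab => ?_⟩
      have hx' : x + 1 ∈ Set.Ioi (0 : ℝ) := by
        have : (0:ℝ) ≤ x := hx; simp only [Set.mem_Ioi]; linarith
      have hy' : y + 1 ∈ Set.Ioi (0 : ℝ) := by
        have : (0:ℝ) ≤ y := hy; simp only [Set.mem_Ioi]; linarith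
      have h := Real.convexOn_log_Gamma.2 hx' hy' ha hb hab
      simp only [Function.comp, smul_eq_mul] at h ⊢
      have e : a * (x + 1) + b * (y + 1) = a * x + b * y + 1 := by linear_combination hab
      rw [e] at h
      exact h
    exact h1.add h2
  -- derivative of g at 0 is L - γ
  have hGd : HasDerivAt (fun x : ℝ => Real.Gamma (x + 1)) (-γ) 0 :=
    HasDerivAt.comp_add_const 0 1 (by simpa using Real.hasDerivAt_Gamma_one)
  have hg0 : HasDerivAt g (L - γ) 0 := by
    have hΓ1 : Real.Gamma ((0 : ℝ) + 1) = 1 := by simp [Real.Gamma_one]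
    have hlog : HasDerivAt (fun x : ℝ => Real.log (Real.Gamma (x + 1))) (-γ) 0 := by
      have := hGd.log (by rw [hΓ1]; norm_num)
      simpa [hΓ1] using this
    have hlin : HasDerivAt (fun x : ℝ => L * x) L 0 := by
      simpa using (hasDerivAt_id (0 : ℝ)).const_mul L
    have h := hlin.add hlog
    rw [← sub_eq_add_neg] at h
    exact h
  have hderiv_pos : 0 < L - γ := sub_pos.mpr hγ
  -- g is monotone on Ici 0
  have hmono : MonotoneOn g (Set.Ici 0) := by
    intro x hx y hy hxy
    rcases eq_or_lt_of_le hxy with rfl | hlt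
    · exact le_rfl
    · have h0mem : (0 : ℝ) ∈ Set.Ici (0 : ℝ) := Set.mem_Ici.mpr le_rfl
      have hslope : L - γ ≤ slope g x y := by
        rcases eq_or_lt_of_le (Set.mem_Ici.mp hx) with rfl | hx0
        · exact hconv.le_slope_of_hasDerivAt hx hy hlt hg0
        · have h1 : L - γ ≤ slope g 0 x :=
            hconv.le_slope_of_hasDerivAt h0mem hx hx0 hg0
          have h2 : slope g 0 x ≤ slope g x y := by
            have := hconv.slope_mono_adjacent h0mem hy hx0 hlt
            rwa [slope_def_field, slope_def_field]
          linarith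
      rw [slope_def_field] at hslope
      have hyx : 0 < y - x := sub_pos.mpr hlt
      have h3 : 0 ≤ (g y - g x) / (y - x) := le_trans hderiv_pos.le hslope
      have h4 := (div_nonneg_iff.mp h3)
      rcases h4 with ⟨h5, _⟩ | ⟨_, h6⟩
      · linarith
      · linarith
  -- rewrite f as exp ∘ g
  intro x hx y hy hxy
  have key : ∀ z : ℝ, z ∈ Set.Ici (0 : ℝ) → q ^ z * Real.Gamma (z + 1) = Real.exp (g z) := by
    intro z hz
    have hz0 : (0 : ℝ) ≤ z := hz
    have hΓpos : 0 < Real.Gamma (z + 1) := Real.Gamma_pos_of_pos (by linarith)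
    rw [hg, Real.exp_add, Real.exp_log hΓpos, Real.rpow_def_of_pos hq]
  simp only [key x hx, key y hy]
  exact Real.exp_le_exp.mpr (hmono hx hy hxy)

theorem qpow_mul_gamma_monotone :
    (∀ q : ℝ, 0 < q → Real.eulerMascheroniConstant < Real.log q →
      MonotoneOn (fun x : ℝ => q ^ x * Real.Gamma (x + 1)) (Set.Ici 0)) ∧
    (∀ q : ℕ, 2 ≤ q →
      MonotoneOn (fun x : ℝ => (q : ℝ) ^ x * Real.Gamma (x + 1)) (Set.Ici 0)) := by
  constructor
  · exact aux_main
  · intro q hq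
    have hq2 : (2 : ℝ) ≤ (q : ℝ) := by exact_mod_cast hq
    have hqpos : (0 : ℝ) < q := by linarith
    apply aux_main _ hqpos
    calc Real.eulerMascheroniConstant < 2 / 3 := Real.eulerMascheroniConstant_lt_two_thirds
      _ < Real.log 2 := by nlinarith [Real.log_two_gt_d9]
      _ ≤ Real.log q := Real.log_le_log two_pos hq2
end

section
/- Let u ∈ ℂ[[z]] and v ∈ ℝ[[z]] with u ⪯ v, let z ∈ ℂ and let t be a real number with |z| < t such that Σ_{k≥0} v_k t^k converges with sum v(t). Then for every n ∈ ℕ, the tail Σ_{k≥n} u_k z^k converges absolutely and |Σ_{k≥n} u_k z^k| ≤ v(t) · (|z|/t)^n / (1 − |z|/t). -/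
theorem majorant_saddle_tail_bound (u : PowerSeries ℂ) (v : PowerSeries ℝ)
    (h : Majorizes u v) (z : ℂ) (t : ℝ) (hzt : ‖z‖ < t)
    (hconv : Summable fun k : ℕ => PowerSeries.coeff k v * t ^ k) :
    ∀ n : ℕ,
      Summable (fun k : ℕ => ‖PowerSeries.coeff (n + k) u * z ^ (n + k)‖) ∧
      ‖∑' k : ℕ, PowerSeries.coeff (n + k) u * z ^ (n + k)‖ ≤
        (∑' k : ℕ, PowerSeries.coeff k v * t ^ k) * (‖z‖ / t) ^ n /
          (1 - ‖z‖ / t) := by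
  intro n
  have ht : 0 < t := lt_of_le_of_lt (norm_nonneg z) hzt
  set r := ‖z‖ / t with hr
  have hr0 : 0 ≤ r := div_nonneg (norm_nonneg z) ht.le
  have hr1 : r < 1 := (div_lt_one ht).2 hzt
  have hterm : ∀ k, 0 ≤ PowerSeries.coeff k v * t ^ k :=
    fun k => mul_nonneg (h k).1 (pow_nonneg ht.le k)
  set S := ∑' k : ℕ, PowerSeries.coeff k v * t ^ k with hSdef
  have hS0 : 0 ≤ S := tsum_nonneg hterm
  have hSle : ∀ k, PowerSeries.coeff k v * t ^ k ≤ S :=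
    fun k => Summable.le_tsum hconv k fun j _ => hterm j
  have key : ∀ k, ‖PowerSeries.coeff (n + k) u * z ^ (n + k)‖ ≤
      (S * r ^ n) * r ^ k := by
    intro k
    rw [norm_mul, norm_pow]
    have h1 : ‖PowerSeries.coeff (n + k) u‖ * ‖z‖ ^ (n + k) ≤
        PowerSeries.coeff (n + k) v * ‖z‖ ^ (n + k) :=
      mul_le_mul_of_nonneg_right (h (n + k)).2 (pow_nonneg (norm_nonneg z) _)
    have h2 : PowerSeries.coeff (n + k) v * ‖z‖ ^ (n + k) =
        (PowerSeries.coeff (n + k) v * t ^ (n + k)) * r ^ (n + k) := by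
      rw [hr, div_pow]
      field_simp
    have h3 : (PowerSeries.coeff (n + k) v * t ^ (n + k)) * r ^ (n + k) ≤
        S * r ^ (n + k) :=
      mul_le_mul_of_nonneg_right (hSle (n + k)) (pow_nonneg hr0 _)
    calc ‖PowerSeries.coeff (n + k) u‖ * ‖z‖ ^ (n + k)
        ≤ S * r ^ (n + k) := by rw [h2] at h1; exact h1.trans h3
      _ = (S * r ^ n) * r ^ k := by rw [pow_add]; ring
  have hgeo : Summable fun k : ℕ => (S * r ^ n) * r ^ k :=
    (summable_geometric_of_lt_one hr0 hr1).mul_left _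
  have hsum : Summable (fun k : ℕ =>
      ‖PowerSeries.coeff (n + k) u * z ^ (n + k)‖) :=
    Summable.of_nonneg_of_le (fun k => norm_nonneg _) key hgeo
  refine ⟨hsum, ?_⟩
  have hsum' : Summable (fun k : ℕ => ‖PowerSeries.coeff (n + k) u * z ^ (n + k)‖) := by
    exact hsum
  have habs : ‖∑' k : ℕ, PowerSeries.coeff (n + k) u * z ^ (n + k)‖ ≤
      ∑' k : ℕ, ‖PowerSeries.coeff (n + k) u * z ^ (n + k)‖ := by
    exact norm_tsum_le_tsum_norm hsum'
  have hle : (∑' k : ℕ, ‖PowerSeries.coeff (n + k) u * z ^ (n + k)‖) ≤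
      ∑' k : ℕ, (S * r ^ n) * r ^ k :=
    Summable.tsum_le_tsum key hsum hgeo
  have hval : (∑' k : ℕ, (S * r ^ n) * r ^ k) = S * r ^ n / (1 - r) := by
    rw [tsum_mul_left, tsum_geometric_of_lt_one hr0 hr1, div_eq_mul_inv]
  exact habs.trans (hle.trans (le_of_eq hval))
end

section
/- Let r ≥ 1 and T ≥ 0 be integers, α > 0 a real number, Q a monic real polynomial of degree r, and let M^{[0]}, …, M^{[r−1]} ≥ 0 be reals. Let u ∈ ℂ[[z]] and for 0 ≤ k < r let ã^{[k]} ∈ ℂ[[z]] be power series whose coefficients satisfy |ã^{[k]}_i| ≤ M^{[k]} · C(i + r−k+T−1, r−k+T−1) · α^i for all i ∈ ℕ. Assume that Q(n)·u_n = Σ_{j=0}^{n−1} Σ_{k=0}^{r−1} ã^{[k]}_{n−1−j} · j^k · u_j for every n ∈ ℕ. Then there exist a real A ≥ 0 and a positive integer K such that: if T = 0, then |u_n| ≤ A · C(n+K−1, K−1) · α^n for all n ∈ ℕ; and if T ≥ 1, then |u_n| ≤ A · ṽ_n for all n ∈ ℕ, where ṽ_n is the n-th Taylor coefficient at 0 of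 z ↦ exp((K/T)·(1−αz)^{−T}). -/
open scoped ENNReal NNReal


noncomputable def vSeq (K T : ℕ) (α : ℝ) (n : ℕ) : ℝ :=
  α ^ n * ∑' m : ℕ, ((K:ℝ)/T) ^ m / m.factorial * ((n + T * m - 1).choose n)

lemma choose_le_two_pow'' (a b : ℕ) : a.choose b ≤ 2 ^ a := by
  rcases le_or_gt b a with h | h
  · calc a.choose b ≤ ∑ i ∈ Finset.range (a+1), a.choose i :=
        Finset.single_le_sum (fun i _ => Nat.zero_le _) (Finset.mem_range.mpr (by omega))
    _ = 2 ^ a := Nat.sum_range_choose a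
  · rw [Nat.choose_eq_zero_of_lt h]; exact Nat.zero_le _

lemma summable_vterm (K T n : ℕ) :
    Summable (fun m : ℕ => ((K:ℝ)/T) ^ m / m.factorial * ((n + T * m - 1).choose n)) := by
  have hc0 : (0:ℝ) ≤ (K:ℝ)/T := by positivity
  have hsum : Summable (fun m : ℕ => 2^n * (((K:ℝ)/T * 2^T)^m / m.factorial)) :=
    (Real.summable_pow_div_factorial ((K:ℝ)/T * 2^T)).mul_left _
  refine Summable.of_nonneg_of_le (fun m => by positivity) (fun m => ?_) hsum
  have h1 : ((n + T*m - 1).choose n : ℝ) ≤ 2^n * (2^T)^m := by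
    have h0 := choose_le_two_pow'' (n + T*m - 1) n
    have h0' : ((n + T*m - 1).choose n : ℝ) ≤ 2^(n + T*m - 1) := by exact_mod_cast h0
    have h2 : (2:ℝ)^(n + T*m - 1) ≤ 2^(n + T*m) := by
      apply pow_le_pow_right₀ one_le_two; omega
    calc ((n + T*m - 1).choose n : ℝ) ≤ 2^(n + T*m) := h0'.trans h2
      _ = 2^n * (2^T)^m := by rw [pow_add, ← pow_mul]
  calc ((K:ℝ)/T) ^ m / m.factorial * ((n + T * m - 1).choose n)
      ≤ ((K:ℝ)/T) ^ m / m.factorial * (2^n * (2^T)^m) := by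
        apply mul_le_mul_of_nonneg_left h1 (by positivity)
    _ = 2^n * (((K:ℝ)/T * 2^T)^m / m.factorial) := by
        rw [mul_pow]; ring

lemma vSeq_nonneg (K T : ℕ) {α : ℝ} (hα : 0 ≤ α) (n : ℕ) : 0 ≤ vSeq K T α n := by
  apply mul_nonneg (by positivity)
  exact tsum_nonneg (fun m => by positivity)

lemma vSeq_pos (K T : ℕ) (hK : 1 ≤ K) (hT : 1 ≤ T) {α : ℝ} (hα : 0 < α) (n : ℕ) :
    0 < vSeq K T α n := by
  apply mul_pos (by positivity)
  have hterm : (0:ℝ) < ((K:ℝ)/T) ^ 1 / (Nat.factorial 1) * ((n + T * 1 - 1).choose n) := by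
    have hc : (0:ℝ) < (K:ℝ)/T := by
      apply div_pos <;> exact_mod_cast (by omega : (0:ℕ) < _)
    have hch : 0 < (n + T * 1 - 1).choose n := Nat.choose_pos (by omega)
    have : (0:ℝ) < ((n + T * 1 - 1).choose n : ℝ) := by exact_mod_cast hch
    simp only [pow_one, Nat.factorial_one, Nat.cast_one, div_one]
    positivity
  calc (0:ℝ) < _ := hterm
    _ ≤ _ := (summable_vterm K T n).le_tsum 1 (fun j _ => by positivity)

lemma hasSum_choose_pow (T : ℕ) (hT : 1 ≤ T) (c : ℝ) (m : ℕ) {r : ℝ} (hr : |r| < 1) :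
    HasSum (fun n : ℕ => c ^ m / m.factorial * ((n + T * m - 1).choose n) * r ^ n)
      (c ^ m / m.factorial * (1/(1 - r) ^ (T * m))) := by
  rcases Nat.eq_zero_or_pos m with rfl | hm
  · simp only [Nat.mul_zero, pow_zero, Nat.factorial_zero, Nat.cast_one, div_one, one_mul,
      Nat.add_zero]
    have : ∀ n : ℕ, n ≠ 0 → (((n - 1).choose n : ℝ)) * r ^ n = 0 := by
      intro n hn
      rw [Nat.choose_eq_zero_of_lt (by omega)]
      simp
    have h := hasSum_single (f := fun n : ℕ => (((n - 1).choose n : ℝ)) * r ^ n) 0 this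
    simpa using h
  · have hTm : 1 ≤ T * m := Nat.one_le_iff_ne_zero.mpr (by positivity)
    have key := hasSum_choose_mul_geometric_of_norm_lt_one (𝕜 := ℝ) (T*m - 1)
      (r := r) (by simpa using hr)
    have hk1 : T * m - 1 + 1 = T * m := by omega
    rw [hk1] at key
    have hcongr : ∀ n : ℕ, ((n + (T*m - 1)).choose (T*m - 1) : ℝ)
        = ((n + T * m - 1).choose n : ℝ) := by
      intro n
      have e1 : n + (T*m - 1) = n + T*m - 1 := by omega
      have e2 : (n + T*m - 1).choose (T*m - 1) = (n + T*m - 1).choose n := by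
        have h3 : (n + T*m - 1) - n = T*m - 1 := by omega
        have h4 := Nat.choose_symm (n := n + T*m - 1) (k := n) (by omega)
        rw [h3] at h4
        exact h4
      rw [e1, e2]
    have key2 : HasSum (fun n : ℕ => ((n + T * m - 1).choose n : ℝ) * r ^ n)
        (1/(1 - r) ^ (T * m)) := by
      simp only [hcongr] at key
      exact key
    have := key2.mul_left (c ^ m / m.factorial)
    have h2 : (fun n : ℕ => c ^ m / m.factorial * ((n + T * m - 1).choose n : ℝ) * r ^ n)
        = fun n => c ^ m / m.factorial * (((n + T * m - 1).choose n : ℝ) * r ^ n) := by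
      funext n; ring
    rw [h2]; exact this

lemma hasSum_v (K T : ℕ) (hT : 1 ≤ T) (α : ℝ) {x : ℝ} (hx : |α * x| < 1) :
    HasSum (fun n => vSeq K T α n * x ^ n) (majorantFun (K:ℝ) α T x) := by
  set c : ℝ := (K:ℝ)/T with hc
  have hc0 : 0 ≤ c := by positivity
  set r : ℝ := α * x with hrdef
  have hr1 : (0:ℝ) < 1 - r := by
    have := abs_lt.mp hx
    linarith [this.2]
  set G : ℕ × ℕ → ℝ := fun p =>
    c ^ p.1 / p.1.factorial * (((p.2 + T * p.1 - 1).choose p.2 : ℝ)) * r ^ p.2 with hG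
  -- absolute summability
  have habs : ∀ p : ℕ × ℕ, |G p|
      = c ^ p.1 / p.1.factorial * (((p.2 + T * p.1 - 1).choose p.2 : ℝ)) * |r| ^ p.2 := by
    intro p
    rw [abs_mul, abs_pow]
    congr 1
    rw [abs_of_nonneg (by positivity)]
  have h1r : (0:ℝ) < 1 - |r| := by linarith [hx]
  have habs_lt : |(|r|)| < 1 := by
    rw [abs_abs]; exact hx
  have hsummable_abs : Summable (fun p => |G p|) := by
    rw [funext habs]
    apply (summable_prod_of_nonneg (fun p => by positivity)).mpr
    constructor
    · intro m
      exact (hasSum_choose_pow T hT c m habs_lt).summable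
    · apply Summable.congr (f := fun m : ℕ =>
        (c * (1/(1 - |r|) ^ T)) ^ m / m.factorial)
      · have := Real.summable_pow_div_factorial (c * (1/(1 - |r|) ^ T))
        exact this
      · intro m
        rw [(hasSum_choose_pow T hT c m habs_lt).tsum_eq]
        rw [mul_pow, one_div, inv_pow, ← pow_mul, one_div]
        ring
  have hsummable : Summable G := Summable.of_abs hsummable_abs
  have hGsum : HasSum G (∑' p, G p) := hsummable.hasSum
  -- identify total sum with exp
  have hfib1 : HasSum (fun m : ℕ => c ^ m / m.factorial * (1/(1 - r) ^ (T * m)))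
      (∑' p, G p) :=
    hGsum.prod_fiberwise (fun m => hasSum_choose_pow T hT c m hx)
  have hexp : HasSum (fun m : ℕ => c ^ m / m.factorial * (1/(1 - r) ^ (T * m)))
      (Real.exp (c * ((1 - r) ^ T)⁻¹)) := by
    have base := NormedSpace.exp_series_hasSum_exp' (𝕂 := ℝ) (c * ((1 - r) ^ T)⁻¹)
    have heq : (fun m : ℕ => c ^ m / m.factorial * (1/(1 - r) ^ (T * m)))
        = fun m : ℕ => ((m.factorial : ℝ)⁻¹) • (c * ((1 - r) ^ T)⁻¹) ^ m := by
      funext m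
      rw [smul_eq_mul, mul_pow, inv_pow, ← pow_mul]
      ring
    rw [heq, Real.exp_eq_exp_ℝ]
    exact base
  have hS : ∑' p, G p = Real.exp (c * ((1 - r) ^ T)⁻¹) := hfib1.unique hexp
  have hfib2 : ∀ n : ℕ, HasSum (fun m => G (m, n))
      ((∑' m : ℕ, c ^ m / m.factorial * (((n + T * m - 1).choose n : ℝ))) * r ^ n) := by
    intro n
    have hsv := summable_vterm K T n
    rw [← hc] at hsv
    exact hsv.hasSum.mul_right _
  have hswap : HasSum (fun p : ℕ × ℕ => G (p.2, p.1)) (∑' p, G p) := by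
    have := ((Equiv.prodComm ℕ ℕ).hasSum_iff (f := G) (a := ∑' p, G p)).mpr hGsum
    exact this
  have final : HasSum
      (fun n => (∑' m : ℕ, c ^ m / m.factorial * (((n + T * m - 1).choose n : ℝ))) * r ^ n)
      (∑' p, G p) := hswap.prod_fiberwise hfib2
  have heq2 : (fun n => vSeq K T α n * x ^ n)
      = fun n => (∑' m : ℕ, c ^ m / m.factorial * (((n + T * m - 1).choose n : ℝ))) * r ^ n := by
    funext n
    rw [vSeq, ← hc, hrdef, mul_pow]
    ring
  have hmaj : majorantFun (K:ℝ) α T x = Real.exp (c * ((1 - r) ^ T)⁻¹) := by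
    rw [majorantFun, hc, hrdef]
  rw [heq2, hmaj, ← hS]
  exact final

lemma taylorCoeff_majorant (K T : ℕ) (hT : 1 ≤ T) {α : ℝ} (hα : 0 < α) (n : ℕ) :
    taylorCoeff (majorantFun (K:ℝ) α T) n = vSeq K T α n := by
  set ρ : ℝ≥0 := Real.toNNReal (1/(2*α)) with hρdef
  have hρpos : (0:ℝ) < 1/(2*α) := by positivity
  have hρ : (ρ : ℝ) = 1/(2*α) := Real.coe_toNNReal _ hρpos.le
  set p : FormalMultilinearSeries ℝ ℝ ℝ := FormalMultilinearSeries.ofScalars ℝ (vSeq K T α)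
    with hpdef
  have hnorm : ∀ m, ‖p m‖ = vSeq K T α m := by
    intro m
    rw [hpdef, FormalMultilinearSeries.ofScalars_norm, Real.norm_eq_abs,
      abs_of_nonneg (vSeq_nonneg K T hα.le m)]
  have hxρ : ∀ y : ℝ, |y| < (ρ : ℝ) → |α * y| < 1 := by
    intro y hy
    rw [abs_mul, abs_of_nonneg hα.le]
    rw [hρ] at hy
    calc α * |y| < α * (1/(2*α)) := by
          apply mul_lt_mul_of_pos_left hy hα
      _ = 1/2 := by field_simp
      _ < 1 := by norm_num
  have hρself : |(1:ℝ)/(2*α)| < (ρ:ℝ) ∨ True := Or.inr trivial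
  have hsum_rho : Summable (fun m => ‖p m‖ * (ρ : ℝ) ^ m) := by
    have h1 : |α * ((ρ:ℝ))| < 1 := by
      rw [abs_mul, abs_of_nonneg hα.le, abs_of_nonneg (by positivity), hρ]
      calc α * (1/(2*α)) = 1/2 := by field_simp
        _ < 1 := by norm_num
    have := (hasSum_v K T hT α h1).summable
    apply this.congr
    intro m
    rw [hnorm]
  have hradius : (ρ : ℝ≥0∞) ≤ p.radius := p.le_radius_of_summable hsum_rho
  have hball : HasFPowerSeriesOnBall (majorantFun (K:ℝ) α T) p 0 ρ := by
    refine ⟨hradius, ENNReal.coe_pos.mpr (Real.toNNReal_pos.mpr hρpos), ?_⟩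
    intro y hy
    rw [EMetric.mem_ball, edist_zero_right] at hy
    have hy' : |y| < (ρ : ℝ) := by
      rw [← Real.norm_eq_abs]
      exact_mod_cast hy
    have hsv := hasSum_v K T hT α (hxρ y hy')
    have heqf : (fun m : ℕ => p m fun _ => y) = fun m => vSeq K T α m * y ^ m := by
      funext m
      rw [hpdef, FormalMultilinearSeries.ofScalars_apply_eq, smul_eq_mul]
    rw [zero_add, heqf]
    exact hsv
  have hfact := hball.factorial_smul (y := (1:ℝ)) n
  rw [taylorCoeff, iteratedDeriv_eq_iteratedFDeriv, ← hfact, hpdef,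
    FormalMultilinearSeries.ofScalars_apply_eq, one_pow, smul_eq_mul, mul_one,
    nsmul_eq_mul]
  field_simp


lemma mychoose_shift (s T i : ℕ) :
    ((i + (T + s)).choose (T + s) : ℝ) ≤ (i+1)^s * ((i + T).choose T) := by
  induction s with
  | zero => simp
  | succ s ih =>
      have h1 : (i + (T + s) + 1) * ((i + (T+s)).choose (T+s))
          = (i + (T + (s+1))).choose (T + (s+1)) * (T + s + 1) := by
        have := Nat.add_one_mul_choose_eq (i + (T+s)) (T+s)
        simpa [Nat.succ_eq_add_one, ← Nat.add_assoc] using this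
      have h2 : (i + (T + (s+1))).choose (T + (s+1)) * (T + s + 1)
          ≤ ((i+1) * ((i + (T+s)).choose (T+s))) * (T + s + 1) := by
        rw [← h1]
        have : i + (T + s) + 1 ≤ (i+1) * (T + s + 1) := by nlinarith
        calc (i + (T + s) + 1) * ((i + (T+s)).choose (T+s))
            ≤ ((i+1) * (T + s + 1)) * ((i + (T+s)).choose (T+s)) :=
              Nat.mul_le_mul_right _ this
          _ = ((i+1) * ((i + (T+s)).choose (T+s))) * (T + s + 1) := by ring
      have h3 : (i + (T + (s+1))).choose (T + (s+1)) ≤ (i+1) * ((i + (T+s)).choose (T+s)) :=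
        Nat.le_of_mul_le_mul_right h2 (by omega)
      calc ((i + (T + (s+1))).choose (T + (s+1)) : ℝ)
          ≤ (i+1) * ((i + (T+s)).choose (T+s)) := by exact_mod_cast h3
        _ ≤ (i+1) * ((i+1)^s * ((i + T).choose T)) := by
            apply mul_le_mul_of_nonneg_left ih (by positivity)
        _ = (i+1)^(s+1) * ((i + T).choose T) := by ring

lemma mychoose_flip (n P : ℕ) (hP : 1 ≤ P) :
    n * (n + P - 1).choose n = P * ((n + P - 1).choose P) := by
  rcases Nat.eq_zero_or_pos n with hn | hn
  · subst hn
    have : (0 + P - 1).choose P = 0 := Nat.choose_eq_zero_of_lt (by omega)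
    simp only [Nat.zero_add] at this ⊢
    simp [this]
  · have hX : n + P - 1 = (n - 1) + P := by omega
    have h1 := Nat.choose_succ_right_eq (n + P - 1) (n - 1)
    have hn1 : n - 1 + 1 = n := by omega
    rw [hn1] at h1
    have h2 : (n + P - 1) - (n - 1) = P := by omega
    rw [h2] at h1
    -- h1 : (n+P-1).choose n * n = (n+P-1).choose (n-1) * P
    have h3 : (n + P - 1).choose (n - 1) = (n + P - 1).choose P := by
      have : n - 1 = (n + P - 1) - P := by omega
      rw [this]
      exact Nat.choose_symm (by omega)
    rw [h3] at h1
    rw [mul_comm, h1, mul_comm]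

open PowerSeries in
lemma myvander (a b m : ℕ) :
    ∑ j ∈ Finset.range (m+1), ((((m - j) + a).choose a : ℝ) * ((j + b).choose b))
      = ((m + (a+b+1)).choose (a+b+1) : ℝ) := by
  have hu : (invOneSubPow ℝ (a+1)) * (invOneSubPow ℝ (b+1)) = invOneSubPow ℝ (a+b+2) := by
    rw [invOneSubPow_eq_inv_one_sub_pow, invOneSubPow_eq_inv_one_sub_pow,
      invOneSubPow_eq_inv_one_sub_pow, ← pow_add]
    ring_nf
  have hval := congrArg (fun (u : (PowerSeries ℝ)ˣ) => PowerSeries.coeff m u.val) hu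
  simp only [Units.val_mul, invOneSubPow_val_succ_eq_mk_add_choose] at hval
  rw [PowerSeries.coeff_mul] at hval
  simp only [PowerSeries.coeff_mk] at hval
  rw [Finset.Nat.sum_antidiagonal_eq_sum_range_succ_mk] at hval
  have : a + b + 2 - 1 = a + b + 1 := by omega
  calc ∑ j ∈ Finset.range (m+1), ((((m - j) + a).choose a : ℝ) * ((j + b).choose b))
      = ∑ j ∈ Finset.range (m+1), (((a + j).choose a : ℝ) * ((b + (m - j)).choose b)) := by
        have hrefl := Finset.sum_range_reflect
          (fun j => ((a + j).choose a : ℝ) * ((b + (m - j)).choose b)) (m+1)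
        rw [← hrefl]
        apply Finset.sum_congr rfl
        intro j hj
        simp only [Finset.mem_range] at hj
        have h1 : m + 1 - 1 - j = m - j := by omega
        have h2 : m - (m - j) = j := by omega
        rw [h1, h2, Nat.add_comm a (m-j), Nat.add_comm b j]
    _ = ((a + b + 1 + m).choose (a+b+1) : ℝ) := by
        rw [hval]
    _ = ((m + (a+b+1)).choose (a+b+1) : ℝ) := by rw [Nat.add_comm]

lemma inner_vander (T m n : ℕ) (hT : 1 ≤ T) (hn : 1 ≤ n) :
    ∑ j ∈ Finset.range n, (((n-1-j+T).choose T : ℝ)) * ((j + T*m - 1).choose j : ℝ)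
      = ((n + T*(m+1) - 1).choose (T*(m+1)) : ℝ) := by
  rcases Nat.eq_zero_or_pos m with rfl | hm
  · have hzero : ∀ j ∈ Finset.range n, j ≠ 0 →
        (((n-1-j+T).choose T : ℝ)) * ((j + T*0 - 1).choose j : ℝ) = 0 := by
      intro j _ hj
      have : (j + T*0 - 1).choose j = 0 := by
        apply Nat.choose_eq_zero_of_lt; omega
      rw [this]; simp
    rw [Finset.sum_eq_single 0 hzero (by intro h; exact absurd (Finset.mem_range.mpr hn) h)]
    have e0 : (0 + T*0 - 1).choose 0 = 1 := Nat.choose_zero_right _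
    have e1 : n - 1 - 0 + T = n + T*(0+1) - 1 := by
      have := Nat.one_le_iff_ne_zero.mp hT; omega
    have e2 : T = T * (0+1) := by omega
    rw [e0]
    push_cast
    rw [e1]
    norm_num
  · have hTm : 1 ≤ T * m := by
      calc 1 = 1*1 := by omega
        _ ≤ T * m := Nat.mul_le_mul hT hm
    have hcast : ∀ j : ℕ, ((j + T*m - 1).choose j : ℝ) = ((j + (T*m - 1)).choose (T*m-1) : ℝ) := by
      intro j
      have e1 : j + T*m - 1 = j + (T*m - 1) := by omega
      have h3 : (j + T*m - 1) - j = T*m - 1 := by omega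
      have h4 := Nat.choose_symm (n := j + T*m - 1) (k := j) (by omega)
      rw [h3] at h4
      rw [← h4, e1]
    have hre : ∀ j : ℕ, (((n-1-j+T).choose T : ℝ)) = (((n-1) - j + T).choose T : ℝ) := by
      intro j; norm_num
  -- apply myvander with m := n-1, a := T, b := T*m - 1
    have hv := myvander T (T*m - 1) (n-1)
    have hrange : n - 1 + 1 = n := by omega
    rw [hrange] at hv
    calc ∑ j ∈ Finset.range n, (((n-1-j+T).choose T : ℝ)) * ((j + T*m - 1).choose j : ℝ)
        = ∑ j ∈ Finset.range n, ((((n-1) - j + T).choose T : ℝ)) * ((j + (T*m-1)).choose (T*m-1) : ℝ) := by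
          apply Finset.sum_congr rfl
          intro j _
          rw [hcast j]
      _ = (((n-1) + (T + (T*m-1) + 1)).choose (T + (T*m-1) + 1) : ℝ) := hv
      _ = ((n + T*(m+1) - 1).choose (T*(m+1)) : ℝ) := by
          have e3 : (n-1) + (T + (T*m-1) + 1) = n + T*(m+1) - 1 := by
            have h5 : T*(m+1) = T*m + T := by ring
            omega
          have e4 : T + (T*m-1) + 1 = T*(m+1) := by
            have h5 : T*(m+1) = T*m + T := by ring
            omega
          rw [e3, e4]

lemma vSeq_rec (K T : ℕ) (hT : 1 ≤ T) {α : ℝ} (hα : 0 < α) (n : ℕ) (hn : 1 ≤ n) :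
    (n:ℝ) * vSeq K T α n
      = K * α * ∑ j ∈ Finset.range n,
          (((n-1-j+T).choose T : ℝ) * α^(n-1-j) * vSeq K T α j) := by
  have hT0 : (T:ℝ) ≠ 0 := by
    exact_mod_cast Nat.one_le_iff_ne_zero.mp hT
  set c : ℝ := (K:ℝ)/T with hc
  -- rewrite RHS
  have hstep1 : ∀ j ∈ Finset.range n,
      ((n-1-j+T).choose T : ℝ) * α^(n-1-j) * vSeq K T α j
        = α^(n-1) * (((n-1-j+T).choose T : ℝ) *
            ∑' m : ℕ, c ^ m / m.factorial * ((j + T * m - 1).choose j)) := by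
    intro j hj
    have hjn : j < n := Finset.mem_range.mp hj
    rw [vSeq, ← hc]
    have : α^(n-1-j) * α^j = α^(n-1) := by
      rw [← pow_add]
      congr 1
      omega
    calc ((n-1-j+T).choose T : ℝ) * α^(n-1-j) *
          (α^j * ∑' m : ℕ, c ^ m / m.factorial * ((j + T * m - 1).choose j))
        = (α^(n-1-j) * α^j) * (((n-1-j+T).choose T : ℝ) *
            ∑' m : ℕ, c ^ m / m.factorial * ((j + T * m - 1).choose j)) := by ring
      _ = _ := by rw [this]
  rw [Finset.sum_congr rfl hstep1, ← Finset.mul_sum]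
  -- now swap finite sum and tsum
  have hsumm : ∀ j ∈ Finset.range n, Summable (fun m : ℕ =>
      ((n-1-j+T).choose T : ℝ) * (c ^ m / m.factorial * ((j + T * m - 1).choose j))) := by
    intro j _
    have := summable_vterm K T j
    rw [← hc] at this
    exact this.mul_left _
  have hswap : ∑ j ∈ Finset.range n, (((n-1-j+T).choose T : ℝ) *
        ∑' m : ℕ, c ^ m / m.factorial * ((j + T * m - 1).choose j))
      = ∑' m : ℕ, ∑ j ∈ Finset.range n,
          ((n-1-j+T).choose T : ℝ) * (c ^ m / m.factorial * ((j + T * m - 1).choose j)) := by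
    rw [Summable.tsum_finsetSum hsumm]
    apply Finset.sum_congr rfl
    intro j _
    rw [← tsum_mul_left]
  rw [hswap]
  -- evaluate inner sums by Vandermonde
  have hinner : ∀ m : ℕ, ∑ j ∈ Finset.range n,
        ((n-1-j+T).choose T : ℝ) * (c ^ m / m.factorial * ((j + T * m - 1).choose j))
      = c ^ m / m.factorial * ((n + T*(m+1) - 1).choose (T*(m+1)) : ℝ) := by
    intro m
    rw [← inner_vander T m n hT hn, Finset.mul_sum]
    apply Finset.sum_congr rfl
    intro j _
    ring
  rw [tsum_congr hinner]
  -- left side: shift index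
  have hsummL : Summable (fun m : ℕ => (n:ℝ) * (c ^ m / m.factorial * ((n + T * m - 1).choose n))) := by
    have := summable_vterm K T n
    rw [← hc] at this
    exact this.mul_left _
  have hLHS : (n:ℝ) * vSeq K T α n
      = α^(n-1) * (α * ∑' m : ℕ, (n:ℝ) * (c ^ m / m.factorial * ((n + T * m - 1).choose n))) := by
    rw [vSeq, ← hc, ← tsum_mul_left]
    have : α^n = α^(n-1) * α := by
      rw [← pow_succ]
      congr 1
      omega
    rw [← tsum_mul_left]
    rw [tsum_mul_left, tsum_mul_left, tsum_mul_left]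
    rw [this]
    ring
  rw [hLHS]
  have hshift := hsummL.tsum_eq_zero_add
  have hzero : (n:ℝ) * (c ^ 0 / (Nat.factorial 0) * (((n + T * 0 - 1).choose n : ℝ))) = 0 := by
    have : (n + T * 0 - 1).choose n = 0 := Nat.choose_eq_zero_of_lt (by omega)
    rw [this]
    simp
  rw [hzero, zero_add] at hshift
  rw [hshift]
  -- termwise identity
  have hterm : ∀ m : ℕ,
      (n:ℝ) * (c ^ (m+1) / (m+1).factorial * ((n + T * (m+1) - 1).choose n))
        = K * (c ^ m / m.factorial * ((n + T*(m+1) - 1).choose (T*(m+1)) : ℝ)) := by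
    intro m
    have hP : 1 ≤ T * (m+1) := by
      calc 1 = 1*1 := by omega
      _ ≤ T * (m+1) := Nat.mul_le_mul hT (by omega)
    have hflip := mychoose_flip n (T*(m+1)) hP
    have hflipR : (n:ℝ) * ((n + T*(m+1) - 1).choose n : ℝ)
        = (T*(m+1) : ℕ) * ((n + T*(m+1) - 1).choose (T*(m+1)) : ℝ) := by
      exact_mod_cast hflip
    have hfact : ((m+1).factorial : ℝ) = (m+1) * (m.factorial : ℝ) := by
      rw [Nat.factorial_succ]; push_cast; ring
    have hcP : c * (T*(m+1) : ℕ) = K * (m+1) := by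
      push_cast
      rw [hc]
      field_simp
    calc (n:ℝ) * (c ^ (m+1) / (m+1).factorial * ((n + T * (m+1) - 1).choose n))
        = (c ^ (m+1) / (m+1).factorial) * ((n:ℝ) * ((n + T * (m+1) - 1).choose n)) := by ring
      _ = (c ^ (m+1) / (m+1).factorial) * ((T*(m+1) : ℕ) * ((n + T*(m+1) - 1).choose (T*(m+1)) : ℝ)) := by
          rw [hflipR]
      _ = (c * (T*(m+1) : ℕ)) * (c ^ m / ((m+1) * m.factorial)) * ((n + T*(m+1) - 1).choose (T*(m+1)) : ℝ) := by
          rw [pow_succ, hfact]; push_cast; ring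
      _ = (K * (m+1)) * (c ^ m / ((m+1) * m.factorial)) * ((n + T*(m+1) - 1).choose (T*(m+1)) : ℝ) := by
          rw [hcP]
      _ = K * (c ^ m / m.factorial * ((n + T*(m+1) - 1).choose (T*(m+1)) : ℝ)) := by
          have hm1 : ((m:ℝ)+1) ≠ 0 := by positivity
          field_simp
  rw [tsum_congr hterm, tsum_mul_left]
  ring

noncomputable def bSeq (K : ℕ) (α : ℝ) (n : ℕ) : ℝ := ((n + K - 1).choose (K-1) : ℝ) * α^n

lemma bSeq_pos (K : ℕ) (hK : 1 ≤ K) {α : ℝ} (hα : 0 < α) (n : ℕ) : 0 < bSeq K α n := by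
  rw [bSeq]
  have h1 : 0 < (n + K - 1).choose (K-1) := Nat.choose_pos (by omega)
  have h2 : (0:ℝ) < ((n + K - 1).choose (K-1) : ℝ) := by exact_mod_cast h1
  positivity

lemma bSeq_rec (K : ℕ) (hK : 1 ≤ K) {α : ℝ} (hα : 0 < α) (n : ℕ) (hn : 1 ≤ n) :
    (n:ℝ) * bSeq K α n
      = K * α * ∑ j ∈ Finset.range n,
          (((n-1-j+0).choose 0 : ℝ) * α^(n-1-j) * bSeq K α j) := by
  have hstep : ∀ j ∈ Finset.range n,
      ((n-1-j+0).choose 0 : ℝ) * α^(n-1-j) * bSeq K α j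
        = α^(n-1) * ((j + (K-1)).choose (K-1) : ℝ) := by
    intro j hj
    have hjn : j < n := Finset.mem_range.mp hj
    rw [Nat.choose_zero_right, bSeq]
    have h1 : α^(n-1-j) * α^j = α^(n-1) := by
      rw [← pow_add]; congr 1; omega
    have h2 : j + K - 1 = j + (K-1) := by omega
    rw [h2]
    push_cast
    calc (1 : ℝ) * α^(n-1-j) * (((j + (K-1)).choose (K-1) : ℝ) * α^j)
        = (α^(n-1-j) * α^j) * ((j + (K-1)).choose (K-1) : ℝ) := by ring
      _ = α^(n-1) * ((j + (K-1)).choose (K-1) : ℝ) := by rw [h1]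
  rw [Finset.sum_congr rfl hstep, ← Finset.mul_sum]
  have hhock : ∑ j ∈ Finset.range n, ((j + (K-1)).choose (K-1) : ℝ)
      = ((n + K - 1).choose K : ℝ) := by
    have h := Nat.sum_range_add_choose (n-1) (K-1)
    have hr : n - 1 + 1 = n := by omega
    rw [hr] at h
    have h2 : n - 1 + (K-1) + 1 = n + K - 1 := by omega
    have h3 : K - 1 + 1 = K := by omega
    rw [h2, h3] at h
    exact_mod_cast congrArg (Nat.cast : ℕ → ℝ) h
  rw [hhock]
  -- n * C(n+K-1, K-1) = K * C(n+K-1, K)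
  have hflip := mychoose_flip n K hK
  have hsymm : (n + K - 1).choose n = (n + K - 1).choose (K-1) := by
    have h3 : (n + K - 1) - n = K - 1 := by omega
    have h4 := Nat.choose_symm (n := n + K - 1) (k := n) (by omega)
    rw [h3] at h4
    exact h4.symm
  rw [hsymm] at hflip
  have hflipR : (n:ℝ) * ((n + K - 1).choose (K-1) : ℝ) = (K:ℝ) * ((n + K - 1).choose K : ℝ) := by
    exact_mod_cast hflip
  rw [bSeq]
  calc (n:ℝ) * (((n + K - 1).choose (K-1) : ℝ) * α^n)
      = ((n:ℝ) * ((n + K - 1).choose (K-1) : ℝ)) * α^n := by ring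
    _ = ((K:ℝ) * ((n + K - 1).choose K : ℝ)) * α^n := by rw [hflipR]
    _ = K * α * (α^(n-1) * ((n + K - 1).choose K : ℝ)) := by
        have : α^n = α * α^(n-1) := by
          rw [← pow_succ']; congr 1; omega
        rw [this]; ring

lemma monic_eval_lower (Q : Polynomial ℝ) (hQ : Q.Monic) (r : ℕ) (hr : 1 ≤ r)
    (hdeg : Q.natDegree = r) :
    ∃ N : ℕ, 1 ≤ N ∧ ∀ n : ℕ, N ≤ n → ((n:ℝ)^r) / 2 ≤ Q.eval (n:ℝ) := by
  set R : Polynomial ℝ := Q - Polynomial.C (1/2) * Polynomial.X ^ r with hR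
  have hcoeff : R.coeff r = 1/2 := by
    rw [hR]
    simp only [Polynomial.coeff_sub, Polynomial.coeff_C_mul, Polynomial.coeff_X_pow]
    have : Q.coeff r = 1 := by
      rw [← hdeg]
      exact hQ.coeff_natDegree
    rw [this]
    norm_num
  have h1 : (Polynomial.C (1/2 : ℝ) * Polynomial.X ^ r).natDegree ≤ r := by
    apply le_trans (Polynomial.natDegree_C_mul_le _ _)
    simp
  have hRdeg_le : R.natDegree ≤ r := by
    rw [hR]
    exact le_trans (Polynomial.natDegree_sub_le _ _) (max_le (le_of_eq hdeg) h1)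
  have hRne : R ≠ 0 := fun h => by simp [h] at hcoeff
  have hRdeg : R.natDegree = r := by
    apply le_antisymm hRdeg_le
    exact Polynomial.le_natDegree_of_ne_zero (by rw [hcoeff]; norm_num)
  have hlead : 0 ≤ R.leadingCoeff := by
    rw [Polynomial.leadingCoeff, hRdeg, hcoeff]; norm_num
  have hdegpos : 0 < R.degree := by
    rw [Polynomial.degree_eq_natDegree hRne, hRdeg]
    exact_mod_cast hr
  have htend := Polynomial.tendsto_atTop_of_leadingCoeff_nonneg R hdegpos hlead
  have hev : ∀ᶠ x : ℝ in Filter.atTop, (0:ℝ) ≤ R.eval x :=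
    htend.eventually_ge_atTop 0
  rcases Filter.eventually_atTop.mp hev with ⟨x₀, hx₀⟩
  refine ⟨max 1 (Nat.ceil x₀), le_max_left _ _, ?_⟩
  intro n hn
  have hx : x₀ ≤ (n:ℝ) := by
    calc x₀ ≤ (Nat.ceil x₀ : ℝ) := Nat.le_ceil x₀
      _ ≤ (n:ℝ) := by
        exact_mod_cast le_trans (le_max_right 1 _) hn
  have h0 := hx₀ (n:ℝ) hx
  rw [hR] at h0
  simp only [Polynomial.eval_sub, Polynomial.eval_mul, Polynomial.eval_C,
    Polynomial.eval_pow, Polynomial.eval_X] at h0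
  linarith

lemma engine (r T K N : ℕ) (hr : 1 ≤ r) (hK : 1 ≤ K) (hN : 1 ≤ N)
    {α : ℝ} (hα : 0 < α) (Q : Polynomial ℝ)
    (Mk : ℕ → ℝ) (hMk : ∀ k, 0 ≤ Mk k)
    (u : PowerSeries ℂ) (a : ℕ → PowerSeries ℂ)
    (hbound : ∀ k < r, ∀ i : ℕ,
      ‖PowerSeries.coeff i (a k)‖ ≤
        Mk k * ((i + (r - k + T - 1)).choose (r - k + T - 1)) * α ^ i)
    (hrec : ∀ n : ℕ,
      (Complex.ofReal (Q.eval (n : ℝ))) * PowerSeries.coeff n u =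
        ∑ j ∈ Finset.range n, ∑ k ∈ Finset.range r,
          PowerSeries.coeff (n - 1 - j) (a k) * (j : ℂ) ^ k * PowerSeries.coeff j u)
    (w : ℕ → ℝ) (hw : ∀ n, 0 < w n)
    (hrecw : ∀ n : ℕ, 1 ≤ n → (n:ℝ) * w n
      = K * α * ∑ j ∈ Finset.range n, (((n-1-j+T).choose T : ℝ) * α^(n-1-j) * w j))
    (hKM : 2 * (∑ k ∈ Finset.range r, Mk k) ≤ K * α)
    (hQN : ∀ n : ℕ, N ≤ n → ((n:ℝ)^r)/2 ≤ Q.eval (n:ℝ)) :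
    ∃ A : ℝ, 0 ≤ A ∧ ∀ n : ℕ, ‖PowerSeries.coeff n u‖ ≤ A * w n := by
  set A : ℝ := ∑ j ∈ Finset.range N, ‖PowerSeries.coeff j u‖ / w j with hA
  have hA0 : 0 ≤ A :=
    Finset.sum_nonneg (fun j _ => div_nonneg (norm_nonneg _) (hw j).le)
  refine ⟨A, hA0, ?_⟩
  intro n
  induction n using Nat.strong_induction_on with
  | _ n ih =>
  rcases lt_or_ge n N with hnN | hnN
  · -- base case: n < N
    have hle : ‖PowerSeries.coeff n u‖ / w n ≤ A := by
      rw [hA]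
      exact Finset.single_le_sum
        (f := fun j => ‖PowerSeries.coeff j u‖ / w j)
        (fun j _ => div_nonneg (norm_nonneg _) (hw j).le)
        (Finset.mem_range.mpr hnN)
    have := mul_le_mul_of_nonneg_right hle (hw n).le
    rwa [div_mul_cancel₀ _ (hw n).ne'] at this
  · -- inductive case: n ≥ N
    have hn1 : 1 ≤ n := le_trans hN hnN
    have hnR : (1:ℝ) ≤ (n:ℝ) := by exact_mod_cast hn1
    have hQpos : (0:ℝ) < Q.eval (n:ℝ) := by
      have h0 : (0:ℝ) < ((n:ℝ)^r)/2 := by positivity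
      exact lt_of_lt_of_le h0 (hQN n hnN)
    set S : ℝ := ∑ j ∈ Finset.range n, (((n-1-j+T).choose T : ℝ) * α^(n-1-j) * w j) with hS
    have hrecn := hrecw n hn1
    have hKα : (0:ℝ) < (K:ℝ) * α := by
      have : (0:ℝ) < (K:ℝ) := by exact_mod_cast hK
      positivity
    have hSval : S = (n:ℝ) * w n / ((K:ℝ) * α) := by
      rw [eq_div_iff hKα.ne']
      rw [hrecn, ← hS]
      ring
    -- bound each term of the double sum
    have hterm : ∀ j ∈ Finset.range n, ∀ k ∈ Finset.range r,
        ‖PowerSeries.coeff (n - 1 - j) (a k) * (j : ℂ) ^ k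
          * PowerSeries.coeff j u‖
        ≤ Mk k * ((n:ℝ)^(r-1) * A * ((((n-1-j+T).choose T : ℝ)) * α^(n-1-j) * w j)) := by
      intro j hj k hk
      have hjn : j < n := Finset.mem_range.mp hj
      have hkr : k < r := Finset.mem_range.mp hk
      set i : ℕ := n - 1 - j with hi
      have habs : ‖PowerSeries.coeff i (a k) * (j : ℂ) ^ k
          * PowerSeries.coeff j u‖
          = ‖PowerSeries.coeff i (a k)‖ * (j:ℝ)^k
            * ‖PowerSeries.coeff j u‖ := by
        rw [norm_mul, norm_mul, norm_pow, Complex.norm_natCast]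
      rw [habs]
      have h1 := hbound k hkr i
      have h3 : (j:ℝ)^k ≤ (n:ℝ)^k := by
        apply pow_le_pow_left₀ (by positivity)
        exact_mod_cast hjn.le
      have h4 : ‖PowerSeries.coeff j u‖ ≤ A * w j := ih j hjn
      -- step 1
      have step1 : ‖PowerSeries.coeff i (a k)‖ * (j:ℝ)^k
            * ‖PowerSeries.coeff j u‖
          ≤ (Mk k * ((i + (r - k + T - 1)).choose (r - k + T - 1)) * α ^ i) * (n:ℝ)^k
            * (A * w j) := by
        apply mul_le_mul _ h4 (norm_nonneg _)
        · apply mul_nonneg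
          apply mul_nonneg
          · apply mul_nonneg (hMk k) (Nat.cast_nonneg _)
          · positivity
          · positivity
        · apply mul_le_mul h1 h3 (by positivity)
          apply mul_nonneg (mul_nonneg (hMk k) (Nat.cast_nonneg _)) (by positivity)
      -- step 2 : binomial comparison
      have e : r - k + T - 1 = T + (r-1-k) := by omega
      have h2 : ((i + (r - k + T - 1)).choose (r - k + T - 1) : ℝ)
          ≤ (n:ℝ)^(r-1-k) * ((i + T).choose T : ℝ) := by
        rw [e]
        calc ((i + (T + (r-1-k))).choose (T + (r-1-k)) : ℝ)
            ≤ ((i:ℝ)+1)^(r-1-k) * ((i + T).choose T : ℝ) := mychoose_shift (r-1-k) T i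
          _ ≤ (n:ℝ)^(r-1-k) * ((i + T).choose T : ℝ) := by
              apply mul_le_mul_of_nonneg_right _ (Nat.cast_nonneg _)
              apply pow_le_pow_left₀ (by positivity)
              have : i + 1 ≤ n := by omega
              exact_mod_cast this
      have step2 : (Mk k * ((i + (r - k + T - 1)).choose (r - k + T - 1)) * α ^ i) * (n:ℝ)^k
            * (A * w j)
          ≤ (Mk k * ((n:ℝ)^(r-1-k) * ((i + T).choose T : ℝ)) * α ^ i) * (n:ℝ)^k
            * (A * w j) := by
        apply mul_le_mul_of_nonneg_right _ (mul_nonneg hA0 (hw j).le)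
        apply mul_le_mul_of_nonneg_right _ (by positivity)
        apply mul_le_mul_of_nonneg_right _ (by positivity)
        exact mul_le_mul_of_nonneg_left h2 (hMk k)
      have hpow : (n:ℝ)^(r-1-k) * (n:ℝ)^k = (n:ℝ)^(r-1) := by
        rw [← pow_add]
        congr 1
        omega
      have step3 : (Mk k * ((n:ℝ)^(r-1-k) * ((i + T).choose T : ℝ)) * α ^ i) * (n:ℝ)^k
            * (A * w j)
          = Mk k * ((n:ℝ)^(r-1) * A * ((((i+T).choose T : ℝ)) * α^i * w j)) := by
        rw [← hpow]
        ring
      have e2 : n - 1 - j + T = i + T := rfl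
      rw [e2]
      calc _ ≤ _ := step1
        _ ≤ _ := step2
        _ = _ := step3
    -- sum the bound
    have hsum : ‖(Complex.ofReal (Q.eval (n : ℝ))) * PowerSeries.coeff n u‖
        ≤ (∑ k ∈ Finset.range r, Mk k) * ((n:ℝ)^(r-1) * A * S) := by
      rw [hrec n]
      calc ‖∑ j ∈ Finset.range n, ∑ k ∈ Finset.range r,
            PowerSeries.coeff (n - 1 - j) (a k) * (j : ℂ) ^ k * PowerSeries.coeff j u‖
          ≤ ∑ j ∈ Finset.range n, ‖∑ k ∈ Finset.range r,
            PowerSeries.coeff (n - 1 - j) (a k) * (j : ℂ) ^ k * PowerSeries.coeff j u‖ :=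
            norm_sum_le _ _
        _ ≤ ∑ j ∈ Finset.range n, ∑ k ∈ Finset.range r,
            ‖PowerSeries.coeff (n - 1 - j) (a k) * (j : ℂ) ^ k
              * PowerSeries.coeff j u‖ :=
            Finset.sum_le_sum (fun j _ => norm_sum_le _ _)
        _ ≤ ∑ j ∈ Finset.range n, ∑ k ∈ Finset.range r,
            Mk k * ((n:ℝ)^(r-1) * A * ((((n-1-j+T).choose T : ℝ)) * α^(n-1-j) * w j)) :=
            Finset.sum_le_sum (fun j hj => Finset.sum_le_sum (fun k hk => hterm j hj k hk))
        _ = (∑ k ∈ Finset.range r, Mk k) * ((n:ℝ)^(r-1) * A * S) := by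
            rw [Finset.sum_comm]
            have hinner : ∀ k : ℕ, ∑ j ∈ Finset.range n,
                Mk k * ((n:ℝ)^(r-1) * A * ((((n-1-j+T).choose T : ℝ)) * α^(n-1-j) * w j))
                = Mk k * ((n:ℝ)^(r-1) * A * S) := by
              intro k
              rw [hS, Finset.mul_sum, Finset.mul_sum, Finset.mul_sum]
            calc ∑ k ∈ Finset.range r, ∑ j ∈ Finset.range n,
                Mk k * ((n:ℝ)^(r-1) * A * ((((n-1-j+T).choose T : ℝ)) * α^(n-1-j) * w j))
                = ∑ k ∈ Finset.range r, Mk k * ((n:ℝ)^(r-1) * A * S) :=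
                  Finset.sum_congr rfl (fun k _ => hinner k)
              _ = (∑ k ∈ Finset.range r, Mk k) * ((n:ℝ)^(r-1) * A * S) := by
                  rw [← Finset.sum_mul]
    -- conclude
    have hup : (∑ k ∈ Finset.range r, Mk k) * ((n:ℝ)^(r-1) * A * S)
        ≤ Q.eval (n:ℝ) * (A * w n) := by
      rw [hSval]
      have hpow2 : (n:ℝ)^(r-1) * (n:ℝ) = (n:ℝ)^r := by
        rw [← pow_succ]
        congr 1
        omega
      have hMsum : 0 ≤ ∑ k ∈ Finset.range r, Mk k :=
        Finset.sum_nonneg (fun k _ => hMk k)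
      calc (∑ k ∈ Finset.range r, Mk k) * ((n:ℝ)^(r-1) * A * ((n:ℝ) * w n / ((K:ℝ)*α)))
          = ((∑ k ∈ Finset.range r, Mk k) / ((K:ℝ)*α)) * ((n:ℝ)^(r-1) * (n:ℝ)) * (A * w n) := by
            field_simp
        _ = ((∑ k ∈ Finset.range r, Mk k) / ((K:ℝ)*α)) * (n:ℝ)^r * (A * w n) := by
            rw [hpow2]
        _ ≤ (1/2) * (n:ℝ)^r * (A * w n) := by
            apply mul_le_mul_of_nonneg_right _ (mul_nonneg hA0 (hw n).le)
            apply mul_le_mul_of_nonneg_right _ (by positivity)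
            rw [div_le_iff₀ hKα]
            linarith [hKM]
        _ = ((n:ℝ)^r / 2) * (A * w n) := by ring
        _ ≤ Q.eval (n:ℝ) * (A * w n) :=
            mul_le_mul_of_nonneg_right (hQN n hnN) (mul_nonneg hA0 (hw n).le)
    have habsQ : ‖(Complex.ofReal (Q.eval (n : ℝ))) * PowerSeries.coeff n u‖
        = Q.eval (n:ℝ) * ‖PowerSeries.coeff n u‖ := by
      rw [norm_mul, Complex.norm_real, Real.norm_eq_abs, abs_of_pos hQpos]
    rw [habsQ] at hsum
    have := le_trans hsum hup
    exact le_of_mul_le_mul_left this hQpos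

theorem majorant_for_dfinite_regular_point (r : ℕ) (hr : 1 ≤ r) (T : ℕ)
    (α : ℝ) (hα : 0 < α) (Q : Polynomial ℝ) (hQmonic : Q.Monic) (hQdeg : Q.natDegree = r)
    (Mk : ℕ → ℝ) (hMk : ∀ k, 0 ≤ Mk k)
    (u : PowerSeries ℂ) (a : ℕ → PowerSeries ℂ)
    (hbound : ∀ k < r, ∀ i : ℕ,
      ‖PowerSeries.coeff i (a k)‖ ≤
        Mk k * ((i + (r - k + T - 1)).choose (r - k + T - 1)) * α ^ i)
    (hrec : ∀ n : ℕ,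
      (Complex.ofReal (Q.eval (n : ℝ))) * PowerSeries.coeff n u =
        ∑ j ∈ Finset.range n, ∑ k ∈ Finset.range r,
          PowerSeries.coeff (n - 1 - j) (a k) * (j : ℂ) ^ k * PowerSeries.coeff j u) :
    ∃ A : ℝ, 0 ≤ A ∧ ∃ K : ℕ, 1 ≤ K ∧
      (T = 0 → ∀ n : ℕ,
        ‖PowerSeries.coeff n u‖ ≤
          A * ((n + K - 1).choose (K - 1)) * α ^ n) ∧
      (1 ≤ T → ∀ n : ℕ,
        ‖PowerSeries.coeff n u‖ ≤
          A * taylorCoeff (majorantFun K α T) n) := by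
  set M : ℝ := ∑ k ∈ Finset.range r, Mk k with hM
  have hM0 : 0 ≤ M := Finset.sum_nonneg (fun k _ => hMk k)
  set K : ℕ := Nat.ceil (2 * M / α) + 1 with hKdef
  have hK1 : 1 ≤ K := by omega
  have hKM : 2 * M ≤ (K:ℝ) * α := by
    have h1 : 2 * M / α ≤ (K:ℝ) := by
      calc 2 * M / α ≤ (Nat.ceil (2 * M / α) : ℝ) := Nat.le_ceil _
        _ ≤ (K:ℝ) := by
          rw [hKdef]
          push_cast
          linarith
    calc 2 * M = (2 * M / α) * α := by field_simp
      _ ≤ (K:ℝ) * α := mul_le_mul_of_nonneg_right h1 hα.le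
  obtain ⟨N, hN1, hQN⟩ := monic_eval_lower Q hQmonic r hr hQdeg
  rcases Nat.eq_zero_or_pos T with hT0 | hT1
  · -- case T = 0
    subst hT0
    obtain ⟨A, hA0, hAll⟩ := engine r 0 K N hr hK1 hN1 hα Q Mk hMk u a hbound hrec
      (bSeq K α) (bSeq_pos K hK1 hα)
      (fun n hn => bSeq_rec K hK1 hα n hn)
      (by rw [← hM]; exact hKM) hQN
    refine ⟨A, hA0, K, hK1, ?_, ?_⟩
    · intro _ n
      have := hAll n
      rw [bSeq] at this
      calc ‖PowerSeries.coeff n u‖ ≤ A * (((n + K - 1).choose (K-1) : ℝ) * α^n) :=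
            this
        _ = A * ((n + K - 1).choose (K - 1)) * α ^ n := by ring
    · intro h
      omega
  · -- case T ≥ 1
    obtain ⟨A, hA0, hAll⟩ := engine r T K N hr hK1 hN1 hα Q Mk hMk u a hbound hrec
      (vSeq K T α) (vSeq_pos K T hK1 hT1 hα)
      (fun n hn => vSeq_rec K T hT1 hα n hn)
      (by rw [← hM]; exact hKM) hQN
    refine ⟨A, hA0, K, hK1, ?_, ?_⟩
    · intro h
      omega
    · intro _ n
      rw [taylorCoeff_majorant K T hT1 hα n]
      exact hAll n
end
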